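/- arXiv:2008.04804 — 8 statements merged into one kernel-verified Lean document; each statement's English description precedes it below -/
import Mathlib

section
/- Let $\mathcal{F}$ be an antichain of finite subsets of $\mathbb{N}$, i.e., for all distinct $A, B \in \mathcal{F}$ we have $A \not\subseteq B$. Then $\liminf_{n \to \infty} |\mathcal{F} \cap 2^{[n]}| \cdot \frac{n \ln n}{2^n} = 0$, where $\mathcal{F} \cap 2^{[n]}$ denotes the collection of members of $\mathcal{F}$ that are subsets of $[n] = \{1, \dots, n\}$. -/
open Filter Finset


private lemma not_summable_one_div_mul_log :
    ¬ Summable (fun n : ℕ => 1 / ((n : ℝ) * Real.log n)) := by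
  intro h
  have hg : Summable (fun n : ℕ => 1 / (((n + 1 : ℕ) : ℝ) * Real.log ((n + 1 : ℕ) : ℝ))) :=
    (summable_nat_add_iff 1).2 h
  have h0 : ∀ n : ℕ, 0 ≤ 1 / (((n + 1 : ℕ) : ℝ) * Real.log ((n + 1 : ℕ) : ℝ)) := by
    intro n
    apply div_nonneg zero_le_one
    apply mul_nonneg (by positivity)
    apply Real.log_nonneg
    exact_mod_cast Nat.one_le_iff_ne_zero.2 (Nat.succ_ne_zero n)
  have hmono : ∀ ⦃m n : ℕ⦄, 0 < m → m ≤ n →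
      1 / (((n + 1 : ℕ) : ℝ) * Real.log ((n + 1 : ℕ) : ℝ)) ≤
      1 / (((m + 1 : ℕ) : ℝ) * Real.log ((m + 1 : ℕ) : ℝ)) := by
    intro m n hm hmn
    have h2m : (2 : ℝ) ≤ ((m + 1 : ℕ) : ℝ) := by exact_mod_cast Nat.succ_le_succ hm
    have hmpos : (0 : ℝ) < ((m + 1 : ℕ) : ℝ) * Real.log ((m + 1 : ℕ) : ℝ) := by
      apply mul_pos (by linarith)
      exact Real.log_pos (by linarith)
    apply one_div_le_one_div_of_le hmpos
    have hc : ((m + 1 : ℕ) : ℝ) ≤ ((n + 1 : ℕ) : ℝ) := by exact_mod_cast Nat.succ_le_succ hmn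
    exact mul_le_mul hc (Real.log_le_log (by linarith) hc)
      (Real.log_nonneg (by linarith)) (by linarith)
  have hcond := (summable_condensed_iff_of_nonneg h0 hmono).2 hg
  -- 2^k * (1/((2^k+1) * log(2^k+1))) ≥ (1/(2 * log 2)) * (1/(k+1))
  have hcomp : ∀ k : ℕ, (1 / (2 * Real.log 2)) * (1 / ((k : ℝ) + 1)) ≤
      (2 : ℝ) ^ k * (1 / (((2 ^ k + 1 : ℕ) : ℝ) * Real.log ((2 ^ k + 1 : ℕ) : ℝ))) := by
    intro k
    have h1 : ((2 ^ k + 1 : ℕ) : ℝ) ≤ 2 ^ (k + 1) := by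
      push_cast
      have : (1 : ℝ) ≤ 2 ^ k := one_le_pow₀ one_le_two
      rw [pow_succ]
      linarith
    have hpos : (0 : ℝ) < ((2 ^ k + 1 : ℕ) : ℝ) := by positivity
    have h2 : Real.log ((2 ^ k + 1 : ℕ) : ℝ) ≤ (k + 1) * Real.log 2 := by
      calc Real.log ((2 ^ k + 1 : ℕ) : ℝ) ≤ Real.log (2 ^ (k + 1)) := Real.log_le_log hpos h1
        _ = (k + 1) * Real.log 2 := by rw [Real.log_pow]; push_cast; ring
    have hlogpos : (0 : ℝ) < Real.log ((2 ^ k + 1 : ℕ) : ℝ) := by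
      apply Real.log_pos
      have : (1 : ℝ) ≤ 2 ^ k := one_le_pow₀ one_le_two
      push_cast; linarith
    have hl2 : (0 : ℝ) < Real.log 2 := Real.log_pos one_lt_two
    have key : ((2 ^ k + 1 : ℕ) : ℝ) * Real.log ((2 ^ k + 1 : ℕ) : ℝ) ≤
        2 ^ (k + 1) * ((k + 1) * Real.log 2) :=
      mul_le_mul h1 h2 hlogpos.le (by positivity)
    rw [mul_one_div ((2:ℝ) ^ k), le_div_iff₀ (mul_pos hpos hlogpos)]
    calc (1 / (2 * Real.log 2)) * (1 / ((k : ℝ) + 1)) *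
          (((2 ^ k + 1 : ℕ) : ℝ) * Real.log ((2 ^ k + 1 : ℕ) : ℝ))
        ≤ (1 / (2 * Real.log 2)) * (1 / ((k : ℝ) + 1)) * (2 ^ (k + 1) * ((k + 1) * Real.log 2)) := by
          apply mul_le_mul_of_nonneg_left key
          positivity
      _ = 2 ^ k := by
          have : ((k : ℝ) + 1) ≠ 0 := by positivity
          field_simp
          ring
  have hsum2 : Summable (fun k : ℕ => (1 / (2 * Real.log 2)) * (1 / ((k : ℝ) + 1))) :=
    Summable.of_nonneg_of_le (fun k => by positivity) hcomp hcond
  have hl2 : (0 : ℝ) < Real.log 2 := Real.log_pos one_lt_two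
  have hsum3 : Summable (fun k : ℕ => 1 / ((k : ℝ) + 1)) := by
    have := hsum2.mul_left (2 * Real.log 2)
    convert this using 2 with k
    · exact rfl
    field_simp
  have : Summable (fun k : ℕ => 1 / ((k : ℕ) : ℝ)) := by
    rw [← summable_nat_add_iff 1]
    convert hsum3 using 2 with k
    · exact rfl
    push_cast; ring
  exact Real.not_summable_one_div_natCast this


section comb
variable (𝓕 : Set (Finset ℕ))

private def Fn (n : ℕ) : Set (Finset ℕ) := {A | A ∈ 𝓕 ∧ A ⊆ Finset.Icc 1 n}
private def Un (n : ℕ) : Set (Finset ℕ) :=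
  {B | B ⊆ Finset.Icc 1 n ∧ ∃ A ∈ 𝓕, A ⊆ B ∧ A ≠ B}

private lemma pow_finite (n : ℕ) : {B : Finset ℕ | B ⊆ Finset.Icc 1 n}.Finite := by
  apply (Finset.Icc 1 n).powerset.finite_toSet.subset
  intro B hB
  rw [Finset.mem_coe, Finset.mem_powerset]
  exact hB

private lemma Fn_finite (n : ℕ) : (Fn 𝓕 n).Finite :=
  (pow_finite n).subset fun B hB => hB.2

private lemma Un_finite (n : ℕ) : (Un 𝓕 n).Finite :=
  (pow_finite n).subset fun B hB => hB.1

private lemma Fn_disj_Un (hanti : ∀ A ∈ 𝓕, ∀ B ∈ 𝓕, A ≠ B → ¬ A ⊆ B) (n : ℕ) :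
    Disjoint (Fn 𝓕 n) (Un 𝓕 n) := by
  rw [Set.disjoint_left]
  rintro B ⟨hB𝓕, -⟩ ⟨-, A, hA𝓕, hAB, hne⟩
  exact hanti A hA𝓕 B hB𝓕 hne hAB

private lemma card_bound (hanti : ∀ A ∈ 𝓕, ∀ B ∈ 𝓕, A ≠ B → ¬ A ⊆ B) (n : ℕ) : (Fn 𝓕 n).ncard + (Un 𝓕 n).ncard ≤ 2 ^ n := by
  have h1 : (Fn 𝓕 n ∪ Un 𝓕 n).ncard = (Fn 𝓕 n).ncard + (Un 𝓕 n).ncard :=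
    Set.ncard_union_eq (Fn_disj_Un 𝓕 hanti n) (Fn_finite 𝓕 n) (Un_finite 𝓕 n)
  have h2 : (Fn 𝓕 n ∪ Un 𝓕 n).ncard ≤ {B : Finset ℕ | B ⊆ Finset.Icc 1 n}.ncard := by
    apply Set.ncard_le_ncard _ (pow_finite n)
    rintro B (hB | hB)
    · exact hB.2
    · exact hB.1
  have h3 : {B : Finset ℕ | B ⊆ Finset.Icc 1 n}.ncard = 2 ^ n := by
    have : {B : Finset ℕ | B ⊆ Finset.Icc 1 n} = ↑(Finset.Icc 1 n).powerset := by
      ext B; rw [Finset.mem_coe, Finset.mem_powerset]; rfl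
    rw [this, Set.ncard_coe_finset, Finset.card_powerset, Nat.card_Icc]
    norm_num
  omega

private lemma grow (hanti : ∀ A ∈ 𝓕, ∀ B ∈ 𝓕, A ≠ B → ¬ A ⊆ B) (n : ℕ) :
    2 * (Un 𝓕 n).ncard + (Fn 𝓕 n).ncard ≤ (Un 𝓕 (n + 1)).ncard := by
  classical
  have hnot : (n + 1) ∉ Finset.Icc 1 n := by simp
  have hsub : Finset.Icc 1 n ⊆ Finset.Icc 1 (n + 1) :=
    Finset.Icc_subset_Icc_right (Nat.le_succ n)
  set S1 : Set (Finset ℕ) := Un 𝓕 n with hS1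
  set S2 : Set (Finset ℕ) := (insert (n+1) : Finset ℕ → Finset ℕ) '' Un 𝓕 n with hS2
  set S3 : Set (Finset ℕ) := (insert (n+1) : Finset ℕ → Finset ℕ) '' Fn 𝓕 n with hS3
  have hinj : ∀ B : Finset ℕ, B ⊆ Finset.Icc 1 n → ((insert (n+1) B).erase (n+1)) = B := by
    intro B hB
    exact Finset.erase_insert (fun h => hnot (hB h))
  -- subset facts
  have hsub1 : S1 ⊆ Un 𝓕 (n+1) := by
    rintro B ⟨hB, A, hA, hAB, hne⟩
    exact ⟨hB.trans hsub, A, hA, hAB, hne⟩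
  have hsub2 : S2 ⊆ Un 𝓕 (n+1) := by
    rintro _ ⟨B, ⟨hB, A, hA, hAB, hne⟩, rfl⟩
    refine ⟨Finset.insert_subset (by simp) (hB.trans hsub), A, hA,
      hAB.trans (Finset.subset_insert _ _), ?_⟩
    intro h
    exact hnot (hB (hAB (h ▸ Finset.mem_insert_self _ _)))
  have hsub3 : S3 ⊆ Un 𝓕 (n+1) := by
    rintro _ ⟨A, ⟨hA𝓕, hA⟩, rfl⟩
    refine ⟨Finset.insert_subset (by simp) (hA.trans hsub), A, hA𝓕,
      Finset.subset_insert _ _, ?_⟩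
    intro h
    exact hnot (hA (h ▸ Finset.mem_insert_self _ _))
  -- disjointness
  have hmem2 : ∀ B ∈ S2, (n+1) ∈ B := by rintro _ ⟨B, -, rfl⟩; simp
  have hmem3 : ∀ B ∈ S3, (n+1) ∈ B := by rintro _ ⟨B, -, rfl⟩; simp
  have hmem1 : ∀ B ∈ S1, (n+1) ∉ B := by
    rintro B ⟨hB, -⟩ h
    exact hnot (hB h)
  have hd23 : Disjoint S2 S3 := by
    rw [Set.disjoint_left]
    rintro _ ⟨B, hB, rfl⟩ ⟨A, hA, hEq⟩
    have : A = B := by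
      have h1 := hinj A hA.2
      have h2 := hinj B hB.1
      rw [hEq] at h1
      rw [← h1, h2]
    rw [this] at hA
    exact Set.disjoint_left.1 (Fn_disj_Un 𝓕 hanti n) hA hB
  have hd123 : Disjoint S1 (S2 ∪ S3) := by
    rw [Set.disjoint_left]
    rintro B hB1 (hB | hB)
    · exact hmem1 B hB1 (hmem2 B hB)
    · exact hmem1 B hB1 (hmem3 B hB)
  -- cardinalities
  have hinjOn : ∀ (T : Set (Finset ℕ)), (∀ B ∈ T, B ⊆ Finset.Icc 1 n) →
      Set.InjOn (insert (n+1) : Finset ℕ → Finset ℕ) T := by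
    intro T hT B1 h1 B2 h2 hEq
    have e1 := hinj B1 (hT B1 h1)
    have e2 := hinj B2 (hT B2 h2)
    rw [← e1, ← e2, hEq]
  have hc2 : S2.ncard = (Un 𝓕 n).ncard :=
    Set.ncard_image_of_injOn (hinjOn _ (fun B hB => hB.1))
  have hc3 : S3.ncard = (Fn 𝓕 n).ncard :=
    Set.ncard_image_of_injOn (hinjOn _ (fun B hB => hB.2))
  have hfin2 : S2.Finite := ((Un_finite 𝓕 n).image _)
  have hfin3 : S3.Finite := ((Fn_finite 𝓕 n).image _)
  have hcu : (S1 ∪ (S2 ∪ S3)).ncard = S1.ncard + (S2.ncard + S3.ncard) := by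
    rw [Set.ncard_union_eq hd123 (Un_finite 𝓕 n) (hfin2.union hfin3),
      Set.ncard_union_eq hd23 hfin2 hfin3]
  rw [← hS1] at hc2
  have hle : (S1 ∪ (S2 ∪ S3)).ncard ≤ (Un 𝓕 (n+1)).ncard := by
    apply Set.ncard_le_ncard _ (Un_finite 𝓕 (n+1))
    rintro B (hB | hB | hB)
    exacts [hsub1 hB, hsub2 hB, hsub3 hB]
  omega

end comb


private lemma Fn_def (𝓕 : Set (Finset ℕ)) (n : ℕ) :
    Fn 𝓕 n = {A | A ∈ 𝓕 ∧ A ⊆ Finset.Icc 1 n} := rfl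

/-- If `𝓕` is an antichain of finite subsets of `ℕ`, then
`liminf_{n → ∞} |𝓕 ∩ 2^[n]| * (n ln n) / 2^n = 0`. -/
theorem infinite_antichain_upper
    (𝓕 : Set (Finset ℕ))
    (hanti : ∀ A ∈ 𝓕, ∀ B ∈ 𝓕, A ≠ B → ¬ A ⊆ B) :
    Filter.atTop.liminf
      (fun n : ℕ =>
        ({A : Finset ℕ | A ∈ 𝓕 ∧ A ⊆ Finset.Icc 1 n}.ncard : ℝ)
          * ((n : ℝ) * Real.log n) / 2 ^ n) = 0 := by
  classical
  set F : ℕ → ℝ := fun n =>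
    ({A : Finset ℕ | A ∈ 𝓕 ∧ A ⊆ Finset.Icc 1 n}.ncard : ℝ)
      * ((n : ℝ) * Real.log n) / 2 ^ n with hF
  have hFn : ∀ n, ({A : Finset ℕ | A ∈ 𝓕 ∧ A ⊆ Finset.Icc 1 n}.ncard : ℝ)
      = ((Fn 𝓕 n).ncard : ℝ) := by
    intro n; rfl
  set d : ℕ → ℝ := fun n => ((Fn 𝓕 n).ncard : ℝ) / 2 ^ n with hd
  -- nonnegativity of the log factor
  have hX : ∀ n : ℕ, 0 ≤ (n : ℝ) * Real.log n := by
    intro n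
    match n with
    | 0 => simp
    | (m+1) =>
      apply mul_nonneg (by positivity)
      apply Real.log_nonneg
      exact_mod_cast Nat.one_le_iff_ne_zero.2 (Nat.succ_ne_zero m)
  have hF0 : ∀ n, 0 ≤ F n := by
    intro n
    apply div_nonneg _ (by positivity)
    exact mul_nonneg (by positivity) (hX n)
  -- telescoping: partial sums of d n / 2 are bounded by 1
  have htel : ∀ N : ℕ, ∑ n ∈ Finset.range N, ((Fn 𝓕 n).ncard : ℝ) / 2 ^ (n+1)
      ≤ ((Un 𝓕 N).ncard : ℝ) / 2 ^ N := by
    intro N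
    induction N with
    | zero => simp
    | succ N ih =>
      rw [Finset.sum_range_succ]
      have hg := grow 𝓕 hanti N
      have hgR : 2 * ((Un 𝓕 N).ncard : ℝ) + ((Fn 𝓕 N).ncard : ℝ)
          ≤ ((Un 𝓕 (N+1)).ncard : ℝ) := by exact_mod_cast hg
      have h2 : (0:ℝ) < 2 ^ (N+1) := by positivity
      have : ((Un 𝓕 N).ncard : ℝ) / 2 ^ N + ((Fn 𝓕 N).ncard : ℝ) / 2 ^ (N+1)
          ≤ ((Un 𝓕 (N+1)).ncard : ℝ) / 2 ^ (N+1) := by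
        have e : ((Un 𝓕 N).ncard : ℝ) / 2 ^ N + ((Fn 𝓕 N).ncard : ℝ) / 2 ^ (N+1)
            = (2 * ((Un 𝓕 N).ncard : ℝ) + ((Fn 𝓕 N).ncard : ℝ)) / 2 ^ (N+1) := by
          rw [pow_succ]
          field_simp
        rw [e]
        gcongr
      linarith [ih]
  have hpart : ∀ N : ℕ, ∑ n ∈ Finset.range N, ((Fn 𝓕 n).ncard : ℝ) / 2 ^ (n+1) ≤ 1 := by
    intro N
    refine (htel N).trans ?_
    rw [div_le_one (by positivity)]
    have := card_bound 𝓕 hanti N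
    have : ((Un 𝓕 N).ncard : ℝ) ≤ (2:ℝ) ^ N := by
      have h2 : (Un 𝓕 N).ncard ≤ 2 ^ N := by omega
      exact_mod_cast h2
    exact this
  have hdsum : Summable d := by
    have h1 : Summable (fun n => ((Fn 𝓕 n).ncard : ℝ) / 2 ^ (n+1)) :=
      summable_of_sum_range_le (fun n => by positivity) hpart
    have h2 := h1.mul_left 2
    convert h2 using 2 with n
    · exact rfl
    rw [hd]
    rw [pow_succ]
    field_simp
  -- compute the liminf
  rw [Filter.liminf_eq]
  have hset : {a : ℝ | ∀ᶠ n in atTop, a ≤ F n} = Set.Iic 0 := by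
    ext a
    simp only [Set.mem_setOf_eq, Set.mem_Iic]
    constructor
    · intro ha
      by_contra hc
      push_neg at hc
      obtain ⟨N, hN⟩ := eventually_atTop.1 ha
      set M := max N 2 with hM
      have hwd : ∀ n, M ≤ n → a / ((n : ℝ) * Real.log n) ≤ d n := by
        intro n hn
        have hn2 : 2 ≤ n := le_trans (le_max_right N 2) hn
        have hXpos : 0 < (n : ℝ) * Real.log n := by
          have h2n : (2:ℝ) ≤ (n:ℝ) := by exact_mod_cast hn2
          apply mul_pos (by linarith)
          exact Real.log_pos (by linarith)
        rw [div_le_iff₀ hXpos]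
        have := hN n (le_trans (le_max_left N 2) hn)
        rw [hF] at this
        calc a ≤ ({A : Finset ℕ | A ∈ 𝓕 ∧ A ⊆ Finset.Icc 1 n}.ncard : ℝ)
              * ((n : ℝ) * Real.log n) / 2 ^ n := this
          _ = d n * ((n : ℝ) * Real.log n) := by
              rw [hFn n, hd]; ring
      have hsh : Summable (fun k => d (k + M)) := (summable_nat_add_iff M).2 hdsum
      have hw : Summable (fun k : ℕ => a / (((k + M : ℕ) : ℝ) * Real.log ((k + M : ℕ) : ℝ))) := by
        apply Summable.of_nonneg_of_le _ _ hsh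
        · intro k
          exact div_nonneg hc.le (hX _)
        · intro k
          exact hwd (k + M) (Nat.le_add_left M k)
      have hw2 : Summable (fun n : ℕ => a / ((n : ℝ) * Real.log n)) :=
        (summable_nat_add_iff (f := fun n : ℕ => a / ((n : ℝ) * Real.log n)) M).1 hw
      have hw3 : Summable (fun n : ℕ => 1 / ((n : ℝ) * Real.log n)) := by
        have := hw2.mul_left a⁻¹
        convert this using 2 with n
        · exact rfl
        rw [div_eq_mul_inv, div_eq_mul_inv, ← mul_assoc, inv_mul_cancel₀ (ne_of_gt hc)]
      exact not_summable_one_div_mul_log hw3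
    · intro ha
      exact Filter.Eventually.of_forall fun n => le_trans ha (hF0 n)
  rw [hset, csSup_Iic]
end

section
/- Let $\mathcal{F}$ be an antichain of finite subsets of $\mathbb{N}$. Then $\sum_{n=1}^{\infty} \frac{|\mathcal{F} \cap 2^{[n]}|}{2^n} \leq 2$. -/
open Finset

private def mm (A : Finset ℕ) : ℕ := max (A.sup id) 1

private lemma mm_pos (A : Finset ℕ) : 1 ≤ mm A := le_max_right _ _

private lemma subset_Icc_mm {A : Finset ℕ} (h0 : 0 ∉ A) : A ⊆ Finset.Icc 1 (mm A) := by
  intro a ha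
  simp only [Finset.mem_Icc]
  refine ⟨Nat.one_le_iff_ne_zero.2 ?_, le_trans (Finset.le_sup (f := id) ha) (le_max_left _ _)⟩
  rintro rfl; exact h0 ha

private lemma subset_Icc_iff {A : Finset ℕ} (h0 : 0 ∉ A) {k : ℕ} (hk : 1 ≤ k) :
    A ⊆ Finset.Icc 1 k ↔ mm A ≤ k := by
  constructor
  · intro h
    exact max_le (Finset.sup_le fun a ha => (Finset.mem_Icc.1 (h ha)).2) hk
  · intro h
    exact (subset_Icc_mm h0).trans (Finset.Icc_subset_Icc_right h)

private lemma key_nat (𝓕 : Set (Finset ℕ))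
    (hanti : ∀ A ∈ 𝓕, ∀ B ∈ 𝓕, A ≠ B → ¬ A ⊆ B)
    (T : Finset (Finset ℕ)) (hT : ∀ A ∈ T, A ∈ 𝓕 ∧ 0 ∉ A) :
    ∑ A ∈ T, 2 ^ (T.sup mm - mm A) ≤ 2 ^ (T.sup mm) := by
  classical
  set N := T.sup mm with hN
  set E : Finset ℕ → Finset (Finset ℕ) :=
    fun A => (Finset.Icc (mm A + 1) N).powerset.image (fun X => A ∪ X) with hE
  have hrec : ∀ A ∈ T, ∀ S ∈ E A, A = S.filter (· ≤ mm A) := by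
    intro A hA S hS
    obtain ⟨X, hX, rfl⟩ := Finset.mem_image.1 hS
    rw [Finset.mem_powerset] at hX
    ext a
    simp only [Finset.mem_filter, Finset.mem_union]
    constructor
    · intro ha
      exact ⟨Or.inl ha, (Finset.mem_Icc.1 (subset_Icc_mm (hT A hA).2 ha)).2⟩
    · rintro ⟨ha | ha, hle⟩
      · exact ha
      · have := (Finset.mem_Icc.1 (hX ha)).1; omega
  have hcard : ∀ A ∈ T, (E A).card = 2 ^ (N - mm A) := by
    intro A hA
    rw [hE]
    have hinj : Set.InjOn (fun X => A ∪ X) ↑(Finset.Icc (mm A + 1) N).powerset := by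
      intro X hX Y hY hXY
      simp only [Finset.coe_powerset, Set.mem_preimage, Set.mem_powerset_iff,
        Finset.coe_subset] at hX hY
      have key : ∀ Z : Finset ℕ, Z ⊆ Finset.Icc (mm A + 1) N →
          Z = (A ∪ Z).filter (fun x => mm A < x) := by
        intro Z hZ
        ext x
        simp only [Finset.mem_filter, Finset.mem_union]
        constructor
        · intro hx
          have := (Finset.mem_Icc.1 (hZ hx)).1
          exact ⟨Or.inr hx, by omega⟩
        · rintro ⟨hx | hx, hlt⟩
          · have := (Finset.mem_Icc.1 (subset_Icc_mm (hT A hA).2 hx)).2; omega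
          · exact hx
      rw [key X hX, key Y hY]
      simp only at hXY
      rw [hXY]
    rw [Finset.card_image_of_injOn hinj, Finset.card_powerset, Nat.card_Icc]
    congr 1
    omega
  have hdisj : ∀ A ∈ T, ∀ B ∈ T, A ≠ B → Disjoint (E A) (E B) := by
    intro A hA B hB hAB
    rw [Finset.disjoint_left]
    intro S hSA hSB
    have h1 := hrec A hA S hSA
    have h2 := hrec B hB S hSB
    rcases le_total (mm A) (mm B) with h | h
    · refine hanti A (hT A hA).1 B (hT B hB).1 hAB ?_
      intro a ha
      have ha' : a ∈ S.filter (· ≤ mm A) := h1 ▸ ha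
      rw [Finset.mem_filter] at ha'
      rw [h2, Finset.mem_filter]
      exact ⟨ha'.1, le_trans ha'.2 h⟩
    · refine hanti B (hT B hB).1 A (hT A hA).1 hAB.symm ?_
      intro a ha
      have ha' : a ∈ S.filter (· ≤ mm B) := h2 ▸ ha
      rw [Finset.mem_filter] at ha'
      rw [h1, Finset.mem_filter]
      exact ⟨ha'.1, le_trans ha'.2 h⟩
  have hsub : T.biUnion E ⊆ (Finset.Icc 1 N).powerset := by
    intro S hS
    obtain ⟨A, hA, hSA⟩ := Finset.mem_biUnion.1 hS
    obtain ⟨X, hX, rfl⟩ := Finset.mem_image.1 hSA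
    rw [Finset.mem_powerset] at hX ⊢
    refine Finset.union_subset ?_ ?_
    · exact (subset_Icc_mm (hT A hA).2).trans
        (Finset.Icc_subset_Icc_right (Finset.le_sup hA))
    · exact hX.trans (Finset.Icc_subset_Icc_left (by omega))
  calc ∑ A ∈ T, 2 ^ (N - mm A) = ∑ A ∈ T, (E A).card :=
        (Finset.sum_congr rfl hcard).symm
    _ = (T.biUnion E).card := (Finset.card_biUnion hdisj).symm
    _ ≤ (Finset.Icc 1 N).powerset.card := Finset.card_le_card hsub
    _ = 2 ^ N := by rw [Finset.card_powerset, Nat.card_Icc]; congr 1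

private lemma key_ennreal (𝓕 : Set (Finset ℕ))
    (hanti : ∀ A ∈ 𝓕, ∀ B ∈ 𝓕, A ≠ B → ¬ A ⊆ B)
    (T : Finset (Finset ℕ)) (hT : ∀ A ∈ T, A ∈ 𝓕 ∧ 0 ∉ A) :
    ∑ A ∈ T, ((2 : ENNReal) ^ (mm A))⁻¹ ≤ 1 := by
  set N := T.sup mm with hN
  have h2 : (2 : ENNReal) ≠ 0 := two_ne_zero
  have h2' : (2 : ENNReal) ≠ ⊤ := ENNReal.ofNat_ne_top
  rw [← ENNReal.mul_le_mul_iff_left (c := 2 ^ N) (pow_ne_zero _ h2) (ENNReal.pow_ne_top h2'),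
    Finset.sum_mul, one_mul]
  have hterm : ∀ A ∈ T, ((2 : ENNReal) ^ (mm A))⁻¹ * 2 ^ N = 2 ^ (N - mm A) := by
    intro A hA
    have hm : mm A ≤ N := Finset.le_sup hA
    have hsplit : (2 : ENNReal) ^ N = 2 ^ (mm A) * 2 ^ (N - mm A) := by
      rw [← pow_add]; congr 1; omega
    rw [hsplit, ← mul_assoc,
      ENNReal.inv_mul_cancel (pow_ne_zero _ h2) (ENNReal.pow_ne_top h2'), one_mul]
  rw [Finset.sum_congr rfl hterm]
  calc ∑ A ∈ T, (2 : ENNReal) ^ (N - mm A)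
      = ((∑ A ∈ T, 2 ^ (N - mm A) : ℕ) : ENNReal) := by push_cast; rfl
    _ ≤ ((2 ^ N : ℕ) : ENNReal) := by
        exact_mod_cast Nat.cast_le.2 (key_nat 𝓕 hanti T hT)
    _ = 2 ^ N := by push_cast; rfl

/-- If `𝓕` is an antichain of finite subsets of `ℕ`, then
`∑_{n=1}^∞ |𝓕 ∩ 2^[n]| / 2^n ≤ 2`. -/
theorem antichain_kraft_sum
    (𝓕 : Set (Finset ℕ))
    (hanti : ∀ A ∈ 𝓕, ∀ B ∈ 𝓕, A ≠ B → ¬ A ⊆ B) :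
    ∑' n : ℕ,
      (({A : Finset ℕ | A ∈ 𝓕 ∧ A ⊆ Finset.Icc 1 (n + 1)}.ncard : ENNReal)
        / 2 ^ (n + 1)) ≤ 2 := by
  classical
  have h2 : (2 : ENNReal) ≠ 0 := two_ne_zero
  have h2' : (2 : ENNReal) ≠ ⊤ := ENNReal.ofNat_ne_top
  set f : ℕ → Finset ℕ → ENNReal := fun n A =>
    if A ∈ 𝓕 ∧ A ⊆ Finset.Icc 1 (n + 1) then ((2 : ENNReal) ^ (n + 1))⁻¹ else 0 with hf
  set F : ℕ → Finset (Finset ℕ) := fun n =>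
    (Finset.Icc 1 (n + 1)).powerset.filter (· ∈ 𝓕) with hF
  have hsetF : ∀ n : ℕ, {A : Finset ℕ | A ∈ 𝓕 ∧ A ⊆ Finset.Icc 1 (n + 1)} = ↑(F n) := by
    intro n; ext A
    simp [hF, Finset.mem_filter, Finset.mem_powerset, and_comm]
  have hterm : ∀ n : ℕ,
      (({A : Finset ℕ | A ∈ 𝓕 ∧ A ⊆ Finset.Icc 1 (n + 1)}.ncard : ENNReal) / 2 ^ (n + 1))
        = ∑' A : Finset ℕ, f n A := by
    intro n
    rw [hsetF n, Set.ncard_coe_finset]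
    have hvanish : ∀ A ∉ F n, f n A = 0 := by
      intro A hA
      simp only [hF, Finset.mem_filter, Finset.mem_powerset] at hA
      simp only [hf]
      rw [if_neg]
      rintro ⟨h1, h2⟩
      exact hA ⟨h2, h1⟩
    have hconst : ∀ A ∈ F n, f n A = ((2 : ENNReal) ^ (n + 1))⁻¹ := by
      intro A hA
      simp only [hF, Finset.mem_filter, Finset.mem_powerset] at hA
      simp only [hf]
      exact if_pos ⟨hA.2, hA.1⟩
    rw [tsum_eq_sum (s := F n) hvanish, Finset.sum_congr rfl hconst,
      Finset.sum_const, nsmul_eq_mul, div_eq_mul_inv]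
  calc ∑' n : ℕ,
      (({A : Finset ℕ | A ∈ 𝓕 ∧ A ⊆ Finset.Icc 1 (n + 1)}.ncard : ENNReal) / 2 ^ (n + 1))
      = ∑' (n : ℕ) (A : Finset ℕ), f n A := by
        exact tsum_congr hterm
    _ = ∑' (A : Finset ℕ) (n : ℕ), f n A := ENNReal.tsum_comm
    _ ≤ ∑' A : Finset ℕ,
          (if A ∈ 𝓕 ∧ 0 ∉ A then 2 * ((2 : ENNReal) ^ (mm A))⁻¹ else 0) := by
        refine ENNReal.tsum_le_tsum fun A => ?_
        by_cases hA : A ∈ 𝓕 ∧ 0 ∉ A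
        · rw [if_pos hA]
          have hcond : ∀ n : ℕ, (A ∈ 𝓕 ∧ A ⊆ Finset.Icc 1 (n + 1)) ↔ mm A ≤ n + 1 := by
            intro n
            rw [subset_Icc_iff hA.2 (by omega)]
            exact ⟨fun h => h.2, fun h => ⟨hA.1, h⟩⟩
          have hfa : ∀ n : ℕ, f n A =
              if mm A ≤ n + 1 then ((2 : ENNReal) ^ (n + 1))⁻¹ else 0 := by
            intro n; simp only [hf]; rw [if_congr (hcond n) rfl rfl]
          have hshift : ∑' n : ℕ, f n A
              = ∑' j : ℕ, f (j + (mm A - 1)) A := by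
            refine (Function.Injective.tsum_eq (g := fun j : ℕ => j + (mm A - 1))
              (add_left_injective _) ?_).symm
            intro n hn
            rw [Function.mem_support, hfa n] at hn
            have hle : mm A ≤ n + 1 := by by_contra h; rw [if_neg h] at hn; exact hn rfl
            exact ⟨n - (mm A - 1), by show n - (mm A - 1) + (mm A - 1) = n; omega⟩
          rw [hshift]
          have hval : ∀ j : ℕ, f (j + (mm A - 1)) A = (2 : ENNReal)⁻¹ ^ j * ((2:ENNReal) ^ (mm A))⁻¹ := by
            intro j
            rw [hfa]
            rw [if_pos (by have := mm_pos A; omega)]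
            have : j + (mm A - 1) + 1 = j + mm A := by have := mm_pos A; omega
            rw [this, pow_add, ENNReal.mul_inv (Or.inl (pow_ne_zero _ h2))
              (Or.inl (ENNReal.pow_ne_top h2')), ENNReal.inv_pow]
          rw [tsum_congr hval, ENNReal.tsum_mul_right, ENNReal.tsum_geometric,
            ENNReal.one_sub_inv_two, inv_inv]
        · rw [if_neg hA]
          have : ∀ n : ℕ, f n A = 0 := by
            intro n
            simp only [hf]
            rw [if_neg]
            intro ⟨h1, hsub⟩
            refine hA ⟨h1, fun h0 => ?_⟩
            have := Finset.mem_Icc.1 (hsub h0)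
            omega
          simp [this]
    _ ≤ 2 := by
        rw [ENNReal.tsum_eq_iSup_sum]
        refine iSup_le fun T => ?_
        rw [← Finset.sum_filter]
        rw [← Finset.mul_sum]
        calc 2 * ∑ A ∈ T.filter (fun A => A ∈ 𝓕 ∧ 0 ∉ A), ((2 : ENNReal) ^ (mm A))⁻¹
            ≤ 2 * 1 := by
              refine mul_le_mul_right ?_ 2
              exact key_ennreal 𝓕 hanti _ (fun A hA => (Finset.mem_filter.1 hA).2)
          _ = 2 := mul_one 2
end

section
/- Let $X_1, X_2, \ldots$ be independent random variables on a probability space with $\mathbb{P}(X_i = 1) = \mathbb{P}(X_i = -1) = 1/2$ for each $i$, and let $S_n := X_1 + \cdots + X_n$. Then the probability that there exists some $n \geq 1$ with $S_n > 3\sqrt{n \ln \ln(n+3)} + 100$ is at most $1/2$. -/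
open MeasureTheory ProbabilityTheory
open scoped ENNReal

set_option maxHeartbeats 1000000

section RWCAux

lemma rwc_indep_precomp {Ω : Type*} [MeasureSpace Ω]
    (X : ℕ → Ω → ℝ)
    (hindep : iIndepFun X ℙ) (g : ℕ → ℕ)
    (hg : Function.Injective g) :
    iIndepFun (fun i => X (g i)) ℙ := by
  classical
  rw [iIndepFun_iff_measure_inter_preimage_eq_mul] at hindep ⊢
  intro S sets hsets
  have key := hindep (S.image g)
    (sets := fun j => ⋂ i ∈ S.filter (fun a => g a = j), sets i) ?_
  · have h1 : ∀ i ∈ S, (⋂ i' ∈ S.filter (fun a => g a = g i), sets i') = sets i := by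
      intro i hi
      have : S.filter (fun a => g a = g i) = {i} := by
        ext b; simp only [Finset.mem_filter, Finset.mem_singleton]
        constructor
        · rintro ⟨_, hb⟩; exact hg hb
        · rintro rfl; exact ⟨hi, rfl⟩
      rw [this]; simp
    rw [Finset.set_biInter_finset_image, Finset.prod_image
      (fun a ha b hb hab => hg hab)] at key
    rw [show (⋂ i ∈ S, X (g i) ⁻¹' sets i)
        = ⋂ y ∈ S, X (g y) ⁻¹' ⋂ i ∈ S.filter (fun a => g a = g y), sets i from
      Set.iInter₂_congr fun i hi => by rw [h1 i hi], key]
    exact Finset.prod_congr rfl fun i hi => by rw [h1 i hi]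
  · intro j hj
    apply MeasurableSet.biInter (Finset.countable_toSet _)
    intro i hi
    exact hsets i (Finset.mem_filter.mp hi).1

variable {Ω : Type*} [MeasureSpace Ω] [IsProbabilityMeasure (ℙ : Measure Ω)]

lemma rwc_integrable_exp_sum (Y : ℕ → Ω → ℝ) (hm : ∀ i, Measurable (Y i))
    (hb : ∀ᵐ ω ∂(ℙ : Measure Ω), ∀ i, |Y i ω| ≤ 1) (s : Finset ℕ) (c : ℝ) :
    Integrable (fun ω => Real.exp (c * ∑ i ∈ s, Y i ω)) ℙ := by
  apply Integrable.mono' (integrable_const (Real.exp (|c| * s.card)))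
  · exact (Real.measurable_exp.comp ((measurable_const.mul
      (Finset.measurable_sum s (fun i _ => hm i))))).aestronglyMeasurable
  · filter_upwards [hb] with ω hω
    rw [Real.norm_eq_abs, Real.abs_exp]
    apply Real.exp_le_exp.mpr
    calc c * ∑ i ∈ s, Y i ω ≤ |c * ∑ i ∈ s, Y i ω| := le_abs_self _
    _ = |c| * |∑ i ∈ s, Y i ω| := abs_mul _ _
    _ ≤ |c| * s.card := by
        apply mul_le_mul_of_nonneg_left _ (abs_nonneg c)
        calc |∑ i ∈ s, Y i ω| ≤ ∑ i ∈ s, |Y i ω| := Finset.abs_sum_le_sum_abs _ _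
        _ ≤ ∑ _i ∈ s, (1:ℝ) := Finset.sum_le_sum (fun i _ => hω i)
        _ = s.card := by simp

lemma rwc_mgf_one (Y : Ω → ℝ) (hm : Measurable Y)
    (h1 : ℙ {ω | Y ω = 1} = 1/2) (h2 : ℙ {ω | Y ω = -1} = 1/2) (c : ℝ) :
    ∫ ω, Real.exp (c * Y ω) ∂(ℙ : Measure Ω) = Real.cosh c := by
  classical
  have hms : MeasurableSet {ω | Y ω = 1} := hm (measurableSet_singleton 1)
  have hms2 : MeasurableSet {ω | Y ω = -1} := hm (measurableSet_singleton (-1))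
  have hae : ∀ᵐ ω ∂(ℙ : Measure Ω), Y ω = 1 ∨ Y ω = -1 := by
    rw [ae_iff]
    have hdisj : Disjoint {ω | Y ω = 1} {ω | Y ω = -1} := by
      rw [Set.disjoint_left]; intro ω hω1 hω2
      simp only [Set.mem_setOf_eq] at hω1 hω2; rw [hω1] at hω2; norm_num at hω2
    have hu : ℙ ({ω | Y ω = 1} ∪ {ω | Y ω = -1}) = 1 := by
      rw [measure_union hdisj hms2, h1, h2]
      exact ENNReal.add_halves 1
    have : {a | ¬(Y a = 1 ∨ Y a = -1)} = ({ω | Y ω = 1} ∪ {ω | Y ω = -1})ᶜ := by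
      ext ω; simp [Set.mem_union, not_or]
    rw [this, measure_compl (hms.union hms2) (measure_ne_top _ _), hu, measure_univ]
    simp
  have heq : (fun ω => Real.exp (c * Y ω)) =ᵐ[ℙ] (fun ω =>
      Real.exp (-c) + (Real.exp c - Real.exp (-c)) *
        Set.indicator {ω | Y ω = 1} (fun _ => (1:ℝ)) ω) := by
    filter_upwards [hae] with ω hω
    rcases hω with h | h
    · simp [Set.indicator_of_mem, h]
    · have : ω ∉ {ω | Y ω = 1} := by simp only [Set.mem_setOf_eq, h]; norm_num
      simp only [Set.indicator_of_notMem this, mul_zero, add_zero, h, mul_neg, mul_one]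
  rw [integral_congr_ae heq, integral_add (integrable_const _)
    (((integrable_const (1:ℝ)).indicator hms).const_mul _), integral_const,
    integral_const_mul, integral_indicator_const _ hms, measureReal_def, measureReal_def, h1, Real.cosh_eq]
  simp only [measure_univ, ENNReal.toReal_one, smul_eq_mul]
  rw [show ((1:ℝ≥0∞)/2).toReal = (1:ℝ)/2 by simp [ENNReal.toReal_div]]
  ring

lemma rwc_ae_pm (Y : Ω → ℝ) (hm : Measurable Y)
    (h1 : ℙ {ω | Y ω = 1} = 1/2) (h2 : ℙ {ω | Y ω = -1} = 1/2) :
    ∀ᵐ ω ∂(ℙ : Measure Ω), Y ω = 1 ∨ Y ω = -1 := by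
  have hms : MeasurableSet {ω | Y ω = 1} := hm (measurableSet_singleton 1)
  have hms2 : MeasurableSet {ω | Y ω = -1} := hm (measurableSet_singleton (-1))
  rw [ae_iff]
  have hdisj : Disjoint {ω | Y ω = 1} {ω | Y ω = -1} := by
    rw [Set.disjoint_left]; intro ω hω1 hω2
    simp only [Set.mem_setOf_eq] at hω1 hω2; rw [hω1] at hω2; norm_num at hω2
  have hu : ℙ ({ω | Y ω = 1} ∪ {ω | Y ω = -1}) = 1 := by
    rw [measure_union hdisj hms2, h1, h2]
    exact ENNReal.add_halves 1
  have : {a | ¬(Y a = 1 ∨ Y a = -1)} = ({ω | Y ω = 1} ∪ {ω | Y ω = -1})ᶜ := by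
    ext ω; simp [Set.mem_union, not_or]
  rw [this, measure_compl (hms.union hms2) (measure_ne_top _ _), hu, measure_univ]
  simp

lemma rwc_mgf_sum (Y : ℕ → Ω → ℝ) (hm : ∀ i, Measurable (Y i))
    (hind : iIndepFun Y ℙ)
    (hb : ∀ᵐ ω ∂(ℙ : Measure Ω), ∀ i, |Y i ω| ≤ 1)
    (hmgf : ∀ i c, ∫ ω, Real.exp (c * Y i ω) ∂(ℙ : Measure Ω) = Real.cosh c)
    (s : Finset ℕ) (c : ℝ) :
    ∫ ω, Real.exp (c * ∑ i ∈ s, Y i ω) ∂(ℙ : Measure Ω) = Real.cosh c ^ s.card := by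
  classical
  induction s using Finset.induction_on with
  | empty => simp
  | @insert a s ha ih =>
    have hI : IndepFun (fun ω => Real.exp (c * Y a ω))
        (fun ω => Real.exp (c * ∑ i ∈ s, Y i ω)) ℙ := by
      have h0 : IndepFun (∑ j ∈ s, Y j) (Y a) ℙ :=
        hind.indepFun_finsetSum_of_notMem hm ha
      have := h0.symm.comp (φ := fun x : ℝ => Real.exp (c * x))
        (ψ := fun x : ℝ => Real.exp (c * x))
        (Real.measurable_exp.comp (measurable_const_mul c))
        (Real.measurable_exp.comp (measurable_const_mul c))
      convert this using 2
      all_goals simp [Function.comp_apply, Finset.sum_apply]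
    have key := hI.integral_mul_eq_mul_integral
      (Integrable.aestronglyMeasurable (by simpa using rwc_integrable_exp_sum Y hm hb {a} c))
      (rwc_integrable_exp_sum Y hm hb s c).aestronglyMeasurable
    have heq : (fun ω => Real.exp (c * ∑ i ∈ insert a s, Y i ω))
        = (fun ω => Real.exp (c * Y a ω)) * (fun ω => Real.exp (c * ∑ i ∈ s, Y i ω)) := by
      funext ω
      simp only [Pi.mul_apply, Finset.sum_insert ha, ← Real.exp_add]
      ring_nf
    rw [heq, key, hmgf, ih, Finset.card_insert_of_notMem ha, pow_succ]
    ring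

lemma rwc_doob (Y : ℕ → Ω → ℝ) (hm : ∀ i, Measurable (Y i))
    (hind : iIndepFun Y ℙ)
    (hb : ∀ᵐ ω ∂(ℙ : Measure Ω), ∀ i, |Y i ω| ≤ 1)
    (hmgf : ∀ i c, ∫ ω, Real.exp (c * Y i ω) ∂(ℙ : Measure Ω) = Real.cosh c)
    (N : ℕ) (a c : ℝ) (hc : 0 ≤ c) :
    ℙ {ω | ∃ n, n ≤ N ∧ a ≤ ∑ i ∈ Finset.range n, Y i ω}
      ≤ ENNReal.ofReal (Real.exp (-(c*a)) * Real.cosh c ^ N) := by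
  classical
  set S : ℕ → Ω → ℝ := fun n ω => ∑ i ∈ Finset.range n, Y i ω with hSdef
  have hSmeas : ∀ n, Measurable (S n) := fun n => Finset.measurable_sum _ (fun i _ => hm i)
  set A : ℕ → Set Ω := fun n => {ω | (∀ k, k < n → S k ω < a) ∧ a ≤ S n ω} with hAdef
  have hAmeas : ∀ n, MeasurableSet (A n) := by
    intro n
    have : A n = (⋂ k, ⋂ _ : k < n, {ω | S k ω < a}) ∩ {ω | a ≤ S n ω} := by
      ext ω; simp [hAdef, Set.mem_iInter]
    rw [this]
    exact (MeasurableSet.iInter fun k => MeasurableSet.iInter fun _ =>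
      measurableSet_lt (hSmeas k) measurable_const).inter
      (measurableSet_le measurable_const (hSmeas n))
  have hdisj : ∀ m n, m < n → Disjoint (A m) (A n) := by
    intro m n hmn
    rw [Set.disjoint_left]
    intro ω h1 h2
    exact absurd h1.2 (not_le.mpr (h2.1 m hmn))
  have hpair : (↑(Finset.range (N+1)) : Set ℕ).Pairwise (Function.onFun Disjoint A) := by
    intro m _ n _ hmn
    rcases hmn.lt_or_gt with h | h
    · exact hdisj m n h
    · exact (hdisj n m h).symm
  have hsub : {ω | ∃ n, n ≤ N ∧ a ≤ S n ω} ⊆ ⋃ n ∈ Finset.range (N+1), A n := by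
    intro ω hω
    have hex : ∃ n, n ≤ N ∧ a ≤ S n ω := hω
    have hn0 := Nat.find_spec hex
    refine Set.mem_biUnion (Finset.mem_range.mpr (Nat.lt_succ_of_le hn0.1)) ?_
    refine ⟨?_, hn0.2⟩
    intro k hk
    have hmin := Nat.find_min hex hk
    push_neg at hmin
    exact hmin (hk.le.trans hn0.1)
  have hintSN : Integrable (fun ω => Real.exp (c * S N ω)) ℙ :=
    rwc_integrable_exp_sum Y hm hb _ c
  -- key per-piece estimate
  have key : ∀ n, n ≤ N → Real.exp (c*a) * (ℙ (A n)).toReal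
      ≤ ∫ ω in A n, Real.exp (c * S N ω) ∂(ℙ : Measure Ω) := by
    intro n hn
    set T : Ω → ℝ := fun ω => ∑ i ∈ Finset.Ico n N, Y i ω with hTdef
    set g1 : Ω → ℝ := Set.indicator (A n) (fun ω => Real.exp (c * S n ω)) with hg1def
    set g2 : Ω → ℝ := fun ω => Real.exp (c * T ω) with hg2def
    have hps : ∀ k, k ≤ n → ∀ ω : Ω,
        (∑ i ∈ (Finset.range n).attach, if (i:ℕ) < k then Y i ω else 0) = S k ω := by
      intro k hk ω
      rw [Finset.sum_attach (Finset.range n) (fun i => if i < k then Y i ω else 0),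
        ← Finset.sum_filter]
      have : (Finset.range n).filter (fun i => i < k) = Finset.range k := by
        ext i; simp only [Finset.mem_filter, Finset.mem_range]; omega
      rw [this]
    have hfull : ∀ ω : Ω, (∑ i ∈ (Finset.range n).attach, Y i ω) = S n ω := by
      intro ω
      exact Finset.sum_attach (Finset.range n) (fun i => Y i ω)
    set Aset : Set (↥(Finset.range n) → ℝ) :=
      {v | (∀ k, k < n → (∑ i ∈ (Finset.range n).attach, if (i:ℕ) < k then v i else 0) < a)
        ∧ a ≤ ∑ i ∈ (Finset.range n).attach, v i} with hAsetdef
    have hsumk : ∀ k : ℕ, Measurable (fun v : ↥(Finset.range n) → ℝ =>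
        ∑ i ∈ (Finset.range n).attach, if (i:ℕ) < k then v i else 0) := by
      intro k
      apply Finset.measurable_sum
      intro i _
      by_cases h : (i:ℕ) < k
      · simp only [if_pos h]
        exact measurable_pi_apply i
      · simp only [if_neg h]
        exact measurable_const
    have hsumfull : Measurable (fun v : ↥(Finset.range n) → ℝ =>
        ∑ i ∈ (Finset.range n).attach, v i) :=
      Finset.measurable_sum _ (fun i _ => measurable_pi_apply i)
    have hAsetmeas : MeasurableSet Aset := by
      have : Aset = (⋂ k, ⋂ _ : k < n,
          {v : ↥(Finset.range n) → ℝ |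
            (∑ i ∈ (Finset.range n).attach, if (i:ℕ) < k then v i else 0) < a})
          ∩ {v | a ≤ ∑ i ∈ (Finset.range n).attach, v i} := by
        ext v; simp [hAsetdef, Set.mem_iInter]
      rw [this]
      exact (MeasurableSet.iInter fun k => MeasurableSet.iInter fun _ =>
        measurableSet_lt (hsumk k) measurable_const).inter
        (measurableSet_le measurable_const hsumfull)
    set F : (↥(Finset.range n) → ℝ) → ℝ :=
      Set.indicator Aset (fun v => Real.exp (c * ∑ i ∈ (Finset.range n).attach, v i))
      with hFdef
    set G : (↥(Finset.Ico n N) → ℝ) → ℝ :=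
      fun v => Real.exp (c * ∑ i ∈ (Finset.Ico n N).attach, v i) with hGdef
    have hFmeas : Measurable F :=
      (Real.measurable_exp.comp (hsumfull.const_mul c)).indicator hAsetmeas
    have hGmeas : Measurable G :=
      Real.measurable_exp.comp ((Finset.measurable_sum _
        (fun i _ => measurable_pi_apply i)).const_mul c)
    have hIndep : IndepFun g1 g2 ℙ := by
      have hbase := hind.indepFun_finset (Finset.range n) (Finset.Ico n N)
        (by rw [Finset.disjoint_left]; intro i hi1 hi2
            simp only [Finset.mem_range] at hi1
            simp only [Finset.mem_Ico] at hi2; omega) hm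
      have hcomp := hbase.comp hFmeas hGmeas
      have e1 : (F ∘ fun ω (i : ↥(Finset.range n)) => Y i ω) = g1 := by
        funext ω
        simp only [Function.comp_apply, hFdef, hg1def]
        by_cases hω : ω ∈ A n
        · have hmem : (fun i : ↥(Finset.range n) => Y i ω) ∈ Aset := by
            constructor
            · intro k hk
              rw [hps k hk.le ω]
              exact hω.1 k hk
            · rw [hfull ω]; exact hω.2
          rw [Set.indicator_of_mem hmem, Set.indicator_of_mem hω, hfull ω]
        · have hmem : (fun i : ↥(Finset.range n) => Y i ω) ∉ Aset := by
            intro hmem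
            exact hω ⟨fun k hk => by rw [← hps k hk.le ω]; exact hmem.1 k hk,
              by rw [← hfull ω]; exact hmem.2⟩
          rw [Set.indicator_of_notMem hmem, Set.indicator_of_notMem hω]
      have e2 : (G ∘ fun ω (i : ↥(Finset.Ico n N)) => Y i ω) = g2 := by
        funext ω
        simp only [Function.comp_apply, hGdef, hg2def, hTdef]
        congr 1
        rw [Finset.sum_attach (Finset.Ico n N) (fun i => Y i ω)]
      rw [← e1, ← e2]
      exact hcomp
    have hintSn : Integrable (fun ω => Real.exp (c * S n ω)) ℙ :=
      rwc_integrable_exp_sum Y hm hb _ c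
    have hint1 : Integrable g1 ℙ := hintSn.indicator (hAmeas n)
    have hint2 : Integrable g2 ℙ := rwc_integrable_exp_sum Y hm hb _ c
    have hmul := hIndep.integral_mul_eq_mul_integral hint1.aestronglyMeasurable hint2.aestronglyMeasurable
    have hprod : g1 * g2 = Set.indicator (A n) (fun ω => Real.exp (c * S N ω)) := by
      funext ω
      by_cases hω : ω ∈ A n
      · simp only [Pi.mul_apply, hg1def, hg2def, Set.indicator_of_mem hω]
        rw [← Real.exp_add, ← mul_add]
        congr 2
        exact Finset.sum_range_add_sum_Ico (fun i => Y i ω) hn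
      · simp only [Pi.mul_apply, hg1def, hg2def, Set.indicator_of_notMem hω, zero_mul]
    have hg2val : ∫ ω, g2 ω ∂(ℙ : Measure Ω) = Real.cosh c ^ (Finset.Ico n N).card :=
      rwc_mgf_sum Y hm hind hb hmgf _ c
    have hg2ge : (1:ℝ) ≤ ∫ ω, g2 ω ∂(ℙ : Measure Ω) := by
      rw [hg2val]
      exact one_le_pow₀ (Real.one_le_cosh c)
    have hg1ge : Real.exp (c*a) * (ℙ (A n)).toReal ≤ ∫ ω, g1 ω ∂(ℙ : Measure Ω) := by
      rw [hg1def, integral_indicator (hAmeas n)]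
      have hmono : ∀ ω ∈ A n, Real.exp (c*a) ≤ Real.exp (c * S n ω) := fun ω hω =>
        Real.exp_le_exp.mpr (mul_le_mul_of_nonneg_left hω.2 hc)
      calc Real.exp (c*a) * (ℙ (A n)).toReal
          = ∫ _ω in A n, Real.exp (c*a) ∂(ℙ : Measure Ω) := by
            rw [setIntegral_const]; rw [smul_eq_mul, measureReal_def]; ring
      _ ≤ ∫ ω in A n, Real.exp (c * S n ω) ∂(ℙ : Measure Ω) :=
            setIntegral_mono_on (integrableOn_const (measure_ne_top _ _))
              hintSn.integrableOn (hAmeas n) hmono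
    have hg1nonneg : 0 ≤ ∫ ω, g1 ω ∂(ℙ : Measure Ω) :=
      le_trans (by positivity) hg1ge
    calc Real.exp (c*a) * (ℙ (A n)).toReal
        ≤ (∫ ω, g1 ω ∂(ℙ : Measure Ω)) * 1 := by rw [mul_one]; exact hg1ge
    _ ≤ (∫ ω, g1 ω ∂(ℙ : Measure Ω)) * ∫ ω, g2 ω ∂(ℙ : Measure Ω) :=
        mul_le_mul_of_nonneg_left hg2ge hg1nonneg
    _ = ∫ ω, (g1 * g2) ω ∂(ℙ : Measure Ω) := hmul.symm
    _ = ∫ ω in A n, Real.exp (c * S N ω) ∂(ℙ : Measure Ω) := by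
        rw [hprod, integral_indicator (hAmeas n)]
  -- assemble
  have hsum : ∑ n ∈ Finset.range (N+1), ∫ ω in A n, Real.exp (c * S N ω) ∂(ℙ : Measure Ω)
      = ∫ ω in (⋃ n ∈ Finset.range (N+1), A n), Real.exp (c * S N ω) ∂(ℙ : Measure Ω) :=
    (integral_biUnion_finset (Finset.range (N+1)) (fun n _ => hAmeas n) hpair
      (fun n _ => hintSN.integrableOn)).symm
  have hle2 : ∫ ω in (⋃ n ∈ Finset.range (N+1), A n), Real.exp (c * S N ω) ∂(ℙ : Measure Ω)
      ≤ ∫ ω, Real.exp (c * S N ω) ∂(ℙ : Measure Ω) :=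
    setIntegral_le_integral hintSN (ae_of_all _ fun ω => (Real.exp_pos _).le)
  have hSN : ∫ ω, Real.exp (c * S N ω) ∂(ℙ : Measure Ω) = Real.cosh c ^ N := by
    have h := rwc_mgf_sum Y hm hind hb hmgf (Finset.range N) c
    simpa using h
  have hPsum : (ℙ (⋃ n ∈ Finset.range (N+1), A n)).toReal
      = ∑ n ∈ Finset.range (N+1), (ℙ (A n)).toReal := by
    rw [measure_biUnion_finset hpair (fun n _ => hAmeas n)]
    exact ENNReal.toReal_sum (fun n _ => measure_ne_top _ _)
  have main : Real.exp (c*a) * (ℙ (⋃ n ∈ Finset.range (N+1), A n)).toReal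
      ≤ Real.cosh c ^ N := by
    rw [hPsum, Finset.mul_sum]
    calc ∑ n ∈ Finset.range (N+1), Real.exp (c*a) * (ℙ (A n)).toReal
        ≤ ∑ n ∈ Finset.range (N+1), ∫ ω in A n, Real.exp (c * S N ω) ∂(ℙ : Measure Ω) :=
          Finset.sum_le_sum (fun n hn => key n (Nat.lt_succ_iff.mp (Finset.mem_range.mp hn)))
    _ = ∫ ω in (⋃ n ∈ Finset.range (N+1), A n), Real.exp (c * S N ω) ∂(ℙ : Measure Ω) := hsum
    _ ≤ ∫ ω, Real.exp (c * S N ω) ∂(ℙ : Measure Ω) := hle2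
    _ = Real.cosh c ^ N := hSN
  refine le_trans (measure_mono hsub) ?_
  rw [← ENNReal.ofReal_toReal (measure_ne_top ℙ (⋃ n ∈ Finset.range (N+1), A n))]
  apply ENNReal.ofReal_le_ofReal
  have hexp : (0:ℝ) < Real.exp (c*a) := Real.exp_pos _
  rw [Real.exp_neg]
  calc (ℙ (⋃ n ∈ Finset.range (N+1), A n)).toReal
      = (Real.exp (c*a))⁻¹ * (Real.exp (c*a) * (ℙ (⋃ n ∈ Finset.range (N+1), A n)).toReal) := by
        field_simp
  _ ≤ (Real.exp (c*a))⁻¹ * (Real.cosh c ^ N) :=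
      mul_le_mul_of_nonneg_left main (inv_nonneg.mpr hexp.le)

end RWCAux

/-- Law of the iterated logarithm type bound: for an i.i.d. sequence of uniform `±1`
random variables with partial sums `Sₙ`, the probability that `Sₙ > 3√(n ln ln (n+3)) + 100`
for some `n ≥ 1` is at most `1/2`. -/
theorem random_walk_crossing_prob
    {Ω : Type*} [MeasureSpace Ω] [IsProbabilityMeasure (ℙ : Measure Ω)]
    (X : ℕ → Ω → ℝ)
    (hmeas : ∀ i, Measurable (X i))
    (hindep : iIndepFun X ℙ)
    (hdist : ∀ i, ℙ {ω | X i ω = 1} = 1 / 2 ∧ ℙ {ω | X i ω = -1} = 1 / 2) :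
    ℙ {ω | ∃ n : ℕ, 1 ≤ n ∧
        3 * Real.sqrt (n * Real.log (Real.log (n + 3))) + 100
          < ∑ i ∈ Finset.range n, X (i + 1) ω} ≤ 1 / 2 := by
  classical
  have hmY : ∀ i, Measurable (fun ω => X (i+1) ω) := fun i => hmeas (i+1)
  have hindY : iIndepFun (fun i => X (i+1)) ℙ :=
    rwc_indep_precomp X hindep (fun i => i+1) (fun a b h => by simpa using h)
  have hb : ∀ᵐ ω ∂(ℙ : Measure Ω), ∀ i : ℕ, |X (i+1) ω| ≤ 1 := by
    rw [ae_all_iff]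
    intro i
    filter_upwards [rwc_ae_pm (X (i+1)) (hmeas (i+1)) (hdist (i+1)).1 (hdist (i+1)).2]
      with ω hω
    rcases hω with h | h <;> rw [h] <;> norm_num
  have hmgf : ∀ (i : ℕ) (c : ℝ),
      ∫ ω, Real.exp (c * X (i+1) ω) ∂(ℙ : Measure Ω) = Real.cosh c := fun i c =>
    rwc_mgf_one (X (i+1)) (hmeas (i+1)) (hdist (i+1)).1 (hdist (i+1)).2 c
  set E : Set Ω := {ω | ∃ n : ℕ, 1 ≤ n ∧
      3 * Real.sqrt (n * Real.log (Real.log (n + 3))) + 100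
        < ∑ i ∈ Finset.range n, X (i + 1) ω} with hEdef
  set G : Set Ω := {ω | ∀ i : ℕ, |X (i+1) ω| ≤ 1} with hGdef
  have hGc : ℙ Gᶜ = 0 := by
    have h := hb
    rw [ae_iff] at h
    have : Gᶜ = {ω | ¬ ∀ i : ℕ, |X (i+1) ω| ≤ 1} := by
      ext ω; simp [hGdef]
    rw [this]
    exact h
  -- the block events
  set B : ℕ → Set Ω := fun j => {ω | ∃ n, n ≤ 2^(j+1) ∧
      3 * Real.sqrt ((2:ℝ)^j * Real.log (Real.log ((2:ℝ)^j + 3))) + 100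
        ≤ ∑ i ∈ Finset.range n, X (i+1) ω} with hBdef
  -- inclusion
  have hincl : E ∩ G ⊆ ⋃ k : ℕ, B (6+k) := by
    rintro ω ⟨hE, hG⟩
    obtain ⟨n, hn1, hn2⟩ := hE
    have hSle : (∑ i ∈ Finset.range n, X (i+1) ω) ≤ (n:ℝ) := by
      calc ∑ i ∈ Finset.range n, X (i+1) ω ≤ ∑ _i ∈ Finset.range n, (1:ℝ) :=
            Finset.sum_le_sum fun i _ => (abs_le.mp (hG i)).2
      _ = n := by simp
    have hsq : (0:ℝ) ≤ 3 * Real.sqrt (n * Real.log (Real.log (n + 3))) := by positivity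
    have hn101 : 101 ≤ n := by
      by_contra hcon
      push_neg at hcon
      have hle : (n:ℝ) ≤ 100 := by exact_mod_cast Nat.lt_succ_iff.mp hcon
      linarith
    set j := Nat.log 2 n with hjdef
    have hj1 : 2^j ≤ n := Nat.pow_log_le_self 2 (by omega)
    have hj2 : n < 2^(j+1) := Nat.lt_pow_succ_log_self (by norm_num) n
    have hj6 : 6 ≤ j := by
      by_contra hcon
      push_neg at hcon
      have : 2^(j+1) ≤ 2^6 := Nat.pow_le_pow_right (by norm_num) (by omega)
      omega
    refine Set.mem_iUnion.mpr ⟨j - 6, ?_⟩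
    have hj : 6 + (j - 6) = j := by omega
    rw [hj]
    refine ⟨n, hj2.le, ?_⟩
    have h1 : ((2:ℝ)^j) ≤ (n:ℝ) := by exact_mod_cast hj1
    have h2pos : (0:ℝ) < (2:ℝ)^j := by positivity
    have hbase : (1:ℝ) ≤ Real.log ((2:ℝ)^j + 3) := by
      rw [Real.le_log_iff_exp_le (by positivity)]
      have := Real.exp_one_lt_d9
      linarith
    have hbase2 : Real.log ((2:ℝ)^j + 3) ≤ Real.log ((n:ℝ) + 3) :=
      Real.log_le_log (by positivity) (by linarith)
    have hll : 0 ≤ Real.log (Real.log ((2:ℝ)^j + 3)) := Real.log_nonneg hbase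
    have hll2 : Real.log (Real.log ((2:ℝ)^j + 3)) ≤ Real.log (Real.log ((n:ℝ) + 3)) :=
      Real.log_le_log (by linarith) hbase2
    have hprod : (2:ℝ)^j * Real.log (Real.log ((2:ℝ)^j + 3))
        ≤ (n:ℝ) * Real.log (Real.log ((n:ℝ) + 3)) :=
      mul_le_mul h1 hll2 hll (by positivity)
    have hmono : 3 * Real.sqrt ((2:ℝ)^j * Real.log (Real.log ((2:ℝ)^j + 3))) + 100
        ≤ 3 * Real.sqrt ((n:ℝ) * Real.log (Real.log ((n:ℝ) + 3))) + 100 := by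
      have := Real.sqrt_le_sqrt hprod
      linarith
    linarith
  -- measure bound per block
  have hBj : ∀ k : ℕ, ℙ (B (6+k)) ≤
      ENNReal.ofReal (((Real.log 2)^2)⁻¹ * (1/((k:ℝ)+5) - 1/((k:ℝ)+6))) := by
    intro k
    set j : ℕ := 6+k with hjdef
    have hj6 : 6 ≤ j := by omega
    set u : ℝ := Real.log (Real.log ((2:ℝ)^j + 3)) with hudef
    have h2pos : (0:ℝ) < (2:ℝ)^j := by positivity
    have hbase : (1:ℝ) ≤ Real.log ((2:ℝ)^j + 3) := by
      rw [Real.le_log_iff_exp_le (by positivity)]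
      have := Real.exp_one_lt_d9
      linarith
    have hu0 : 0 ≤ u := Real.log_nonneg hbase
    set aj : ℝ := 3 * Real.sqrt ((2:ℝ)^j * u) + 100 with hajdef
    have haj0 : (0:ℝ) ≤ aj := by positivity
    set N : ℕ := 2^(j+1) with hNdef
    have hNR : ((N:ℕ):ℝ) = (2:ℝ)^(j+1) := by rw [hNdef, Nat.cast_pow, Nat.cast_ofNat]
    have hNpos : (0:ℝ) < (N:ℝ) := by rw [hNR]; positivity
    set c : ℝ := aj / (N:ℝ) with hcdef
    have hc : 0 ≤ c := div_nonneg haj0 hNpos.le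
    refine le_trans (rwc_doob (fun i => X (i+1)) hmY hindY hb hmgf N aj c hc) ?_
    apply ENNReal.ofReal_le_ofReal
    -- real chain
    have hcosh : Real.cosh c ^ N ≤ Real.exp ((N:ℝ) * c^2 / 2) := by
      calc Real.cosh c ^ N ≤ (Real.exp (c^2/2))^N := by
            apply pow_le_pow_left₀ (Real.cosh_pos c).le
            exact Real.cosh_le_exp_half_sq c
      _ = Real.exp ((N:ℝ) * (c^2/2)) := (Real.exp_nat_mul _ N).symm
      _ = Real.exp ((N:ℝ) * c^2 / 2) := by ring_nf
    have hstep1 : Real.exp (-(c*aj)) * Real.cosh c ^ N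
        ≤ Real.exp (-(aj^2/(2*(N:ℝ)))) := by
      calc Real.exp (-(c*aj)) * Real.cosh c ^ N
          ≤ Real.exp (-(c*aj)) * Real.exp ((N:ℝ) * c^2 / 2) :=
            mul_le_mul_of_nonneg_left hcosh (Real.exp_pos _).le
      _ = Real.exp (-(c*aj) + (N:ℝ) * c^2 / 2) := (Real.exp_add _ _).symm
      _ = Real.exp (-(aj^2/(2*(N:ℝ)))) := by
            congr 1
            rw [hcdef]
            field_simp
            ring
    have hsqrtsq : (Real.sqrt ((2:ℝ)^j * u))^2 = (2:ℝ)^j * u :=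
      Real.sq_sqrt (by positivity)
    have haj2 : 9 * ((2:ℝ)^j * u) ≤ aj^2 := by
      have hs0 : 0 ≤ Real.sqrt ((2:ℝ)^j * u) := Real.sqrt_nonneg _
      nlinarith [hsqrtsq]
    have hstep2 : Real.exp (-(aj^2/(2*(N:ℝ)))) ≤ Real.exp (-((9/4)*u)) := by
      apply Real.exp_le_exp.mpr
      have h2N : (0:ℝ) < 2*(N:ℝ) := by linarith
      have heq : (9/4) * u = 9 * ((2:ℝ)^j * u) / (2*(N:ℝ)) := by
        rw [hNR]
        field_simp
        ring
      rw [heq]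
      apply neg_le_neg
      gcongr
    set L : ℝ := Real.log ((2:ℝ)^j + 3) with hLdef
    have hLpos : (0:ℝ) < L := lt_of_lt_of_le one_pos hbase
    have hrw : Real.exp (-((9/4)*u)) = L ^ (-(9/4) : ℝ) := by
      rw [Real.rpow_def_of_pos hLpos, ← hudef]
      congr 1
      ring
    set wj : ℝ := (j:ℝ) * Real.log 2 with hwdef
    have hlog2 : (0.6931471803:ℝ) < Real.log 2 := Real.log_two_gt_d9
    have hj6R : (6:ℝ) ≤ (j:ℝ) := by exact_mod_cast hj6
    have hw1 : (1:ℝ) ≤ wj := by nlinarith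
    have hwpos : (0:ℝ) < wj := by linarith
    have hwle : wj ≤ L := by
      have h1 : Real.log ((2:ℝ)^j) = (j:ℝ) * Real.log 2 := by
        rw [Real.log_pow]
      rw [hwdef, ← h1, hLdef]
      exact Real.log_le_log (by positivity) (by linarith)
    have hmono2 : L ^ (-(9/4):ℝ) ≤ wj ^ (-(9/4):ℝ) :=
      Real.rpow_le_rpow_of_nonpos hwpos hwle (by norm_num)
    have hmono3 : wj ^ (-(9/4):ℝ) ≤ wj ^ (-(2:ℝ)) :=
      Real.rpow_le_rpow_of_exponent_le hw1 (by norm_num)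
    have hw2 : wj ^ (-(2:ℝ)) = (wj^2)⁻¹ := by
      rw [show (-(2:ℝ)) = -((2:ℕ):ℝ) by norm_num, Real.rpow_neg hwpos.le,
        Real.rpow_natCast]
    have hfinal : (wj^2)⁻¹ ≤ ((Real.log 2)^2)⁻¹ * (1/((k:ℝ)+5) - 1/((k:ℝ)+6)) := by
      have hjk : (j:ℝ) = (k:ℝ)+6 := by rw [hjdef]; push_cast; ring
      have h5 : (0:ℝ) < (k:ℝ)+5 := by positivity
      have h6 : (0:ℝ) < (k:ℝ)+6 := by positivity
      have hd : 1/((k:ℝ)+5) - 1/((k:ℝ)+6) = 1/(((k:ℝ)+5)*((k:ℝ)+6)) := by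
        field_simp
        ring
      rw [hd, one_div, ← mul_inv]
      apply inv_anti₀
      · positivity
      · rw [hwdef, hjk]
        nlinarith
    refine le_trans hstep1 (le_trans hstep2 ?_)
    rw [hrw]
    refine le_trans hmono2 (le_trans hmono3 ?_)
    rw [hw2]
    exact hfinal
  -- assemble
  have hgnn : ∀ k:ℕ, 0 ≤ ((Real.log 2)^2)⁻¹ * (1/((k:ℝ)+5) - 1/((k:ℝ)+6)) := by
    intro k
    have h5 : (0:ℝ) < (k:ℝ)+5 := by positivity
    have h6 : (0:ℝ) < (k:ℝ)+6 := by positivity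
    apply mul_nonneg (by positivity)
    have : 1/((k:ℝ)+6) ≤ 1/((k:ℝ)+5) := one_div_le_one_div_of_le h5 (by linarith)
    linarith
  have hmain : ℙ E ≤ ℙ (E ∩ G) + ℙ Gᶜ := by
    refine le_trans (measure_mono ?_) (measure_union_le _ _)
    intro ω hω
    by_cases h : ω ∈ G
    · exact Or.inl ⟨hω, h⟩
    · exact Or.inr h
  rw [hGc, add_zero] at hmain
  refine le_trans hmain ?_
  refine le_trans (measure_mono hincl) ?_
  refine le_trans (measure_iUnion_le _) ?_
  refine le_trans (ENNReal.tsum_le_tsum hBj) ?_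
  have htle : ∑' k:ℕ, ENNReal.ofReal (((Real.log 2)^2)⁻¹ * (1/((k:ℝ)+5) - 1/((k:ℝ)+6)))
      ≤ ENNReal.ofReal (((Real.log 2)^2)⁻¹ * (1/5)) := by
    rw [ENNReal.tsum_eq_iSup_sum]
    apply iSup_le
    intro s
    obtain ⟨M, hM⟩ := Finset.exists_nat_subset_range s
    refine le_trans (Finset.sum_le_sum_of_subset hM) ?_
    rw [← ENNReal.ofReal_sum_of_nonneg (fun i _ => hgnn i)]
    apply ENNReal.ofReal_le_ofReal
    rw [← Finset.mul_sum]
    have htel : ∑ k ∈ Finset.range M, (1/((k:ℝ)+5) - 1/((k:ℝ)+6))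
        = 1/5 - 1/((M:ℝ)+5) := by
      have h := Finset.sum_range_sub' (f := fun k : ℕ => 1/((k:ℝ)+5)) M
      rw [show (∑ k ∈ Finset.range M, (1/((k:ℝ)+5) - 1/((k:ℝ)+6)))
          = ∑ i ∈ Finset.range M, (1/((i:ℝ)+5) - 1/(((i+1:ℕ):ℝ)+5)) from
        Finset.sum_congr rfl (fun i _ => by push_cast; ring), h]
      norm_num
    rw [htel]
    have hM5 : (0:ℝ) ≤ 1/((M:ℝ)+5) := by positivity
    apply mul_le_mul_of_nonneg_left _ (by positivity)
    linarith
  refine le_trans htle ?_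
  have hC5 : ((Real.log 2)^2)⁻¹ * (1/5) ≤ (1/2:ℝ) := by
    have hlog2 : (0.6931471803:ℝ) < Real.log 2 := Real.log_two_gt_d9
    have h1 : (2/5:ℝ) ≤ (Real.log 2)^2 := by nlinarith
    have h2 : ((Real.log 2)^2)⁻¹ ≤ (5/2:ℝ) := by
      rw [show (5/2:ℝ) = ((2/5:ℝ))⁻¹ by norm_num]
      exact inv_anti₀ (by norm_num) h1
    calc ((Real.log 2)^2)⁻¹ * (1/5) ≤ (5/2) * (1/5) :=
          mul_le_mul_of_nonneg_right h2 (by norm_num)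
    _ ≤ 1/2 := by norm_num
  refine le_trans (ENNReal.ofReal_le_ofReal hC5) ?_
  rw [show ((1:ℝ)/2) = (2:ℝ)⁻¹ by norm_num, ENNReal.ofReal_inv_of_pos (by norm_num)]
  rw [show ((1:ℝ≥0∞)/2) = (2:ℝ≥0∞)⁻¹ by rw [one_div]]
  rw [ENNReal.ofReal_ofNat]
end

section
/- Let $n = p + q$ and let $x_1, x_2, \ldots, x_n$ be a sequence with values in $\{-1, +1\}$ such that exactly $p$ of the entries equal $+1$ and exactly $q \neq 0$ of the entries equal $-1$. Let $\mu \in \mathbb{R}$ satisfy $0 < \mu \leq \frac{p - q}{p + q}$. Call an index $r \in \{1, \dots, n\}$ a head if $\sum_{i=0}^{j-1} x_{((r + i - 1) \bmod n) + 1} > \mu j$ for all $j \in \{1, \dots, n\}$ (i.e., all partial sums of the cyclic rotation of the sequence starting at position $r$ exceed $\mu$ times their length). Then the number of heads is at least $p - \lfloor \frac{1+\mu}{1-\mu} q \rfloor$. -/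
lemma cycle_lemma_key (n : ℕ) (hn : 0 < n) (h : ℕ → ℝ) (σ δ : ℝ) (hσ : 0 < σ) (hδ : 0 < δ)
    (hper : ∀ t, h (t + n) = h t + σ)
    (hstep : ∀ t, h (t + 1) ≤ h t + δ) :
    σ ≤ ({t | t < n ∧ ∀ u, t < u → h t < h u}).ncard * δ := by
  set S : Set ℕ := {t | ∀ u, t < u → h t < h u} with hS
  set T : Set ℕ := {t | t < n ∧ ∀ u, t < u → h t < h u} with hT
  have hTfin : T.Finite := Set.Finite.subset (Set.finite_Iio n) (fun t ht => ht.1)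
  -- multiples of the period
  have hmul : ∀ k t, h (t + k * n) = h t + k * σ := by
    intro k
    induction k with
    | zero => simp
    | succ k ih =>
      intro t
      have : t + (k + 1) * n = (t + k * n) + n := by ring
      rw [this, hper, ih]
      push_cast
      ring
  -- lower bound on h
  have hrn : (Finset.range n).Nonempty := ⟨0, Finset.mem_range.mpr hn⟩
  set B : ℝ := (Finset.range n).inf' hrn h with hB
  have hBle : ∀ u, B + (u / n : ℕ) * σ ≤ h u := by
    intro u
    have h2 : h (u % n + (u / n) * n) = h (u % n) + (u / n : ℕ) * σ := hmul _ _
    rw [Nat.mod_add_div'] at h2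
    rw [h2]
    have : B ≤ h (u % n) := Finset.inf'_le h (Finset.mem_range.mpr (Nat.mod_lt u hn))
    linarith
  -- Claim A: from any point, there is a future minimum at or after it, not higher
  have claimA : ∀ t, ∃ s, t ≤ s ∧ s ∈ S ∧ h s ≤ h t := by
    intro t
    obtain ⟨K, hK⟩ := exists_nat_gt ((h t - B) / σ)
    have hub : ∀ u, h u ≤ h t → u < K * n := by
      intro u hu
      have h1 := hBle u
      have h2 : ((u / n : ℕ) : ℝ) ≤ (h t - B) / σ := by
        rw [le_div_iff₀ hσ]; linarith
      have h3 : (u / n : ℕ) < K := by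
        exact_mod_cast h2.trans_lt hK
      exact (Nat.div_lt_iff_lt_mul hn).mp h3
    set N := K * n + t + 1 with hN
    set F := (Finset.range N).filter (fun u => t ≤ u ∧ h u ≤ h t) with hF
    have htF : t ∈ F :=
      Finset.mem_filter.mpr ⟨Finset.mem_range.mpr (by omega), le_refl t, le_refl (h t)⟩
    have hFne : F.Nonempty := ⟨t, htF⟩
    refine ⟨F.max' hFne, ?_, ?_, ?_⟩
    · exact ((Finset.mem_filter.mp (F.max'_mem hFne)).2).1
    · intro u hu
      by_contra hcon
      push_neg at hcon
      have hmem := Finset.mem_filter.mp (F.max'_mem hFne)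
      have hut : h u ≤ h t := hcon.trans hmem.2.2
      have huF : u ∈ F := by
        refine Finset.mem_filter.mpr ⟨Finset.mem_range.mpr ?_, hmem.2.1.trans hu.le, hut⟩
        have := hub u hut
        omega
      exact absurd (Finset.le_max' F u huF) (not_le.mpr hu)
    · exact (Finset.mem_filter.mp (F.max'_mem hFne)).2.2
  -- S is closed under subtracting a period
  have hdown : ∀ t, (t + n) ∈ S → t ∈ S := by
    intro t ht u hu
    have h1 : h (t + n) < h (u + n) := ht (u + n) (by omega)
    rw [hper, hper] at h1
    linarith
  have hmod : ∀ t, t ∈ S → t % n ∈ S := by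
    intro t
    induction t using Nat.strong_induction_on with
    | _ t ih =>
      intro ht
      rcases lt_or_ge t n with hlt | hge
      · rwa [Nat.mod_eq_of_lt hlt]
      · have h1 : t - n ∈ S := hdown (t - n) (by rwa [Nat.sub_add_cancel hge])
        have h2 : t % n = (t - n) % n := Nat.mod_eq_sub_mod hge
        rw [h2]
        exact ih (t - n) (by omega) h1
  -- a base future minimum below n
  obtain ⟨s0, _, hs0S, _⟩ := claimA 0
  set r := s0 % n with hr
  have hrS : r ∈ S := hmod s0 hs0S
  have hrltn : r < n := Nat.mod_lt s0 hn
  -- the chain of future minima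
  set m : ℕ → ℕ := fun i => Nat.rec r (fun _ prev => (claimA (prev + 1)).choose) i with hm
  have hm0 : m 0 = r := rfl
  have hmsucc : ∀ i, m i + 1 ≤ m (i + 1) ∧ m (i + 1) ∈ S ∧ h (m (i + 1)) ≤ h (m i + 1) :=
    fun i => (claimA (m i + 1)).choose_spec
  have hmS : ∀ i, m i ∈ S := by
    intro i
    induction i with
    | zero => exact hrS
    | succ i _ => exact (hmsucc i).2.1
  have hmono : StrictMono m := strictMono_nat_of_lt_succ (fun i => by have := (hmsucc i).1; omega)
  have hbound : ∀ i, h (m i) ≤ h r + i * δ := by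
    intro i
    induction i with
    | zero => simp [hm0]
    | succ i ih =>
      have h1 := (hmsucc i).2.2
      have h2 := hstep (m i)
      push_cast
      nlinarith
  set k := T.ncard with hk
  -- the (k+1)-st element of the chain leaves the window [r, r+n)
  have hout : r + n ≤ m k := by
    by_contra hcon
    push_neg at hcon
    have hwin : ∀ i ≤ k, r ≤ m i ∧ m i < r + n := by
      intro i hi
      constructor
      · have : m 0 ≤ m i := hmono.monotone (Nat.zero_le i)
        omega
      · have : m i ≤ m k := hmono.monotone hi
        omega
    have hinj2 : Set.InjOn (· % n) (m '' Set.Iic k) := by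
      rintro u ⟨i, hi, rfl⟩ v ⟨j, hj, rfl⟩ huv
      obtain ⟨h1, h2⟩ := hwin i hi
      obtain ⟨h3, h4⟩ := hwin j hj
      simp only at huv
      rcases le_total (m i) (m j) with hle | hle
      · have hdvd : n ∣ m j - m i := (Nat.modEq_iff_dvd' hle).mp huv
        have : m j - m i = 0 := Nat.eq_zero_of_dvd_of_lt hdvd (by omega)
        omega
      · have hdvd : n ∣ m i - m j := (Nat.modEq_iff_dvd' hle).mp huv.symm
        have : m i - m j = 0 := Nat.eq_zero_of_dvd_of_lt hdvd (by omega)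
        omega
    have hmaps : ∀ u ∈ m '' Set.Iic k, u % n ∈ T := by
      rintro u ⟨i, hi, rfl⟩
      exact ⟨Nat.mod_lt _ hn, hmod _ (hmS i)⟩
    have hle : (m '' Set.Iic k).ncard ≤ T.ncard :=
      Set.ncard_le_ncard_of_injOn (· % n) hmaps hinj2 hTfin
    have hcard : (m '' Set.Iic k).ncard = k + 1 := by
      rw [Set.ncard_image_of_injOn (hmono.injective.injOn)]
      rw [← Finset.coe_Iic, Set.ncard_coe_finset, Nat.card_Iic]
    omega
  -- conclude
  have h1 : h r + σ ≤ h (m k) := by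
    have h2 : m k = (m k - n) + n := by omega
    have h3 : h (m k) = h (m k - n) + σ := by nth_rewrite 1 [h2]; rw [hper]
    have h4 : h r ≤ h (m k - n) := by
      rcases eq_or_lt_of_le (show r ≤ m k - n by omega) with heq | hlt
      · rw [heq]
      · exact (hrS _ hlt).le
    linarith
  have h2 := hbound k
  have : σ ≤ k * δ := by linarith
  exact this

/-- Cycle lemma: given a circular sequence of `p` many `+1`'s and `q ≠ 0` many `-1`'s
(`n = p + q`) and `0 < μ ≤ (p-q)/(p+q)`, the number of indices `r` such that every
partial sum of the cyclic rotation starting at `r` exceeds `μ` times its length is at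
least `p - ⌊(1+μ)/(1-μ) · q⌋`. -/
theorem cycle_lemma
    (p q n : ℕ) (hn : n = p + q) (hq : q ≠ 0)
    (x : ℕ → ℤ)
    (hx : ∀ i < n, x i = 1 ∨ x i = -1)
    (hp : ({i | i < n ∧ x i = 1}).ncard = p)
    (hqcount : ({i | i < n ∧ x i = -1}).ncard = q)
    (μ : ℝ) (hμ0 : 0 < μ) (hμ1 : μ ≤ ((p : ℝ) - q) / ((p : ℝ) + q)) :
    (p : ℤ) - ⌊(1 + μ) / (1 - μ) * q⌋ ≤
      (({r | r < n ∧ ∀ j, 1 ≤ j → j ≤ n →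
          μ * j < ((∑ i ∈ Finset.range j, x ((r + i) % n) : ℤ) : ℝ)}).ncard : ℤ) := by
  have hq1 : 1 ≤ q := Nat.one_le_iff_ne_zero.mpr hq
  have hn0 : 0 < n := by omega
  have hpq0 : (0 : ℝ) < (p : ℝ) + q := by
    have : (1 : ℝ) ≤ (q : ℝ) := by exact_mod_cast hq1
    positivity
  have hμlt : μ < 1 := by
    have h1 : ((p : ℝ) - q) / ((p : ℝ) + q) < 1 := by
      rw [div_lt_one hpq0]
      have : (1 : ℝ) ≤ (q : ℝ) := by exact_mod_cast hq1
      linarith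
    linarith
  have h1μ : (0 : ℝ) < 1 - μ := by linarith
  -- counting: the sum over one period is p - q
  have hA : ((Finset.range n).filter (fun i => x i = 1)).card = p := by
    rw [← hp, ← Set.ncard_coe_finset]
    congr 1
    ext i
    simp [Finset.mem_filter, Finset.mem_range]
  have hBc : ((Finset.range n).filter (fun i => x i = -1)).card = q := by
    rw [← hqcount, ← Set.ncard_coe_finset]
    congr 1
    ext i
    simp [Finset.mem_filter, Finset.mem_range]
  have hsum : (∑ i ∈ Finset.range n, x i) = (p : ℤ) - q := by
    have hsplit := Finset.sum_filter_add_sum_filter_not (Finset.range n) (fun i => x i = 1) x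
    have hfe : (Finset.range n).filter (fun i => ¬ x i = 1) =
        (Finset.range n).filter (fun i => x i = -1) := by
      apply Finset.filter_congr
      intro i hi
      rcases hx i (Finset.mem_range.mp hi) with h | h <;> simp [h]
    rw [hfe] at hsplit
    have e1 : (∑ i ∈ (Finset.range n).filter (fun i => x i = 1), x i)
        = ((Finset.range n).filter (fun i => x i = 1)).card • (1 : ℤ) :=
      Finset.sum_eq_card_nsmul (fun a ha => (Finset.mem_filter.mp ha).2)
    have e2 : (∑ i ∈ (Finset.range n).filter (fun i => x i = -1), x i)
        = ((Finset.range n).filter (fun i => x i = -1)).card • (-1 : ℤ) :=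
      Finset.sum_eq_card_nsmul (fun a ha => (Finset.mem_filter.mp ha).2)
    rw [e1, e2, hA, hBc] at hsplit
    simp at hsplit
    omega
  set g : ℕ → ℤ := fun t => ∑ i ∈ Finset.range t, x (i % n) with hg
  set h : ℕ → ℝ := fun t => (g t : ℝ) - μ * t with hh
  set σ : ℝ := ((p : ℝ) - q) - μ * n with hσdef
  have hgsucc : ∀ t, g (t + 1) = g t + x (t % n) := fun t => Finset.sum_range_succ _ t
  have hpart : ∀ r j, (∑ i ∈ Finset.range j, x ((r + i) % n)) = g (r + j) - g r := by
    intro r j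
    induction j with
    | zero => simp
    | succ j ih =>
      rw [Finset.sum_range_succ, ih]
      have e : g (r + (j + 1)) = g (r + j) + x ((r + j) % n) := hgsucc (r + j)
      rw [e]; ring
  have hgper : ∀ t, g (t + n) = g t + ((p : ℤ) - q) := by
    intro t
    induction t with
    | zero =>
      have e0 : (0 : ℕ) + n = n := by omega
      have hgn : g n = ∑ i ∈ Finset.range n, x i := by
        apply Finset.sum_congr rfl
        intro i hi
        rw [Nat.mod_eq_of_lt (Finset.mem_range.mp hi)]
      rw [e0, hgn, hsum]
      simp [hg]
    | succ t ih =>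
      have e : t + 1 + n = (t + n) + 1 := by omega
      rw [e, hgsucc, ih, hgsucc]
      rw [Nat.add_mod_right]
      ring
  have hper : ∀ t, h (t + n) = h t + σ := by
    intro t
    simp only [hh, hσdef, hgper]
    push_cast
    ring
  have hstep : ∀ t, h (t + 1) ≤ h t + (1 - μ) := by
    intro t
    have hxle : x (t % n) ≤ 1 := by
      rcases hx (t % n) (Nat.mod_lt t hn0) with h' | h' <;> simp [h']
    simp only [hh, hgsucc]
    push_cast
    have : ((x (t % n) : ℝ)) ≤ 1 := by exact_mod_cast hxle
    nlinarith
  -- identify the heads with the strict future minima of h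
  have hseteq : {r | r < n ∧ ∀ j, 1 ≤ j → j ≤ n →
        μ * j < ((∑ i ∈ Finset.range j, x ((r + i) % n) : ℤ) : ℝ)}
      = {t | t < n ∧ ∀ u, t < u → h t < h u} := by
    have hσ0 : 0 ≤ σ := by
      rw [hσdef, hn]
      have h2 : μ * ((p : ℝ) + q) ≤ (p : ℝ) - q := by
        have h3 := mul_le_mul_of_nonneg_right hμ1 hpq0.le
        rwa [div_mul_cancel₀ _ (ne_of_gt hpq0)] at h3
      push_cast
      linarith
    ext r
    simp only [Set.mem_setOf_eq]
    constructor
    · rintro ⟨hrn, hhead⟩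
      refine ⟨hrn, ?_⟩
      intro u
      induction u using Nat.strong_induction_on with
      | _ u ih =>
        intro hru
        rcases le_or_gt u (r + n) with hle | hlt
        · have hj1 : 1 ≤ u - r := by omega
          have hj2 : u - r ≤ n := by omega
          have h1 := hhead (u - r) hj1 hj2
          rw [hpart r (u - r), show r + (u - r) = u by omega] at h1
          simp only [hh]
          push_cast at h1 ⊢
          have : ((u : ℝ) - r) = ((u - r : ℕ) : ℝ) := by
            have : (r : ℝ) ≤ u := by exact_mod_cast hru.le
            push_cast [Nat.cast_sub hru.le]
            ring
          nlinarith [h1, this]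
        · have h2 : h r < h (u - n) := ih (u - n) (by omega) (by omega)
          have h3 : h (u - n + n) = h (u - n) + σ := hper (u - n)
          rw [show u - n + n = u by omega] at h3
          linarith
    · rintro ⟨hrn, hs⟩
      refine ⟨hrn, ?_⟩
      intro j hj1 hj2
      have h1 := hs (r + j) (by omega)
      rw [hpart r j]
      simp only [hh] at h1
      push_cast at h1 ⊢
      linarith
  rw [hseteq]
  -- trivial case
  rcases le_or_gt ((p : ℤ) - ⌊(1 + μ) / (1 - μ) * q⌋) 0 with hle | hpos
  · exact hle.trans (Int.natCast_nonneg _)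
  -- main case: the drift is positive
  have hcq : (1 + μ) / (1 - μ) * q < p := by
    have h1 : ⌊(1 + μ) / (1 - μ) * q⌋ + 1 ≤ (p : ℤ) := by omega
    have h2 : (1 + μ) / (1 - μ) * q < (⌊(1 + μ) / (1 - μ) * q⌋ : ℝ) + 1 :=
      Int.lt_floor_add_one _
    have h3 : ((⌊(1 + μ) / (1 - μ) * q⌋ : ℝ) + 1) ≤ (p : ℝ) := by exact_mod_cast h1
    linarith
  have hσformula : σ = (1 - μ) * ((p : ℝ) - (1 + μ) / (1 - μ) * q) := by
    rw [hσdef, hn]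
    push_cast
    field_simp
    ring
  have hσpos : 0 < σ := by
    rw [hσformula]
    have : (0 : ℝ) < (p : ℝ) - (1 + μ) / (1 - μ) * q := by linarith
    positivity
  have hkey := cycle_lemma_key n hn0 h σ (1 - μ) hσpos h1μ hper hstep
  set k := ({t | t < n ∧ ∀ u, t < u → h t < h u}).ncard with hk
  have hreal : (p : ℝ) - (1 + μ) / (1 - μ) * q ≤ (k : ℝ) := by
    rw [hσformula, mul_comm (1 - μ)] at hkey
    exact le_of_mul_le_mul_right hkey h1μ
  have hfl : (p : ℤ) - (k : ℤ) ≤ ⌊(1 + μ) / (1 - μ) * q⌋ := by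
    rw [Int.le_floor]
    push_cast
    linarith
  omega
end

section
/- Let $n = p + q$ with $q \neq 0$, and let $\mu \in \mathbb{R}$ satisfy $0 < \mu \leq \frac{p - q}{p + q}$. Call a sequence $x_1, \dots, x_n \in \{-1, +1\}$ with exactly $p$ entries equal to $+1$ and $q$ entries equal to $-1$ good if $\sum_{i=1}^{j} x_i > \mu j$ for all $j \in \{1, \dots, n\}$. Then the number of good sequences is at least $\frac{p - \lfloor \frac{1+\mu}{1-\mu} q \rfloor}{n} \binom{n}{p}$. -/
open Classical


lemma exists_record (S : ℕ → ℝ) (n : ℕ) (hn : 0 < n) (d : ℝ) (hd : 0 < d)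
    (hper : ∀ j, S (j + n) = S j + d) (a : ℕ) :
    ∃ t, a ≤ t ∧ t ≤ a + n ∧ S t ≤ S a ∧ ∀ u, t < u → S t < S u := by
  classical
  set F : Finset ℕ := Finset.Icc a (a + n) with hF
  have hFne : F.Nonempty := ⟨a, by simp [hF]⟩
  set m : ℝ := (F.image S).min' (hFne.image S) with hm
  have hAne : ∃ u ∈ F, S u = m := by
    have := (F.image S).min'_mem (hFne.image S)
    rw [← hm] at this
    simpa using this
  set A : Finset ℕ := F.filter (fun u => S u = m) with hA
  have hAne' : A.Nonempty := by
    obtain ⟨u, hu, hsu⟩ := hAne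
    exact ⟨u, by simp [hA, hu, hsu]⟩
  set t := A.max' hAne' with ht
  have htA : t ∈ A := A.max'_mem hAne'
  have htF : t ∈ F := (Finset.mem_filter.mp htA).1
  have htS : S t = m := (Finset.mem_filter.mp htA).2
  have hta : a ≤ t := (Finset.mem_Icc.mp htF).1
  have htan : t ≤ a + n := (Finset.mem_Icc.mp htF).2
  have hmle : ∀ u ∈ F, m ≤ S u := fun u hu =>
    (F.image S).min'_le (S u) (Finset.mem_image_of_mem S hu)
  have hsub : ∀ u ∈ F, t < u → S t < S u := by
    intro u hu hlt
    rcases lt_or_eq_of_le (htS ▸ hmle u hu) with h | h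
    · exact h
    · exfalso
      have : u ∈ A := Finset.mem_filter.mpr ⟨hu, by rw [← h, htS]⟩
      exact absurd (A.le_max' u this) (not_le.mpr hlt)
  have main : ∀ u, t < u → S t < S u := by
    intro u
    induction u using Nat.strong_induction_on with
    | _ u ih =>
      intro hu
      by_cases h1 : u ≤ a + n
      · exact hsub u (Finset.mem_Icc.mpr ⟨by omega, h1⟩) hu
      · have h3 : S u = S (u - n) + d := by
          have h2 : u - n + n = u := by omega
          have h5 := hper (u - n); rw [h2] at h5; exact h5
        by_cases h4 : u - n ≤ t
        · have : m ≤ S (u - n) := hmle _ (Finset.mem_Icc.mpr ⟨by omega, by omega⟩)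
          rw [htS]; linarith
        · have := ih (u - n) (by omega) (by omega)
          linarith
  exact ⟨t, hta, htan, htS ▸ hmle a (Finset.mem_Icc.mpr ⟨le_refl a, by omega⟩), main⟩

lemma record_chain (S : ℕ → ℝ) (n : ℕ) (hn : 0 < n) (d : ℝ) (hd : 0 < d)
    (hstep : ∀ j, S (j + 1) ≤ S j + 1)
    (hper : ∀ j, S (j + n) = S j + d)
    (K : ℕ) (hK : (K : ℝ) < d + 1) :
    ∃ f : ℕ → ℕ, (∀ k, k < K → f k < n ∧ ∀ t, f k < t → S (f k) < S t) ∧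
      (∀ k1, k1 < K → ∀ k2, k2 < K → f k1 = f k2 → k1 = k2) := by
  classical
  set g : ℕ → ℕ := fun k => Nat.rec
    (exists_record S n hn d hd hper 0).choose
    (fun _ prev => (exists_record S n hn d hd hper (prev + 1)).choose) k with hg
  have hg0 : g 0 = (exists_record S n hn d hd hper 0).choose := rfl
  have hgs : ∀ k, g (k + 1) = (exists_record S n hn d hd hper (g k + 1)).choose := fun k => rfl
  have spec0 := (exists_record S n hn d hd hper 0).choose_spec
  have specs : ∀ k, g k + 1 ≤ g (k + 1) ∧ g (k + 1) ≤ g k + 1 + n ∧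
      S (g (k + 1)) ≤ S (g k + 1) ∧ ∀ u, g (k + 1) < u → S (g (k + 1)) < S u := by
    intro k
    have := (exists_record S n hn d hd hper (g k + 1)).choose_spec
    rw [← hgs k] at this
    exact this
  have hrec : ∀ k, ∀ u, g k < u → S (g k) < S u := by
    intro k
    cases k with
    | zero => exact (hg0 ▸ spec0.2.2.2)
    | succ k => exact (specs k).2.2.2
  have hmono : StrictMono g := strictMono_nat_of_lt_succ (fun k => by have := (specs k).1; omega)
  have hg0n : g 0 ≤ n := by have := spec0.2.1; omega
  have hvalk : ∀ k, S (g k) ≤ S (g 0) + k := by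
    intro k
    induction k with
    | zero => simp
    | succ k ih =>
      have h1 := (specs k).2.2.1
      have h2 := hstep (g k)
      push_cast
      push_cast at ih
      linarith
  have hwin : ∀ k : ℕ, (k : ℝ) < d → g k < g 0 + n := by
    intro k hk
    by_contra hcon
    push_neg at hcon
    have hnle : S (g 0 + n) ≤ S (g k) := by
      rcases eq_or_lt_of_le hcon with h | h
      · rw [← h]
      · have : S (g 0 + n) < S (g k) := by
          have h3 : S (g k) = S (g k - n) + d := by
            have h2 : g k - n + n = g k := by omega
            have h5 := hper (g k - n); rw [h2] at h5; exact h5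
          have h4 : g 0 < g k - n := by omega
          have := hrec 0 (g k - n) h4
          rw [hper (g 0)]
          linarith
        exact this.le
    have h6 := hper (g 0)
    have h7 := hvalk k
    linarith
  refine ⟨fun k => g k % n, ?_, ?_⟩
  · intro k hk
    have hkd : (k : ℝ) < d := by
      have : (k : ℝ) + 1 ≤ K := by exact_mod_cast Nat.succ_le_of_lt hk
      linarith
    have hwink := hwin k hkd
    refine ⟨Nat.mod_lt _ hn, ?_⟩
    show ∀ t, g k % n < t → S (g k % n) < S t
    by_cases h : g k < n
    · rw [Nat.mod_eq_of_lt h]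
      exact hrec k
    · push_neg at h
      have hlt2 : g k - n < n := by omega
      have hmod : g k % n = g k - n := by
        rw [Nat.mod_eq_sub_mod h, Nat.mod_eq_of_lt hlt2]
      rw [hmod]
      intro u hu
      have h2 : g k - n + n = g k := by omega
      have h5 := hper (g k - n); rw [h2] at h5
      have h6 : g k < u + n := by omega
      have := hrec k (u + n) h6
      rw [hper u] at this
      linarith
  · intro k1 hk1 k2 hk2 heq
    by_contra hne
    wlog hlt : k1 < k2 generalizing k1 k2
    · exact this k2 hk2 k1 hk1 heq.symm (Ne.symm hne) (by omega)
    have hglt : g k1 < g k2 := hmono hlt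
    have hd1 : (k1 : ℝ) < d := by
      have : (k1 : ℝ) + 1 ≤ K := by exact_mod_cast Nat.succ_le_of_lt hk1
      linarith
    have hd2 : (k2 : ℝ) < d := by
      have : (k2 : ℝ) + 1 ≤ K := by exact_mod_cast Nat.succ_le_of_lt hk2
      linarith
    have hw1 : g 0 ≤ g k1 := hmono.le_iff_le.mpr (Nat.zero_le _)
    have hw2 : g k2 < g 0 + n := hwin k2 hd2
    have hmodeq : g k1 ≡ g k2 [MOD n] := heq
    have hdvd : n ∣ g k2 - g k1 := (Nat.modEq_iff_dvd' hglt.le).mp hmodeq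
    have := Nat.le_of_dvd (by omega) hdvd
    omega


def rotSeq (n : ℕ) (sh : Fin n) (x : Fin n → ℤ) : Fin n → ℤ := fun i => x (i + sh)

def GoodPred (n : ℕ) (μ : ℝ) (x : Fin n → ℤ) : Prop :=
  ∀ j, 1 ≤ j → j ≤ n →
    μ * j < ((∑ i ∈ Finset.univ.filter (fun i : Fin n => (i : ℕ) < j), x i : ℤ) : ℝ)

lemma sum_pm (p q n : ℕ) (hn : n = p + q) (x : Fin n → ℤ)
    (hx : ∀ i, x i = 1 ∨ x i = -1)
    (hxp : (Finset.univ.filter (fun i => x i = 1)).card = p) :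
    ∑ i : Fin n, x i = (p : ℤ) - q := by
  classical
  rw [← Finset.sum_filter_add_sum_filter_not Finset.univ (fun i => x i = 1)]
  have h1 : ∑ i ∈ Finset.univ.filter (fun i => x i = 1), x i = (p : ℤ) := by
    rw [Finset.sum_congr rfl (fun i hi => (Finset.mem_filter.mp hi).2)]
    simp [hxp]
  have h2 : ∑ i ∈ Finset.univ.filter (fun i => ¬ x i = 1), x i = -(q : ℤ) := by
    have : ∀ i ∈ Finset.univ.filter (fun i => ¬ x i = 1), x i = -1 := by
      intro i hi
      rcases hx i with h | h
      · exact absurd h (Finset.mem_filter.mp hi).2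
      · exact h
    rw [Finset.sum_congr rfl this]
    have hcard : (Finset.univ.filter (fun i => ¬ x i = 1)).card = q := by
      have := Finset.card_filter_add_card_filter_not (s := (Finset.univ : Finset (Fin n)))
        (p := fun i => x i = 1)
      simp only [Finset.card_univ, Fintype.card_fin] at this
      omega
    simp [hcard]
  rw [h1, h2]; ring
lemma sum_filter_lt_eq (n : ℕ) (hn0 : 0 < n) (j : ℕ) (hj : j ≤ n) (g : Fin n → ℤ) :
    ∑ i ∈ Finset.univ.filter (fun i : Fin n => (i : ℕ) < j), g i
      = ∑ i ∈ Finset.range j, g ⟨i % n, Nat.mod_lt i hn0⟩ := by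
  classical
  refine Finset.sum_bij' (fun (i : Fin n) _ => (i : ℕ)) (fun k hk => ⟨k % n, Nat.mod_lt k hn0⟩)
    ?_ ?_ ?_ ?_ ?_
  · intro i hi
    simpa using (Finset.mem_filter.mp hi).2
  · intro k hk
    simp only [Finset.mem_filter, Finset.mem_univ, true_and]
    have hk' := Finset.mem_range.mp hk
    simpa [Nat.mod_eq_of_lt (lt_of_lt_of_le hk' hj)] using hk'
  · intro i hi
    have : (i : ℕ) % n = (i : ℕ) := Nat.mod_eq_of_lt i.isLt
    exact Fin.ext this
  · intro k hk
    have hk' := Finset.mem_range.mp hk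
    simp [Nat.mod_eq_of_lt (lt_of_lt_of_le hk' hj)]
  · intro i hi
    congr 1
    exact Fin.ext (Nat.mod_eq_of_lt i.isLt).symm






lemma key_lemma (p q n : ℕ) (hn : n = p + q) (hq : q ≠ 0) (μ : ℝ) (hμ1 : μ < 1)
    (x : Fin n → ℤ) (hx : ∀ i, x i = 1 ∨ x i = -1)
    (hxp : (Finset.univ.filter (fun i => x i = 1)).card = p) :
    ((p : ℤ) - ⌊(1 + μ) / (1 - μ) * q⌋).toNat
      ≤ (Finset.univ.filter (fun sh : Fin n => GoodPred n μ (rotSeq n sh x))).card := by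
  classical
  set r : ℝ := (1 + μ) / (1 - μ) with hr
  by_cases hpos : (p : ℤ) - ⌊r * q⌋ ≤ 0
  · simp [Int.toNat_of_nonpos hpos]
  push_neg at hpos
  have hn0 : 0 < n := by omega
  have h1μ : (0 : ℝ) < 1 - μ := by linarith
  have hrq : r * q < p := by
    have h1 : ⌊r * q⌋ < (p : ℤ) := by omega
    have := Int.floor_lt.mp h1
    exact_mod_cast this
  set F : ℕ → ℝ := fun i => ((x ⟨i % n, Nat.mod_lt i hn0⟩ : ℤ) : ℝ) with hF
  set S : ℕ → ℝ := fun j => ((∑ i ∈ Finset.range j, F i) - μ * j) / (1 - μ) with hS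
  set d : ℝ := ((p : ℝ) - q - μ * n) / (1 - μ) with hddef
  have hdr : d = (p : ℝ) - r * q := by
    rw [hddef, hr]
    rw [div_eq_iff (ne_of_gt h1μ)]
    have hnc : (n : ℝ) = (p : ℝ) + q := by push_cast [hn]; ring
    rw [hnc]
    field_simp
    ring
  have hd : 0 < d := by rw [hdr]; linarith
  have hstep : ∀ j, S (j + 1) ≤ S j + 1 := by
    intro j
    have hFle : F j ≤ 1 := by
      rcases hx ⟨j % n, Nat.mod_lt j hn0⟩ with h | h <;> simp [hF, h]
    have hkey : S (j + 1) - (S j + 1) = (F j - 1) / (1 - μ) := by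
      rw [hS]
      simp only
      rw [Finset.sum_range_succ]
      push_cast
      field_simp
      ring
    have : (F j - 1) / (1 - μ) ≤ 0 :=
      div_nonpos_of_nonpos_of_nonneg (by linarith) (le_of_lt h1μ)
    linarith
  have hFper : ∀ i, F (i + n) = F i := by
    intro i; simp only [hF, Nat.add_mod_right]
  have hbase : ∑ i ∈ Finset.range n, F i = (p : ℝ) - q := by
    have h1 : ∑ i ∈ Finset.range n, F i = ∑ i : Fin n, ((x i : ℤ) : ℝ) := by
      rw [← Fin.sum_univ_eq_sum_range (fun i => F i) n]
      refine Finset.sum_congr rfl ?_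
      intro i _
      simp only [hF]
      congr 1
      exact congrArg x (Fin.ext (Nat.mod_eq_of_lt i.isLt))
    rw [h1, ← Int.cast_sum, sum_pm p q n hn x hx hxp]
    push_cast
    ring
  have hsumper : ∀ j, ∑ i ∈ Finset.range (j + n), F i
      = (∑ i ∈ Finset.range j, F i) + ((p : ℝ) - q) := by
    intro j
    induction j with
    | zero => simpa using hbase
    | succ j ih =>
      have h2 : j + 1 + n = (j + n) + 1 := by omega
      rw [h2, Finset.sum_range_succ, ih, hFper, Finset.sum_range_succ]
      ring
  have hper : ∀ j, S (j + n) = S j + d := by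
    intro j
    rw [hS]
    simp only
    rw [hsumper j, hddef]
    push_cast
    field_simp
    ring
  set K : ℕ := ((p : ℤ) - ⌊r * q⌋).toNat with hKdef
  have hKR : (K : ℝ) = (p : ℝ) - (⌊r * q⌋ : ℤ) := by
    have h1 : ((K : ℤ) : ℝ) = (((p : ℤ) - ⌊r * q⌋ : ℤ) : ℝ) := by
      rw [hKdef, Int.toNat_of_nonneg (le_of_lt hpos)]
    push_cast at h1 ⊢
    linarith
  have hKlt : (K : ℝ) < d + 1 := by
    rw [hKR, hdr]
    have := Int.lt_floor_add_one (r * q)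
    linarith
  obtain ⟨f, hf, hinj⟩ := record_chain S n hn0 d hd hstep hper K hKlt
  -- membership: each record gives a good shift
  have hgood : ∀ k, k < K → ∀ h : f k < n, GoodPred n μ (rotSeq n ⟨f k, h⟩ x) := by
    intro k hk h
    intro j hj1 hjn
    set s : ℕ := f k with hs
    have hrec := (hf k hk).2
    have hSlt : S s < S (s + j) := hrec (s + j) (by omega)
    -- rewrite the sum
    rw [sum_filter_lt_eq n hn0 j hjn]
    have hsum1 : ∑ i ∈ Finset.range j, rotSeq n (⟨s, h⟩ : Fin n) x ⟨i % n, Nat.mod_lt i hn0⟩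
        = ∑ i ∈ Finset.range j, (x ⟨(s + i) % n, Nat.mod_lt _ hn0⟩ : ℤ) := by
      refine Finset.sum_congr rfl ?_
      intro i _
      show x (⟨i % n, Nat.mod_lt i hn0⟩ + ⟨s, h⟩) = _
      congr 1
      apply Fin.ext
      show (i % n + s) % n = (s + i) % n
      rw [Nat.mod_add_mod, Nat.add_comm]
    rw [hsum1]
    have hsum2 : ∑ i ∈ Finset.range (s + j), F i - ∑ i ∈ Finset.range s, F i
        = ∑ i ∈ Finset.range j, ((x ⟨(s + i) % n, Nat.mod_lt _ hn0⟩ : ℤ) : ℝ) := by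
      rw [← Finset.sum_Ico_eq_sub _ (by omega : s ≤ s + j),
        Finset.sum_Ico_eq_sum_range]
      simp only [Nat.add_sub_cancel_left]
      rfl
    have hSdiff : S (s + j) - S s
        = ((∑ i ∈ Finset.range j, ((x ⟨(s + i) % n, Nat.mod_lt _ hn0⟩ : ℤ) : ℝ)) - μ * j)
            / (1 - μ) := by
      rw [hS]
      simp only
      rw [← hsum2]
      push_cast
      field_simp
      ring
    have hfin : 0 < ((∑ i ∈ Finset.range j, ((x ⟨(s + i) % n, Nat.mod_lt _ hn0⟩ : ℤ) : ℝ))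
        - μ * j) / (1 - μ) := by rw [← hSdiff]; linarith
    have := (div_pos_iff.mp hfin)
    rcases this with ⟨h1, _⟩ | ⟨_, h2⟩
    · push_cast at h1 ⊢
      linarith
    · linarith
  -- injection into the filter
  have hcard : (Finset.range K).card
      ≤ (Finset.univ.filter (fun sh : Fin n => GoodPred n μ (rotSeq n sh x))).card := by
    apply Finset.card_le_card_of_injOn
      (f := fun k => if h : f k < n then (⟨f k, h⟩ : Fin n) else ⟨0, hn0⟩)
    · intro k hk
      have hk' := Finset.mem_range.mp hk
      have hlt := (hf k hk').1
      simp only [dif_pos hlt, Finset.mem_coe]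
      simp only [Finset.mem_filter, Finset.mem_univ, true_and]
      exact hgood k hk' hlt
    · intro k1 hk1 k2 hk2 heq
      have hk1' := Finset.mem_range.mp (Finset.mem_coe.mp hk1)
      have hk2' := Finset.mem_range.mp (Finset.mem_coe.mp hk2)
      have h1 := (hf k1 hk1').1
      have h2 := (hf k2 hk2').1
      simp only at heq
      rw [dif_pos h1, dif_pos h2] at heq
      exact hinj k1 hk1' k2 hk2' (by simpa using congrArg Fin.val heq)
  simpa using hcard






/-- The number of sequences `x : Fin n → {-1,+1}` with exactly `p` entries `+1` and
`q = n - p ≠ 0` entries `-1` all of whose initial partial sums `∑_{i=1}^j xᵢ` strictly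
exceed `μ j` is at least `(p - ⌊(1+μ)/(1-μ) q⌋) / n * C(n, p)`. -/
theorem good_sequences_count
    (p q n : ℕ) (hn : n = p + q) (hq : q ≠ 0)
    (μ : ℝ) (hμ0 : 0 < μ) (hμ1 : μ ≤ ((p : ℝ) - q) / ((p : ℝ) + q)) :
    ((p : ℝ) - ⌊(1 + μ) / (1 - μ) * q⌋) / n * (n.choose p) ≤
      (({x : Fin n → ℤ |
          (∀ i, x i = 1 ∨ x i = -1) ∧
          (Finset.univ.filter (fun i : Fin n => x i = 1)).card = p ∧
          ∀ j, 1 ≤ j → j ≤ n →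
            μ * j <
              ((∑ i ∈ Finset.univ.filter (fun i : Fin n => (i : ℕ) < j), x i : ℤ) : ℝ)}).ncard
        : ℝ) := by
  classical
  have hn0 : 0 < n := by omega
  have hq0 : (0 : ℝ) < q := by
    have : 0 < q := Nat.pos_of_ne_zero hq
    exact_mod_cast this
  have hpq : (0 : ℝ) < (p : ℝ) + q := by positivity
  have hμlt1 : μ < 1 := by
    apply lt_of_le_of_lt hμ1
    rw [div_lt_one hpq]
    linarith
  haveI : NeZero n := ⟨by omega⟩
  set Ω : Finset (Fin n → ℤ) :=
    (Finset.univ.powersetCard p).image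
      (fun A : Finset (Fin n) => fun i => if i ∈ A then (1 : ℤ) else -1) with hΩ
  have hΩcard : Ω.card = n.choose p := by
    rw [hΩ, Finset.card_image_of_injOn, Finset.card_powersetCard, Finset.card_univ,
      Fintype.card_fin]
    intro A _ B _ hAB
    ext i
    have h := congrFun hAB i
    by_cases hiA : i ∈ A <;> by_cases hiB : i ∈ B <;>
      simp [hiA, hiB] at h ⊢
  have hΩmem : ∀ x : Fin n → ℤ, x ∈ Ω ↔
      ((∀ i, x i = 1 ∨ x i = -1) ∧
        (Finset.univ.filter (fun i => x i = 1)).card = p) := by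
    intro x
    constructor
    · intro hx
      rw [hΩ, Finset.mem_image] at hx
      obtain ⟨A, hA, rfl⟩ := hx
      constructor
      · intro i; by_cases h : i ∈ A <;> simp [h]
      · have hAe : Finset.univ.filter (fun i => (if i ∈ A then (1 : ℤ) else -1) = 1) = A := by
          ext i; by_cases h : i ∈ A <;> simp [h]
        rw [hAe]
        exact (Finset.mem_powersetCard.mp hA).2
    · rintro ⟨hx, hp⟩
      rw [hΩ, Finset.mem_image]
      refine ⟨Finset.univ.filter (fun i => x i = 1), ?_, ?_⟩
      · exact Finset.mem_powersetCard.mpr ⟨Finset.subset_univ _, hp⟩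
      · funext i
        by_cases h : x i = 1
        · simp [h]
        · rcases hx i with h' | h'
          · exact absurd h' h
          · simp [h, h']
  have hrotΩ : ∀ (sh : Fin n) (x : Fin n → ℤ), x ∈ Ω → rotSeq n sh x ∈ Ω := by
    intro sh x hx
    rw [hΩmem] at hx ⊢
    obtain ⟨h1, h2⟩ := hx
    refine ⟨fun i => h1 _, ?_⟩
    have hbij : (Finset.univ.filter (fun i : Fin n => rotSeq n sh x i = 1)).card
        = (Finset.univ.filter (fun i : Fin n => x i = 1)).card := by
      apply Finset.card_bij' (fun i _ => i + sh) (fun i _ => i - sh)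
      · intro i hi
        simp only [Finset.mem_filter, Finset.mem_univ, true_and] at hi ⊢
        exact hi
      · intro i hi
        simp only [Finset.mem_filter, Finset.mem_univ, true_and] at hi ⊢
        show x (i - sh + sh) = 1
        rwa [sub_add_cancel]
      · intro i _
        simp [add_sub_cancel_right]
      · intro i _
        simp [sub_add_cancel]
    rw [hbij, h2]
  have hrotrot : ∀ (sh : Fin n) (x : Fin n → ℤ), rotSeq n sh (rotSeq n (-sh) x) = x := by
    intro sh x
    funext i
    show x (i + sh + -sh) = x i
    congr 1
    simp [add_assoc]
  have hrotrot' : ∀ (sh : Fin n) (x : Fin n → ℤ), rotSeq n (-sh) (rotSeq n sh x) = x := by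
    intro sh x
    funext i
    show x (i + -sh + sh) = x i
    congr 1
    simp [add_assoc]
  have hshift : ∀ sh : Fin n,
      (Ω.filter (fun x => GoodPred n μ (rotSeq n sh x))).card
        = (Ω.filter (fun x => GoodPred n μ x)).card := by
    intro sh
    apply Finset.card_bij' (fun x _ => rotSeq n sh x) (fun y _ => rotSeq n (-sh) y)
    · intro x hx
      rw [Finset.mem_filter] at hx ⊢
      exact ⟨hrotΩ sh x hx.1, hx.2⟩
    · intro y hy
      rw [Finset.mem_filter] at hy ⊢
      refine ⟨hrotΩ (-sh) y hy.1, ?_⟩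
      rw [hrotrot]
      exact hy.2
    · intro x _
      exact hrotrot' sh x
    · intro y _
      exact hrotrot sh y
  have hswap : ∑ x ∈ Ω,
        (Finset.univ.filter (fun sh : Fin n => GoodPred n μ (rotSeq n sh x))).card
      = ∑ sh : Fin n, (Ω.filter (fun x => GoodPred n μ (rotSeq n sh x))).card := by
    simp_rw [Finset.card_filter]
    exact Finset.sum_comm
  set K : ℕ := ((p : ℤ) - ⌊(1 + μ) / (1 - μ) * q⌋).toNat with hK
  set G : ℕ := (Ω.filter (fun x => GoodPred n μ x)).card with hG
  have hcount : n.choose p * K ≤ n * G := by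
    calc n.choose p * K = ∑ _x ∈ Ω, K := by
          rw [Finset.sum_const, hΩcard, smul_eq_mul]
      _ ≤ ∑ x ∈ Ω,
            (Finset.univ.filter (fun sh : Fin n => GoodPred n μ (rotSeq n sh x))).card := by
          apply Finset.sum_le_sum
          intro x hx
          rw [hΩmem] at hx
          exact key_lemma p q n hn hq μ hμlt1 x hx.1 hx.2
      _ = ∑ sh : Fin n, (Ω.filter (fun x => GoodPred n μ (rotSeq n sh x))).card := hswap
      _ = ∑ _sh : Fin n, G := Finset.sum_congr rfl (fun sh _ => hshift sh)
      _ = n * G := by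
          rw [Finset.sum_const, Finset.card_univ, Fintype.card_fin, smul_eq_mul]
  have hseteq : {x : Fin n → ℤ |
          (∀ i, x i = 1 ∨ x i = -1) ∧
          (Finset.univ.filter (fun i : Fin n => x i = 1)).card = p ∧
          ∀ j, 1 ≤ j → j ≤ n →
            μ * j <
              ((∑ i ∈ Finset.univ.filter (fun i : Fin n => (i : ℕ) < j), x i : ℤ) : ℝ)}
      = ↑(Ω.filter (fun x => GoodPred n μ x)) := by
    ext x
    rw [Finset.mem_coe, Finset.mem_filter, hΩmem]
    simp only [Set.mem_setOf_eq, Finset.coe_filter, hΩmem, GoodPred]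
    tauto
  rw [hseteq, Set.ncard_coe_finset, ← hG]
  have hKR : (p : ℝ) - (⌊(1 + μ) / (1 - μ) * q⌋ : ℤ) ≤ (K : ℝ) := by
    have h1 : ((p : ℤ) - ⌊(1 + μ) / (1 - μ) * q⌋) ≤ (K : ℤ) := Int.self_le_toNat _
    exact_mod_cast h1
  have hcountR : (n.choose p : ℝ) * K ≤ (n : ℝ) * G := by exact_mod_cast hcount
  have hnR : (0 : ℝ) < n := by exact_mod_cast hn0
  rw [div_mul_eq_mul_div, div_le_iff₀ hnR]
  have hchoose : (0 : ℝ) ≤ (n.choose p : ℝ) := by positivity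
  nlinarith [hKR, hcountR]
end

section
/- Let $f(x) := \lfloor 3\sqrt{x \ln \ln(x+3)} \rfloor + 100$ and, for a positive integer $n$, let $A := 2\left(\frac{5}{2}\sqrt{\frac{n}{2} \ln \ln \frac{n+3}{2}} + 90\right)$. Then the number of sequences $x_1, \dots, x_n \in \{-1, +1\}$ such that (i) for every even integer $2i$ with $0 < 2i \leq n$ one has $\sum_{j=1}^{2i} x_j < 2 f(i)$, and (ii) $\left|\sum_{j=1}^{n} x_j\right| \leq A$, is at least $2^{n-1}$. -/
/-- `f(x) = ⌊3√(x ln ln (x+3))⌋ + 100`. -/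
noncomputable def lilBound (x : ℝ) : ℕ :=
  ⌊3 * Real.sqrt (x * Real.log (Real.log (x + 3)))⌋₊ + 100

/-- `A = 2 ((5/2)√((n/2) ln ln ((n+3)/2)) + 90)`. -/
noncomputable def endWindow (n : ℕ) : ℝ :=
  2 * ((5 / 2) * Real.sqrt ((n / 2 : ℝ) * Real.log (Real.log ((n + 3 : ℝ) / 2))) + 90)

namespace PB

open Finset Real

variable {n : ℕ}



def stp (b : Bool) : ℤ := if b then 1 else -1

lemma stp_le_one (b : Bool) : stp b ≤ 1 := by cases b <;> simp [stp]
lemma neg_one_le_stp (b : Bool) : -1 ≤ stp b := by cases b <;> simp [stp]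
lemma stp_not (b : Bool) : stp (!b) = - stp b := by cases b <;> simp [stp]

def psum (b : Fin n → Bool) (m : ℕ) : ℤ :=
  ∑ j ∈ Finset.univ.filter (fun j : Fin n => (j : ℕ) < m), stp (b j)

lemma filt_zero : (Finset.univ.filter (fun j : Fin n => (j : ℕ) < 0)) = ∅ := by
  simp

lemma filt_succ {m : ℕ} (h : m < n) :
    (Finset.univ.filter (fun j : Fin n => (j : ℕ) < m + 1)) =
      insert ⟨m, h⟩ (Finset.univ.filter (fun j : Fin n => (j : ℕ) < m)) := by
  ext j
  simp only [mem_filter, mem_univ, true_and, mem_insert]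
  constructor
  · intro h1
    rcases Nat.lt_succ_iff_lt_or_eq.1 h1 with h2 | h2
    · exact Or.inr h2
    · exact Or.inl (Fin.ext h2)
  · rintro (rfl | h2)
    · exact Nat.lt_succ_self m
    · exact Nat.lt_succ_of_lt h2

lemma mem_filt {m : ℕ} {j : Fin n} :
    j ∈ (Finset.univ.filter (fun j : Fin n => (j : ℕ) < m)) ↔ (j : ℕ) < m := by simp

lemma filt_of_le {m : ℕ} (h : n ≤ m) :
    (Finset.univ.filter (fun j : Fin n => (j : ℕ) < m)) = Finset.univ := by
  apply filter_true_of_mem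
  intro j _
  exact lt_of_lt_of_le j.isLt h

lemma psum_zero (b : Fin n → Bool) : psum b 0 = 0 := by simp [psum, filt_zero]

lemma psum_succ (b : Fin n → Bool) {m : ℕ} (h : m < n) :
    psum b (m + 1) = psum b m + stp (b ⟨m, h⟩) := by
  rw [psum, psum, filt_succ h, Finset.sum_insert (by simp), add_comm]

lemma psum_succ_of_ge (b : Fin n → Bool) {m : ℕ} (h : n ≤ m) :
    psum b (m + 1) = psum b m := by
  rw [psum, psum, filt_of_le h, filt_of_le (le_trans h (Nat.le_succ m))]

lemma card_filt {m : ℕ} (h : m ≤ n) :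
    (Finset.univ.filter (fun j : Fin n => (j : ℕ) < m)).card = m := by
  induction m with
  | zero => simp [filt_zero]
  | succ k ih =>
      rw [filt_succ (lt_of_lt_of_le (Nat.lt_succ_self k) h),
        Finset.card_insert_of_notMem (by simp), ih (le_of_lt h)]

lemma abs_psum_le (b : Fin n → Bool) (m : ℕ) : |psum b m| ≤ m := by
  induction m with
  | zero => simp [psum_zero]
  | succ k ih =>
      rcases lt_or_ge k n with h | h
      · rw [psum_succ b h]
        calc |psum b k + stp (b ⟨k, h⟩)| ≤ |psum b k| + |stp (b ⟨k, h⟩)| := abs_add_le _ _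
        _ ≤ k + 1 := by
            refine add_le_add ih ?_
            rcases (b ⟨k, h⟩).eq_false_or_eq_true with h' | h' <;> simp [h', stp]
        _ = ((k+1 : ℕ) : ℤ) := by push_cast; ring
      · rw [psum_succ_of_ge b h]
        exact le_trans ih (by exact_mod_cast Nat.le_succ k)


open scoped Classical in
lemma chernoff (n M : ℕ) (hM : 0 < M) (hMn : M ≤ n) (t : ℝ) (ht : 0 < t) :
    ((Finset.univ.filter fun b : Fin n → Bool => t ≤ ((psum b M : ℤ) : ℝ)).card : ℝ)
      ≤ 2 ^ n * Real.exp (-(t ^ 2) / (2 * M)) := by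
  set l : ℝ := t / M with hl
  have hMR : (0:ℝ) < M := by exact_mod_cast hM
  have hlpos : 0 < l := div_pos ht hMR
  have key : ∑ b : Fin n → Bool, Real.exp (l * ((psum b M : ℤ) : ℝ))
      = (Real.exp l + Real.exp (-l)) ^ ((Finset.univ.filter fun j : Fin n => (j:ℕ) < M).card)
        * 2 ^ ((Finset.univ.filter fun j : Fin n => ¬ (j:ℕ) < M).card) := by
    have h1 : ∀ b : Fin n → Bool, Real.exp (l * ((psum b M : ℤ) : ℝ))
        = ∏ j : Fin n, (if (j : ℕ) < M then Real.exp (l * (stp (b j) : ℝ)) else 1) := by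
      intro b
      rw [← Finset.prod_filter, ← Real.exp_sum]
      congr 1
      rw [psum]
      push_cast
      rw [Finset.mul_sum]
    calc ∑ b : Fin n → Bool, Real.exp (l * ((psum b M : ℤ) : ℝ))
        = ∑ b : Fin n → Bool, ∏ j : Fin n,
            (if (j : ℕ) < M then Real.exp (l * (stp (b j) : ℝ)) else 1) :=
          Finset.sum_congr rfl (fun b _ => h1 b)
      _ = ∏ j : Fin n, ∑ c : Bool, (if (j : ℕ) < M then Real.exp (l * (stp c : ℝ)) else 1) := by
          rw [Finset.prod_univ_sum (fun _ : Fin n => (Finset.univ : Finset Bool))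
            (fun j c => if (j:ℕ) < M then Real.exp (l * (stp c : ℝ)) else 1),
            Fintype.piFinset_univ]
      _ = ∏ j : Fin n, (if (j : ℕ) < M then Real.exp l + Real.exp (-l) else 2) := by
          refine Finset.prod_congr rfl (fun j _ => ?_)
          by_cases h : (j : ℕ) < M
          · simp only [if_pos h, Fintype.sum_bool, stp]
            norm_num
          · simp [if_neg h]
      _ = _ := by
          rw [Finset.prod_ite, Finset.prod_const, Finset.prod_const]
  -- cosh bound
  have cosh2 : Real.exp l + Real.exp (-l) ≤ 2 * Real.exp (l ^ 2 / 2) := by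
    have h := Real.cosh_le_exp_half_sq l
    rw [Real.cosh_eq] at h
    linarith
  have hexp_nonneg : (0:ℝ) ≤ Real.exp l + Real.exp (-l) := by positivity
  ·
    have hcards : (Finset.univ.filter fun j : Fin n => (j:ℕ) < M).card = M := card_filt hMn
    have hcardn : (Finset.univ.filter fun j : Fin n => ¬ (j:ℕ) < M).card = n - M := by
      have := Finset.card_filter_add_card_filter_not (s := (Finset.univ : Finset (Fin n)))
        (p := fun j : Fin n => (j:ℕ) < M)
      simp only [Finset.card_univ, Fintype.card_fin] at this
      omega
    have step1 : ((Finset.univ.filter fun b : Fin n → Bool => t ≤ ((psum b M : ℤ) : ℝ)).card : ℝ)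
        * Real.exp (l * t) ≤ ∑ b : Fin n → Bool, Real.exp (l * ((psum b M : ℤ) : ℝ)) := by
      calc ((Finset.univ.filter fun b : Fin n → Bool => t ≤ ((psum b M : ℤ) : ℝ)).card : ℝ)
            * Real.exp (l * t)
          = ∑ _b ∈ (Finset.univ.filter fun b : Fin n → Bool => t ≤ ((psum b M : ℤ) : ℝ)),
              Real.exp (l * t) := by rw [Finset.sum_const, nsmul_eq_mul]
        _ ≤ ∑ b ∈ (Finset.univ.filter fun b : Fin n → Bool => t ≤ ((psum b M : ℤ) : ℝ)),
              Real.exp (l * ((psum b M : ℤ) : ℝ)) := by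
            refine Finset.sum_le_sum (fun b hb => ?_)
            have hb' := (Finset.mem_filter.1 hb).2
            exact Real.exp_le_exp.2 (mul_le_mul_of_nonneg_left hb' hlpos.le)
        _ ≤ ∑ b : Fin n → Bool, Real.exp (l * ((psum b M : ℤ) : ℝ)) :=
            Finset.sum_le_sum_of_subset_of_nonneg (Finset.filter_subset _ _)
              (fun b _ _ => (Real.exp_pos _).le)
    have step2 : ∑ b : Fin n → Bool, Real.exp (l * ((psum b M : ℤ) : ℝ))
        ≤ 2 ^ n * Real.exp (M * (l ^ 2 / 2)) := by
      rw [key, hcards, hcardn]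
      calc (Real.exp l + Real.exp (-l)) ^ M * 2 ^ (n - M)
          ≤ (2 * Real.exp (l ^ 2 / 2)) ^ M * 2 ^ (n - M) := by
            refine mul_le_mul_of_nonneg_right (pow_le_pow_left₀ hexp_nonneg cosh2 M) (by positivity)
        _ = 2 ^ n * Real.exp (M * (l ^ 2 / 2)) := by
            rw [mul_pow, ← Real.exp_nat_mul]
            rw [mul_comm ((2:ℝ)^M) _, mul_assoc, ← pow_add]
            rw [Nat.add_sub_cancel' hMn]
            ring
    have final : ((Finset.univ.filter fun b : Fin n → Bool => t ≤ ((psum b M : ℤ) : ℝ)).card : ℝ)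
        ≤ 2 ^ n * Real.exp (M * (l ^ 2 / 2)) * Real.exp (-(l * t)) := by
      have h2 : ((Finset.univ.filter fun b : Fin n → Bool => t ≤ ((psum b M : ℤ) : ℝ)).card : ℝ)
          = (((Finset.univ.filter fun b : Fin n → Bool => t ≤ ((psum b M : ℤ) : ℝ)).card : ℝ)
            * Real.exp (l * t)) * Real.exp (-(l * t)) := by
        rw [mul_assoc, ← Real.exp_add]
        simp
      rw [h2]
      exact mul_le_mul_of_nonneg_right (le_trans step1 step2) (Real.exp_pos _).le
    calc ((Finset.univ.filter fun b : Fin n → Bool => t ≤ ((psum b M : ℤ) : ℝ)).card : ℝ)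
        ≤ 2 ^ n * Real.exp (M * (l ^ 2 / 2)) * Real.exp (-(l * t)) := final
      _ = 2 ^ n * Real.exp (-(t ^ 2) / (2 * M)) := by
          rw [mul_assoc, ← Real.exp_add]
          congr 2
          rw [hl]
          field_simp
          ring

def reflFn (b : Fin n → Bool) (T : ℕ) : Fin n → Bool :=
  fun j => if (j : ℕ) < T then b j else !(b j)

lemma reflFn_invol (b : Fin n → Bool) (T : ℕ) : reflFn (reflFn b T) T = b := by
  funext j
  by_cases h : (j : ℕ) < T <;> simp [reflFn, h]

lemma psum_reflFn_le (b : Fin n → Bool) (T m : ℕ) (h : m ≤ T) :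
    psum (reflFn b T) m = psum b m := by
  refine Finset.sum_congr rfl (fun j hj => ?_)
  have : (j : ℕ) < T := lt_of_lt_of_le (mem_filt.1 hj) h
  simp [reflFn, this]

lemma psum_reflFn_ge (b : Fin n → Bool) (T m : ℕ) (h : T ≤ m) :
    psum (reflFn b T) m = 2 * psum b T - psum b m := by
  have hsub : (Finset.univ.filter (fun j : Fin n => (j : ℕ) < T))
      ⊆ (Finset.univ.filter (fun j : Fin n => (j : ℕ) < m)) := by
    intro j hj
    rw [mem_filt] at *
    omega
  have e1 := Finset.sum_sdiff (f := fun j => stp (reflFn b T j)) hsub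
  have e2 := Finset.sum_sdiff (f := fun j => stp (b j)) hsub
  have e3 : ∑ j ∈ (Finset.univ.filter (fun j : Fin n => (j : ℕ) < m)) \
        (Finset.univ.filter (fun j : Fin n => (j : ℕ) < T)), stp (reflFn b T j)
      = - ∑ j ∈ (Finset.univ.filter (fun j : Fin n => (j : ℕ) < m)) \
        (Finset.univ.filter (fun j : Fin n => (j : ℕ) < T)), stp (b j) := by
    rw [← Finset.sum_neg_distrib]
    refine Finset.sum_congr rfl (fun j hj => ?_)
    have hnot : ¬ (j : ℕ) < T := by
      have := (Finset.mem_sdiff.1 hj).2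
      simpa [mem_filt] using this
    simp [reflFn, hnot, stp_not]
  have e4 : ∑ j ∈ (Finset.univ.filter (fun j : Fin n => (j : ℕ) < T)), stp (reflFn b T j)
      = psum b T := psum_reflFn_le b T T le_rfl
  have hpr : psum (reflFn b T) m = ∑ j ∈ (Finset.univ.filter (fun j : Fin n => (j : ℕ) < m)) \
        (Finset.univ.filter (fun j : Fin n => (j : ℕ) < T)), stp (reflFn b T j)
      + ∑ j ∈ (Finset.univ.filter (fun j : Fin n => (j : ℕ) < T)), stp (reflFn b T j) := e1.symm
  have hpb : psum b m = ∑ j ∈ (Finset.univ.filter (fun j : Fin n => (j : ℕ) < m)) \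
        (Finset.univ.filter (fun j : Fin n => (j : ℕ) < T)), stp (b j)
      + psum b T := e2.symm
  rw [hpr, e3, e4]
  omega

open scoped Classical in
lemma tau_spec {M L : ℕ} (hMn : M ≤ n) (hL : 1 ≤ L) (b : Fin n → Bool)
    (hb : ∃ m, m ≤ M ∧ (L : ℤ) ≤ psum b m) :
    Nat.find hb ≤ M ∧ psum b (Nat.find hb) = L ∧ ∀ k < Nat.find hb, psum b k < L := by
  have hspec := Nat.find_spec hb
  have htM : Nat.find hb ≤ M := hspec.1
  have hmin : ∀ k < Nat.find hb, psum b k < L := by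
    intro k hk
    by_contra hcon
    push_neg at hcon
    exact Nat.find_min hb hk ⟨le_trans (le_of_lt hk) htM, hcon⟩
  refine ⟨htM, ?_, hmin⟩
  have htpos : 0 < Nat.find hb := by
    rcases Nat.eq_zero_or_pos (Nat.find hb) with h0 | h0
    · exfalso
      have := hspec.2
      rw [h0, psum_zero] at this
      have : (1 : ℤ) ≤ 0 := le_trans (by exact_mod_cast hL) this
      omega
    · exact h0
  obtain ⟨τ', hτ'⟩ : ∃ τ', Nat.find hb = τ' + 1 := ⟨Nat.find hb - 1, by omega⟩
  have hlt : psum b τ' < L := hmin τ' (by omega)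
  have hτ'n : τ' < n := by omega
  have hstep : psum b (τ' + 1) = psum b τ' + stp (b ⟨τ', hτ'n⟩) := psum_succ b hτ'n
  have h1 := stp_le_one (b ⟨τ', hτ'n⟩)
  have h2 := hspec.2
  rw [hτ'] at h2 ⊢
  omega

open scoped Classical in
lemma reflection (M L : ℕ) (hL : 1 ≤ L) (hMn : M ≤ n) :
    (Finset.univ.filter fun b : Fin n → Bool => ∃ m, m ≤ M ∧ (L : ℤ) ≤ psum b m).card
      ≤ 2 * (Finset.univ.filter fun b : Fin n → Bool => (L : ℤ) ≤ psum b M).card := by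
  set P : (Fin n → Bool) → Prop := fun b => ∃ m, m ≤ M ∧ (L : ℤ) ≤ psum b m with hP
  set g : (Fin n → Bool) → (Fin n → Bool) :=
    fun b => if hb : P b then reflFn b (Nat.find hb) else b with hg
  have hsplit : (Finset.univ.filter fun b : Fin n → Bool => P b)
      ⊆ (Finset.univ.filter fun b : Fin n → Bool => P b ∧ (L : ℤ) ≤ psum b M)
        ∪ (Finset.univ.filter fun b : Fin n → Bool => P b ∧ psum b M < L) := by
    intro b hb
    rw [Finset.mem_filter] at hb
    rcases le_or_gt (L : ℤ) (psum b M) with h | h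
    · exact Finset.mem_union_left _ (Finset.mem_filter.2 ⟨hb.1, hb.2, h⟩)
    · exact Finset.mem_union_right _ (Finset.mem_filter.2 ⟨hb.1, hb.2, h⟩)
  have h1 : (Finset.univ.filter fun b : Fin n → Bool => P b ∧ (L : ℤ) ≤ psum b M).card
      ≤ (Finset.univ.filter fun b : Fin n → Bool => (L : ℤ) ≤ psum b M).card := by
    apply Finset.card_le_card
    intro b hb
    rw [Finset.mem_filter] at *
    exact ⟨hb.1, hb.2.2⟩
  have h2 : (Finset.univ.filter fun b : Fin n → Bool => P b ∧ psum b M < L).card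
      ≤ (Finset.univ.filter fun b : Fin n → Bool => (L : ℤ) ≤ psum b M).card := by
    apply Finset.card_le_card_of_injOn g
    · -- maps to
      intro b hb
      rw [Finset.mem_coe, Finset.mem_filter] at hb
      obtain ⟨-, hbP, hbM⟩ := hb
      rw [Finset.mem_coe, Finset.mem_filter]
      refine ⟨Finset.mem_univ _, ?_⟩
      obtain ⟨htM, htEq, -⟩ := tau_spec hMn hL b hbP
      rw [hg]
      simp only [dif_pos hbP]
      rw [psum_reflFn_ge b (Nat.find hbP) M htM, htEq]
      omega
    · -- injective
      intro b1 hb1 b2 hb2 heq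
      rw [Finset.coe_filter, Set.mem_setOf_eq] at hb1 hb2
      have key : ∀ b, P b → psum b M < L → g (g b) = b := by
        intro b hbP hbM
        obtain ⟨htM, htEq, htmin⟩ := tau_spec hMn hL b hbP
        have hPg : P (reflFn b (Nat.find hbP)) := by
          refine ⟨Nat.find hbP, htM, ?_⟩
          rw [psum_reflFn_le b _ _ le_rfl, htEq]
        have hfind : Nat.find hPg = Nat.find hbP := by
          rw [Nat.find_eq_iff]
          constructor
          · refine ⟨htM, ?_⟩
            rw [psum_reflFn_le b _ _ le_rfl, htEq]
          · intro k hk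
            rintro ⟨hkM, hkL⟩
            rw [psum_reflFn_le b _ _ (le_of_lt hk)] at hkL
            exact absurd hkL (not_le.2 (htmin k hk))
        have : g b = reflFn b (Nat.find hbP) := by rw [hg]; simp only [dif_pos hbP]
        rw [this]
        have : g (reflFn b (Nat.find hbP)) = reflFn (reflFn b (Nat.find hbP)) (Nat.find hPg) := by
          rw [hg]; simp only [dif_pos hPg]
        rw [this, hfind, reflFn_invol]
      calc b1 = g (g b1) := (key b1 hb1.2.1 hb1.2.2).symm
        _ = g (g b2) := by rw [heq]
        _ = b2 := key b2 hb2.2.1 hb2.2.2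
  calc (Finset.univ.filter fun b : Fin n → Bool => P b).card
      ≤ (Finset.univ.filter fun b : Fin n → Bool => P b ∧ (L : ℤ) ≤ psum b M).card
        + (Finset.univ.filter fun b : Fin n → Bool => P b ∧ psum b M < L).card :=
        le_trans (Finset.card_le_card hsplit) (Finset.card_union_le _ _)
    _ ≤ 2 * (Finset.univ.filter fun b : Fin n → Bool => (L : ℤ) ≤ psum b M).card := by omega

lemma log3_ge_one : (1:ℝ) ≤ Real.log 3 := by
  rw [Real.le_log_iff_exp_le (by norm_num)]
  have := Real.exp_one_lt_d9
  linarith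

lemma loglog_nonneg {x : ℝ} (hx : 0 ≤ x) : 0 ≤ Real.log (Real.log (x + 3)) := by
  apply Real.log_nonneg
  calc (1:ℝ) ≤ Real.log 3 := log3_ge_one
    _ ≤ Real.log (x + 3) := Real.log_le_log (by norm_num) (by linarith)

lemma log_inner_pos {x : ℝ} (hx : 0 ≤ x) : 0 < Real.log (x + 3) :=
  lt_of_lt_of_le one_pos (le_trans log3_ge_one (Real.log_le_log (by norm_num) (by linarith)))

lemma loglog_mono {x y : ℝ} (hx : 0 ≤ x) (hxy : x ≤ y) :
    Real.log (Real.log (x + 3)) ≤ Real.log (Real.log (y + 3)) :=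
  Real.log_le_log (log_inner_pos hx) (Real.log_le_log (by linarith) (by linarith))

lemma lilBound_mono {x y : ℝ} (hx : 0 ≤ x) (hxy : x ≤ y) : lilBound x ≤ lilBound y := by
  unfold lilBound
  have h1 : 3 * Real.sqrt (x * Real.log (Real.log (x + 3)))
      ≤ 3 * Real.sqrt (y * Real.log (Real.log (y + 3))) := by
    apply mul_le_mul_of_nonneg_left _ (by norm_num)
    apply Real.sqrt_le_sqrt
    exact mul_le_mul hxy (loglog_mono hx hxy) (loglog_nonneg hx) (by linarith)
  exact Nat.add_le_add_right (Nat.floor_le_floor h1) 100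

lemma lilBound_ge (x : ℝ) : 3 * Real.sqrt (x * Real.log (Real.log (x + 3))) + 99
    ≤ (lilBound x : ℝ) := by
  unfold lilBound
  push_cast
  have := Nat.sub_one_lt_floor (3 * Real.sqrt (x * Real.log (Real.log (x + 3))))
  linarith

lemma exp_nat_lb (k : ℕ) : (2.7:ℝ) ^ k ≤ Real.exp k := by
  rw [← Real.exp_one_rpow (k:ℝ), Real.rpow_natCast]
  exact pow_le_pow_left₀ (by norm_num) (le_trans (by norm_num) Real.exp_one_gt_d9.le) k

lemma exp_neg25 : Real.exp (-25 : ℝ) ≤ 1e-9 := by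
  rw [Real.exp_neg]
  rw [show ((25:ℝ)) = ((25:ℕ):ℝ) by norm_num]
  have h := exp_nat_lb 25
  have h2 : (1e9 : ℝ) ≤ (2.7:ℝ) ^ (25:ℕ) := by norm_num
  have h3 : (0:ℝ) < 2.7 ^ (25:ℕ) := by positivity
  rw [show (1e-9 : ℝ) = (1e9)⁻¹ by norm_num]
  exact inv_anti₀ (by norm_num) (le_trans h2 h)

lemma exp_neg6 : Real.exp (-6 : ℝ) ≤ 1/387 := by
  rw [Real.exp_neg]
  rw [show ((6:ℝ)) = ((6:ℕ):ℝ) by norm_num]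
  have h := exp_nat_lb 6
  have h2 : (387 : ℝ) ≤ (2.7:ℝ) ^ (6:ℕ) := by norm_num
  rw [show (1/387 : ℝ) = (387:ℝ)⁻¹ by norm_num]
  exact inv_anti₀ (by norm_num) (le_trans h2 h)

lemma sq_le_imp {a b : ℝ} (ha : 0 ≤ a) (hb : 0 ≤ b) (h : a ^ 2 ≤ b ^ 2) : a ≤ b := by
  nlinarith

lemma exp_45 : Real.exp (4.5 : ℝ) ≤ 92 := by
  apply sq_le_imp (Real.exp_pos _).le (by norm_num)
  have hsq : Real.exp (4.5:ℝ) ^ 2 = Real.exp 9 := by rw [sq, ← Real.exp_add]; norm_num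
  rw [hsq]
  calc Real.exp (9:ℝ) = Real.exp ((9:ℕ):ℝ) := by norm_num
    _ ≤ Real.exp 1 ^ (9:ℕ) := by rw [← Real.exp_one_rpow ((9:ℕ):ℝ), Real.rpow_natCast]
    _ ≤ (2.7182818286:ℝ) ^ (9:ℕ) := pow_le_pow_left₀ (Real.exp_pos _).le Real.exp_one_lt_d9.le 9
    _ ≤ 92 ^ 2 := by norm_num

lemma exp_15 : Real.exp (1.5 : ℝ) ≤ 4.5 := by
  apply sq_le_imp (Real.exp_pos _).le (by norm_num)
  have hsq : Real.exp (1.5:ℝ) ^ 2 = Real.exp 3 := by rw [sq, ← Real.exp_add]; norm_num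
  rw [hsq]
  calc Real.exp (3:ℝ) = Real.exp ((3:ℕ):ℝ) := by norm_num
    _ ≤ Real.exp 1 ^ (3:ℕ) := by rw [← Real.exp_one_rpow ((3:ℕ):ℝ), Real.rpow_natCast]
    _ ≤ (2.7182818286:ℝ) ^ (3:ℕ) := pow_le_pow_left₀ (Real.exp_pos _).le Real.exp_one_lt_d9.le 3
    _ ≤ 4.5 ^ 2 := by norm_num

lemma loglog_ge_3half {x : ℝ} (hx : 92 ≤ x) : (1.5:ℝ) ≤ Real.log (Real.log x) := by
  have h1 : (4.5:ℝ) ≤ Real.log x := by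
    rw [Real.le_log_iff_exp_le (by linarith)]
    linarith [exp_45]
  rw [Real.le_log_iff_exp_le (by linarith)]
  linarith [exp_15]

lemma tele_eq : ∀ N : ℕ, 8 ≤ N →
    (∑ k ∈ Finset.Ico 8 N, (((k:ℝ) - 1)⁻¹ - (k:ℝ)⁻¹)) = 1/7 - ((N:ℝ) - 1)⁻¹ := by
  intro N
  induction N with
  | zero => omega
  | succ m ih =>
      intro h
      rcases Nat.lt_or_ge m 8 with hm | hm
      · have : m = 7 := by omega
        subst this
        norm_num
      · rw [Finset.sum_Ico_succ_top hm, ih hm]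
        have h1 : ((m:ℝ) - 1) ≠ 0 := by
          have : (8:ℝ) ≤ (m:ℝ) := by exact_mod_cast hm
          intro h'; nlinarith
        push_cast
        ring

lemma tele_le (N : ℕ) :
    (∑ k ∈ Finset.Ico 8 N, (((k:ℝ) - 1)⁻¹ - (k:ℝ)⁻¹)) ≤ 1/7 := by
  rcases Nat.lt_or_ge N 8 with h | h
  · rw [Finset.Ico_eq_empty (by omega)]
    norm_num
  · rw [tele_eq N h]
    have : (0:ℝ) < (N:ℝ) - 1 := by
      have : (8:ℝ) ≤ (N:ℝ) := by exact_mod_cast h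
      linarith
    have := inv_nonneg.2 this.le
    linarith

set_option maxRecDepth 100000 in
open scoped Classical in
lemma block_bound (n k : ℕ) (hn : 0 < n) :
    ((Finset.univ.filter fun b : Fin n → Bool =>
        ∃ m, m ≤ min (2 ^ (k + 2)) n ∧ ((2 * lilBound ((2:ℝ) ^ k) : ℕ) : ℤ) ≤ psum b m).card : ℝ)
      ≤ 2 ^ n * (2 * Real.exp (-(4 * Real.log (Real.log ((2:ℝ) ^ k + 3)) + 4900 / 2 ^ k))) := by
  set c : ℝ := Real.log (Real.log ((2:ℝ) ^ k + 3)) with hc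
  set L : ℕ := 2 * lilBound ((2:ℝ) ^ k) with hLdef
  set M : ℕ := min (2 ^ (k + 2)) n with hMdef
  have hM1 : 0 < M := lt_min (pow_pos (by norm_num) _) hn
  have hMn : M ≤ n := min_le_right _ _
  have hL1 : 1 ≤ L := by
    have : 100 ≤ lilBound ((2:ℝ) ^ k) := Nat.le_add_left 100 _
    omega
  have hcpos : 0 ≤ c := loglog_nonneg (by positivity)
  have h1 := reflection (n := n) M L hL1 hMn
  have hfe : (Finset.univ.filter fun b : Fin n → Bool => (L : ℤ) ≤ psum b M)
      = (Finset.univ.filter fun b : Fin n → Bool => ((L:ℕ):ℝ) ≤ ((psum b M : ℤ) : ℝ)) := by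
    apply Finset.filter_congr
    intro b _
    constructor
    · intro h; exact_mod_cast h
    · intro h; exact_mod_cast h
  have hLpos : (0:ℝ) < ((L:ℕ):ℝ) := by exact_mod_cast hL1
  have h2 := chernoff n M hM1 hMn ((L:ℕ):ℝ) hLpos
  -- lower bound on L
  have hLlb : 6 * Real.sqrt ((2:ℝ) ^ k * c) + 198 ≤ ((L:ℕ):ℝ) := by
    have := lilBound_ge ((2:ℝ) ^ k)
    rw [hLdef]
    push_cast
    linarith
  have hsqrt_nn : 0 ≤ Real.sqrt ((2:ℝ) ^ k * c) := Real.sqrt_nonneg _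
  have hLsq : 36 * ((2:ℝ) ^ k * c) + 39204 ≤ ((L:ℕ):ℝ) ^ 2 := by
    have hs : Real.sqrt ((2:ℝ) ^ k * c) ^ 2 = (2:ℝ) ^ k * c :=
      Real.sq_sqrt (by positivity)
    nlinarith [hLlb, hsqrt_nn]
  -- exponent comparison
  have hexp : Real.exp (-(((L:ℕ):ℝ) ^ 2) / (2 * M)) ≤ Real.exp (-(4 * c + 4900 / 2 ^ k)) := by
    apply Real.exp_le_exp.2
    rw [neg_div]
    rw [neg_le_neg_iff]
    have hMle : (M:ℝ) ≤ (2:ℝ) ^ (k + 2) := by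
      have : (M:ℕ) ≤ 2 ^ (k + 2) := min_le_left _ _
      calc (M:ℝ) ≤ ((2 ^ (k+2) : ℕ) : ℝ) := by exact_mod_cast this
        _ = (2:ℝ) ^ (k + 2) := by push_cast; ring
    have hMpos : (0:ℝ) < (M:ℝ) := by exact_mod_cast hM1
    have hstep : (36 * ((2:ℝ) ^ k * c) + 39204) / (2 * (2:ℝ) ^ (k + 2))
        ≤ ((L:ℕ):ℝ) ^ 2 / (2 * M) := by
      apply div_le_div₀ (by positivity) hLsq (by positivity)
      linarith
    refine le_trans ?_ hstep
    have h2k : (0:ℝ) < (2:ℝ) ^ k := by positivity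
    rw [le_div_iff₀ (by positivity)]
    have hexpand : (2:ℝ) ^ (k + 2) = 4 * (2:ℝ) ^ k := by ring
    rw [hexpand]
    have : (4 * c + 4900 / (2:ℝ) ^ k) * (2 * (4 * (2:ℝ) ^ k))
        = 32 * ((2:ℝ) ^ k * c) + 39200 := by
      field_simp
      ring
    rw [this]
    nlinarith [h2k, hcpos]
  calc ((Finset.univ.filter fun b : Fin n → Bool =>
        ∃ m, m ≤ min (2 ^ (k + 2)) n ∧ ((2 * lilBound ((2:ℝ) ^ k) : ℕ) : ℤ) ≤ psum b m).card : ℝ)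
      = ((Finset.univ.filter fun b : Fin n → Bool =>
          ∃ m, m ≤ M ∧ (L : ℤ) ≤ psum b m).card : ℝ) := by rw [hLdef, hMdef]
    _ ≤ 2 * ((Finset.univ.filter fun b : Fin n → Bool => (L : ℤ) ≤ psum b M).card : ℝ) := by
        exact_mod_cast h1
    _ = 2 * ((Finset.univ.filter fun b : Fin n → Bool =>
          ((L:ℕ):ℝ) ≤ ((psum b M : ℤ) : ℝ)).card : ℝ) := by rw [hfe]
    _ ≤ 2 * (2 ^ n * Real.exp (-(((L:ℕ):ℝ) ^ 2) / (2 * M))) := by linarith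
    _ ≤ 2 ^ n * (2 * Real.exp (-(4 * c + 4900 / 2 ^ k))) := by
        have := hexp
        nlinarith [Real.exp_pos (-(((L:ℕ):ℝ) ^ 2) / (2 * M)), (by positivity : (0:ℝ) < (2:ℝ)^n)]

lemma psum_neg (b : Fin n → Bool) (m : ℕ) : psum (fun j => !(b j)) m = - psum b m := by
  rw [psum, psum, ← Finset.sum_neg_distrib]
  exact Finset.sum_congr rfl (fun j _ => stp_not (b j))

lemma endWindow_ge (n : ℕ) : 180 ≤ endWindow n := by
  rw [endWindow]
  have := Real.sqrt_nonneg ((n / 2 : ℝ) * Real.log (Real.log ((n + 3 : ℝ) / 2)))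
  nlinarith

open scoped Classical in
lemma end_bound (n : ℕ) (hn : 0 < n) :
    ((Finset.univ.filter fun b : Fin n → Bool =>
        endWindow n < ((|psum b n| : ℤ) : ℝ)).card : ℝ) ≤ 2 ^ n * (2 / 387) := by
  set A : ℝ := endWindow n with hA
  have hA180 : 180 ≤ A := endWindow_ge n
  rcases le_or_gt (n : ℝ) A with hnA | hnA
  · -- window wider than n : empty
    have : (Finset.univ.filter fun b : Fin n → Bool =>
        A < ((|psum b n| : ℤ) : ℝ)) = ∅ := by
      apply Finset.filter_eq_empty_iff.2
      intro b _
      push_neg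
      calc ((|psum b n| : ℤ) : ℝ) ≤ ((n:ℤ):ℝ) := by exact_mod_cast abs_psum_le b n
        _ ≤ A := by exact_mod_cast hnA
    rw [this]
    simp
    positivity
  · have hn181 : (181 : ℕ) ≤ n := by
      by_contra hcon
      push_neg at hcon
      have : (n : ℝ) ≤ 180 := by exact_mod_cast Nat.lt_succ_iff.mp hcon
      linarith
    -- c ≥ 1.5
    set c : ℝ := Real.log (Real.log ((n + 3 : ℝ) / 2)) with hc
    have hc15 : (1.5:ℝ) ≤ c := by
      apply loglog_ge_3half
      have : (181:ℝ) ≤ (n:ℝ) := by exact_mod_cast hn181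
      linarith
    -- split into two tails
    have hsplit : (Finset.univ.filter fun b : Fin n → Bool => A < ((|psum b n| : ℤ) : ℝ))
        ⊆ (Finset.univ.filter fun b : Fin n → Bool => A ≤ ((psum b n : ℤ) : ℝ))
          ∪ (Finset.univ.filter fun b : Fin n → Bool => ((psum b n : ℤ) : ℝ) ≤ -A) := by
      intro b hb
      rw [Finset.mem_filter] at hb
      obtain ⟨-, hb⟩ := hb
      rcases abs_cases (psum b n) with ⟨he, -⟩ | ⟨he, -⟩
      · apply Finset.mem_union_left
        rw [Finset.mem_filter]
        refine ⟨Finset.mem_univ _, ?_⟩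
        rw [he] at hb
        linarith
      · apply Finset.mem_union_right
        rw [Finset.mem_filter]
        refine ⟨Finset.mem_univ _, ?_⟩
        rw [he] at hb
        push_cast at hb ⊢
        linarith
    -- negative tail ≤ positive tail
    have hneg : (Finset.univ.filter fun b : Fin n → Bool => ((psum b n : ℤ) : ℝ) ≤ -A).card
        ≤ (Finset.univ.filter fun b : Fin n → Bool => A ≤ ((psum b n : ℤ) : ℝ)).card := by
      apply Finset.card_le_card_of_injOn (fun b => fun j => !(b j))
      · intro b hb
        rw [Finset.mem_coe, Finset.mem_filter] at hb
        obtain ⟨-, hble⟩ := hb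
        rw [Finset.mem_coe, Finset.mem_filter]
        refine ⟨Finset.mem_univ _, ?_⟩
        rw [psum_neg]
        push_cast at hble ⊢
        linarith
      · intro b1 _ b2 _ heq
        funext j
        have := congrFun heq j
        simpa using this
    -- chernoff
    have hch := chernoff n n hn le_rfl A (by linarith)
    have hAsq : 12.5 * (n : ℝ) * c + 32400 ≤ A ^ 2 := by
      have hs : Real.sqrt ((n / 2 : ℝ) * c) ^ 2 = (n / 2 : ℝ) * c := by
        apply Real.sq_sqrt
        have : (0:ℝ) ≤ (n:ℝ) := by positivity
        nlinarith
      have hsnn := Real.sqrt_nonneg ((n / 2 : ℝ) * c)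
      have hAeq : A = 5 * Real.sqrt ((n / 2 : ℝ) * c) + 180 := by
        rw [hA, endWindow, ← hc]; ring
      nlinarith
    have hexp : Real.exp (-(A ^ 2) / (2 * n)) ≤ Real.exp (-6 : ℝ) := by
      apply Real.exp_le_exp.2
      rw [neg_div]
      have hnpos : (0:ℝ) < (n:ℝ) := by exact_mod_cast hn
      have h1 : (6:ℝ) ≤ A ^ 2 / (2 * n) := by
        rw [le_div_iff₀ (by positivity)]
        nlinarith
      linarith
    calc ((Finset.univ.filter fun b : Fin n → Bool => A < ((|psum b n| : ℤ) : ℝ)).card : ℝ)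
        ≤ (((Finset.univ.filter fun b : Fin n → Bool => A ≤ ((psum b n : ℤ) : ℝ))
          ∪ (Finset.univ.filter fun b : Fin n → Bool => ((psum b n : ℤ) : ℝ) ≤ -A)).card : ℝ) := by
          exact_mod_cast Finset.card_le_card hsplit
      _ ≤ 2 * ((Finset.univ.filter fun b : Fin n → Bool => A ≤ ((psum b n : ℤ) : ℝ)).card : ℝ) := by
          have := Finset.card_union_le
            (Finset.univ.filter fun b : Fin n → Bool => A ≤ ((psum b n : ℤ) : ℝ))
            (Finset.univ.filter fun b : Fin n → Bool => ((psum b n : ℤ) : ℝ) ≤ -A)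
          have h2 := hneg
          push_cast
          exact_mod_cast le_trans (Nat.cast_le.2 this) (by push_cast; linarith)
      _ ≤ 2 * (2 ^ n * Real.exp (-(A ^ 2) / (2 * n))) := by linarith
      _ ≤ 2 ^ n * (2 / 387) := by
          have h387 := exp_neg6
          have hp : (0:ℝ) < 2 ^ n := by positivity
          nlinarith [Real.exp_pos (-(A ^ 2) / (2 * n))]

open scoped Classical in
lemma good_count (n : ℕ) (hn : 0 < n) :
    2 ^ (n - 1) ≤ (Finset.univ.filter fun b : Fin n → Bool =>
      (∀ i : ℕ, 0 < 2 * i → 2 * i ≤ n → psum b (2 * i) < 2 * (lilBound (i:ℝ) : ℤ)) ∧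
      ((|psum b n| : ℤ) : ℝ) ≤ endWindow n).card := by
  set P : (Fin n → Bool) → Prop := fun b =>
      (∀ i : ℕ, 0 < 2 * i → 2 * i ≤ n → psum b (2 * i) < 2 * (lilBound (i:ℝ) : ℤ)) ∧
      ((|psum b n| : ℤ) : ℝ) ≤ endWindow n with hP
  have hpow2 : 2 ^ (n - 1) + 2 ^ (n - 1) = 2 ^ n := by
    have h1 : n - 1 + 1 = n := Nat.succ_pred_eq_of_pos hn
    calc 2^(n-1) + 2^(n-1) = 2^(n-1) * 2 := by ring
      _ = 2 ^ (n-1+1) := (pow_succ 2 (n-1)).symm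
      _ = 2 ^ n := by rw [h1]
  have hsum : (Finset.univ.filter P).card
      + (Finset.univ.filter (fun b => ¬ P b)).card = 2 ^ n := by
    rw [Finset.card_filter_add_card_filter_not]
    simp [Finset.card_univ]
  show 2 ^ (n - 1) ≤ (Finset.univ.filter P).card
  suffices hbad : (Finset.univ.filter (fun b => ¬ P b)).card ≤ 2 ^ (n - 1) by omega
  set bad1 : Finset (Fin n → Bool) := Finset.univ.filter (fun b =>
      ∃ i : ℕ, 0 < 2 * i ∧ 2 * i ≤ n ∧ 2 * (lilBound (i:ℝ) : ℤ) ≤ psum b (2 * i)) with hb1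
  set bad2 : Finset (Fin n → Bool) := Finset.univ.filter (fun b =>
      endWindow n < ((|psum b n| : ℤ) : ℝ)) with hb2
  have hsplit : (Finset.univ.filter (fun b => ¬ P b)) ⊆ bad1 ∪ bad2 := by
    intro b hb
    rw [Finset.mem_filter, hP] at hb
    obtain ⟨-, hb⟩ := hb
    rcases not_and_or.1 hb with h | h
    · push_neg at h
      obtain ⟨i, h1, h2, h3⟩ := h
      exact Finset.mem_union_left _ (Finset.mem_filter.2 ⟨Finset.mem_univ _, ⟨i, h1, h2, h3⟩⟩)
    · push_neg at h
      exact Finset.mem_union_right _ (Finset.mem_filter.2 ⟨Finset.mem_univ _, h⟩)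
  have hcover : bad1 ⊆ (Finset.range n).biUnion (fun k =>
      Finset.univ.filter fun b : Fin n → Bool =>
        ∃ m, m ≤ min (2 ^ (k + 2)) n ∧ ((2 * lilBound ((2:ℝ) ^ k) : ℕ) : ℤ) ≤ psum b m) := by
    intro b hb
    rw [hb1, Finset.mem_filter] at hb
    obtain ⟨-, i, h1, h2, h3⟩ := hb
    have hi1 : 1 ≤ i := by omega
    set k := Nat.log 2 i with hk
    have hk1 : 2 ^ k ≤ i := Nat.pow_log_le_self 2 (by omega)
    have hk2 : i < 2 ^ (k + 1) := Nat.lt_pow_succ_log_self (by norm_num) i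
    have hkk : k < 2 ^ k := Nat.lt_two_pow_self
    have hkn : k < n := by omega
    rw [Finset.mem_biUnion]
    refine ⟨k, Finset.mem_range.2 hkn, Finset.mem_filter.2 ⟨Finset.mem_univ _, 2 * i, ?_, ?_⟩⟩
    · have hp : 2 ^ (k + 2) = 2 * 2 ^ (k + 1) := by ring
      exact le_min (by omega) h2
    · have hmono : lilBound ((2:ℝ) ^ k) ≤ lilBound (i:ℝ) := by
        apply lilBound_mono (by positivity)
        calc ((2:ℝ) ^ k) = ((2 ^ k : ℕ) : ℝ) := by push_cast; ring
          _ ≤ (i : ℝ) := by exact_mod_cast hk1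
      calc ((2 * lilBound ((2:ℝ) ^ k) : ℕ) : ℤ)
          = 2 * (lilBound ((2:ℝ) ^ k) : ℤ) := by push_cast; ring
        _ ≤ 2 * (lilBound (i:ℝ) : ℤ) := by
            have : (lilBound ((2:ℝ) ^ k) : ℤ) ≤ (lilBound (i:ℝ) : ℤ) := by exact_mod_cast hmono
            omega
        _ ≤ psum b (2 * i) := h3
  set w : ℕ → ℝ := fun k =>
      2 * Real.exp (-(4 * Real.log (Real.log ((2:ℝ) ^ k + 3)) + 4900 / 2 ^ k)) with hw
  have hwnn : ∀ k, 0 ≤ w k := fun k => by rw [hw]; positivity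
  have hwsum : ∑ k ∈ Finset.range n, w k ≤ 0.021 := by
    set N := max 8 n with hN
    have hnN : n ≤ N := le_max_right _ _
    have h8N : 8 ≤ N := le_max_left _ _
    have hsub : ∑ k ∈ Finset.range n, w k ≤ ∑ k ∈ Finset.range N, w k :=
      Finset.sum_le_sum_of_subset_of_nonneg (Finset.range_subset_range.2 hnN)
        (fun k _ _ => hwnn k)
    have hsplitN : ∑ k ∈ Finset.range 8, w k + ∑ k ∈ Finset.Ico 8 N, w k
        = ∑ k ∈ Finset.range N, w k := Finset.sum_range_add_sum_Ico w h8N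
    have hsmall : ∑ k ∈ Finset.range 8, w k ≤ 8 * (2 * 1e-9) := by
      have hterm : ∀ k ∈ Finset.range 8, w k ≤ 2 * 1e-9 := by
        intro k hk
        rw [Finset.mem_range] at hk
        have hc : 0 ≤ Real.log (Real.log ((2:ℝ) ^ k + 3)) := loglog_nonneg (by positivity)
        have h2k : (2:ℝ) ^ k ≤ 128 := by
          calc (2:ℝ) ^ k ≤ (2:ℝ) ^ 7 := pow_le_pow_right₀ (by norm_num) (by omega)
            _ = 128 := by norm_num
        have h2kpos : (0:ℝ) < 2 ^ k := by positivity
        have hq : (25:ℝ) ≤ 4900 / 2 ^ k := by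
          rw [le_div_iff₀ h2kpos]
          nlinarith
        have hexp : Real.exp (-(4 * Real.log (Real.log ((2:ℝ) ^ k + 3)) + 4900 / 2 ^ k))
            ≤ Real.exp (-25 : ℝ) := Real.exp_le_exp.2 (by linarith)
        rw [hw]
        have := exp_neg25
        dsimp only
        linarith
      calc ∑ k ∈ Finset.range 8, w k ≤ ∑ _k ∈ Finset.range 8, (2 * 1e-9 : ℝ) :=
            Finset.sum_le_sum hterm
        _ = 8 * (2 * 1e-9) := by
            rw [Finset.sum_const, Finset.card_range, nsmul_eq_mul]
            norm_num
    have htail : ∑ k ∈ Finset.Ico 8 N, w k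
        ≤ 0.14 * ∑ k ∈ Finset.Ico 8 N, (((k:ℝ) - 1)⁻¹ - (k:ℝ)⁻¹) := by
      rw [Finset.mul_sum]
      apply Finset.sum_le_sum
      intro k hk
      have hk8 : 8 ≤ k := (Finset.mem_Ico.1 hk).1
      have hk8R : (8:ℝ) ≤ (k:ℝ) := by exact_mod_cast hk8
      have hlog2 : (0.693:ℝ) ≤ Real.log 2 := by
        have := Real.log_two_gt_d9; linarith
      have hypos : (0:ℝ) < 0.693 * k := by nlinarith
      have hink : (0.693:ℝ) * k ≤ Real.log ((2:ℝ) ^ k + 3) := by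
        calc (0.693:ℝ) * k ≤ Real.log 2 * k := by nlinarith
          _ = Real.log ((2:ℝ) ^ k) := by rw [Real.log_pow]; ring
          _ ≤ Real.log ((2:ℝ) ^ k + 3) := Real.log_le_log (by positivity) (by linarith)
      have hckl : Real.log ((0.693:ℝ) * k) ≤ Real.log (Real.log ((2:ℝ) ^ k + 3)) :=
        Real.log_le_log hypos hink
      have hstep : Real.exp (-(Real.log (Real.log ((2:ℝ) ^ k + 3)))) ≤ (0.693 * (k:ℝ))⁻¹ := by
        have h1 : Real.exp (Real.log (0.693 * (k:ℝ)))
            ≤ Real.exp (Real.log (Real.log ((2:ℝ) ^ k + 3))) := Real.exp_le_exp.2 hckl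
        rw [Real.exp_log hypos] at h1
        rw [Real.exp_neg]
        exact inv_anti₀ hypos h1
      have hek : Real.exp (-(4 * Real.log (Real.log ((2:ℝ) ^ k + 3)) + 4900 / 2 ^ k))
          ≤ ((0.693 * (k:ℝ))⁻¹) ^ (4:ℕ) := by
        have hq : (0:ℝ) ≤ 4900 / 2 ^ k := by positivity
        have h1 : Real.exp (-(4 * Real.log (Real.log ((2:ℝ) ^ k + 3)) + 4900 / 2 ^ k))
            ≤ Real.exp (((4:ℕ):ℝ) * (-(Real.log (Real.log ((2:ℝ) ^ k + 3))))) := by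
          apply Real.exp_le_exp.2
          push_cast
          linarith
        rw [Real.exp_nat_mul] at h1
        exact le_trans h1 (pow_le_pow_left₀ (Real.exp_pos _).le hstep 4)
      have hfin : 2 * ((0.693 * (k:ℝ))⁻¹) ^ (4:ℕ) ≤ 0.14 * (((k:ℝ) - 1)⁻¹ - (k:ℝ)⁻¹) := by
        have hkpos : (0:ℝ) < (k:ℝ) := by linarith
        have hkm1 : (0:ℝ) < (k:ℝ) - 1 := by linarith
        have hid : ((k:ℝ) - 1)⁻¹ - (k:ℝ)⁻¹ = (((k:ℝ) - 1) * k)⁻¹ := by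
          field_simp
          ring
        have h4 : (0:ℝ) < (0.693 * (k:ℝ)) ^ (4:ℕ) := by positivity
        have h5 : (0:ℝ) < ((k:ℝ) - 1) * k := by positivity
        rw [hid, inv_pow]
        rw [show (2:ℝ) * (((0.693 * (k:ℝ)) ^ (4:ℕ))⁻¹) = 2 / (0.693 * (k:ℝ)) ^ (4:ℕ) by ring,
          show (0.14:ℝ) * ((((k:ℝ) - 1) * k)⁻¹) = 0.14 / (((k:ℝ) - 1) * k) by ring,
          div_le_div_iff₀ h4 h5]
        nlinarith [sq_nonneg ((k:ℝ) - 8), sq_nonneg (k:ℝ), hk8R]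
      rw [hw]
      dsimp only
      calc 2 * Real.exp (-(4 * Real.log (Real.log ((2:ℝ) ^ k + 3)) + 4900 / 2 ^ k))
          ≤ 2 * ((0.693 * (k:ℝ))⁻¹) ^ (4:ℕ) := by linarith
        _ ≤ 0.14 * (((k:ℝ) - 1)⁻¹ - (k:ℝ)⁻¹) := hfin
    have htele := tele_le N
    calc ∑ k ∈ Finset.range n, w k ≤ ∑ k ∈ Finset.range N, w k := hsub
      _ = ∑ k ∈ Finset.range 8, w k + ∑ k ∈ Finset.Ico 8 N, w k := hsplitN.symm
      _ ≤ 8 * (2 * 1e-9) + 0.14 * (1/7) := by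
          have h1 : (0:ℝ) ≤ 0.14 := by norm_num
          have h2 := mul_le_mul_of_nonneg_left htele h1
          linarith
      _ ≤ 0.021 := by norm_num
  -- real bound on bad1
  have hbad1R : ((bad1.card : ℕ) : ℝ) ≤ 2 ^ n * 0.021 := by
    have h1 : bad1.card ≤ ∑ k ∈ Finset.range n,
        (Finset.univ.filter fun b : Fin n → Bool =>
          ∃ m, m ≤ min (2 ^ (k + 2)) n ∧
            ((2 * lilBound ((2:ℝ) ^ k) : ℕ) : ℤ) ≤ psum b m).card :=
      le_trans (Finset.card_le_card hcover) (Finset.card_biUnion_le)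
    have h2 : ((bad1.card : ℕ) : ℝ) ≤ ∑ k ∈ Finset.range n,
        ((Finset.univ.filter fun b : Fin n → Bool =>
          ∃ m, m ≤ min (2 ^ (k + 2)) n ∧
            ((2 * lilBound ((2:ℝ) ^ k) : ℕ) : ℤ) ≤ psum b m).card : ℝ) := by
      exact_mod_cast le_trans (Nat.cast_le.2 h1) (le_of_eq (Nat.cast_sum _ _))
    calc ((bad1.card : ℕ) : ℝ)
        ≤ ∑ k ∈ Finset.range n, ((Finset.univ.filter fun b : Fin n → Bool =>
            ∃ m, m ≤ min (2 ^ (k + 2)) n ∧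
              ((2 * lilBound ((2:ℝ) ^ k) : ℕ) : ℤ) ≤ psum b m).card : ℝ) := h2
      _ ≤ ∑ k ∈ Finset.range n, 2 ^ n * w k :=
          Finset.sum_le_sum (fun k _ => block_bound n k hn)
      _ = 2 ^ n * ∑ k ∈ Finset.range n, w k := by rw [Finset.mul_sum]
      _ ≤ 2 ^ n * 0.021 :=
          mul_le_mul_of_nonneg_left hwsum (by positivity)
  have hbad2R : ((bad2.card : ℕ) : ℝ) ≤ 2 ^ n * (2 / 387) := end_bound n hn
  -- combine
  have hcomb : (((Finset.univ.filter (fun b => ¬ P b)).card : ℕ) : ℝ)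
      ≤ 2 ^ n * 0.021 + 2 ^ n * (2 / 387) := by
    have h1 : (Finset.univ.filter (fun b => ¬ P b)).card ≤ bad1.card + bad2.card :=
      le_trans (Finset.card_le_card hsplit) (Finset.card_union_le _ _)
    have h2 : (((Finset.univ.filter (fun b => ¬ P b)).card : ℕ) : ℝ)
        ≤ ((bad1.card : ℕ) : ℝ) + ((bad2.card : ℕ) : ℝ) := by exact_mod_cast h1
    linarith
  have hhalf : ((2 ^ (n-1) : ℕ) : ℝ) + ((2 ^ (n-1) : ℕ) : ℝ) = (2:ℝ) ^ n := by
    exact_mod_cast congrArg (fun x : ℕ => (x : ℝ)) hpow2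
  have hfinal : (((Finset.univ.filter (fun b => ¬ P b)).card : ℕ) : ℝ)
      ≤ ((2 ^ (n-1) : ℕ) : ℝ) := by
    have hp : (0:ℝ) < 2 ^ n := by positivity
    nlinarith
  exact_mod_cast hfinal


open scoped Classical in
theorem paths_below_curve_count' (n : ℕ) (hn : 0 < n) :
    2 ^ (n - 1) ≤
      ({x : Fin n → ℤ |
          (∀ i, x i = 1 ∨ x i = -1) ∧
          (∀ i : ℕ, 0 < 2 * i → 2 * i ≤ n →
            (∑ j ∈ Finset.univ.filter (fun j : Fin n => (j : ℕ) < 2 * i), x j)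
              < 2 * (lilBound i : ℤ)) ∧
          (|(∑ j, x j : ℤ)| : ℝ) ≤ endWindow n}).ncard := by
  set Φ : (Fin n → Bool) → (Fin n → ℤ) := fun b j => stp (b j) with hPhi
  have hinj : Function.Injective Φ := by
    intro b1 b2 h
    funext j
    have hj : stp (b1 j) = stp (b2 j) := congrFun h j
    cases hb1 : b1 j <;> cases hb2 : b2 j <;> simp_all [stp]
  set G : Finset (Fin n → Bool) := Finset.univ.filter (fun b =>
      (∀ i : ℕ, 0 < 2 * i → 2 * i ≤ n → psum b (2 * i) < 2 * (lilBound (i:ℝ) : ℤ)) ∧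
      ((|psum b n| : ℤ) : ℝ) ≤ endWindow n) with hG
  have hps : ∀ (b : Fin n → Bool) (x : Fin n → ℤ), (∀ j, x j = stp (b j)) →
      ∀ m, psum b m = ∑ j ∈ Finset.univ.filter (fun j : Fin n => (j : ℕ) < m), x j := by
    intro b x hbx m
    exact (Finset.sum_congr rfl (fun j _ => (hbx j))).symm
  have htot : ∀ (b : Fin n → Bool) (x : Fin n → ℤ), (∀ j, x j = stp (b j)) →
      psum b n = ∑ j, x j := by
    intro b x hbx
    rw [psum, filt_of_le le_rfl]
    exact Finset.sum_congr rfl (fun j _ => (hbx j).symm)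
  have hsets : {x : Fin n → ℤ |
          (∀ i, x i = 1 ∨ x i = -1) ∧
          (∀ i : ℕ, 0 < 2 * i → 2 * i ≤ n →
            (∑ j ∈ Finset.univ.filter (fun j : Fin n => (j : ℕ) < 2 * i), x j)
              < 2 * (lilBound i : ℤ)) ∧
          (|(∑ j, x j : ℤ)| : ℝ) ≤ endWindow n} = Φ '' (G : Set (Fin n → Bool)) := by
    ext x
    simp only [Set.mem_setOf_eq, Set.mem_image, Finset.mem_coe, hG, Finset.mem_filter,
      Finset.mem_univ, true_and]
    constructor
    · rintro ⟨hpm, hcurve, hend⟩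
      set b : Fin n → Bool := fun j => decide (x j = 1) with hb
      have hbx : ∀ j, x j = stp (b j) := by
        intro j
        rcases hpm j with h | h
        · simp [hb, h, stp]
        · have hne : ¬ (x j = 1) := by rw [h]; decide
          simp [hb, hne, h, stp]
      refine ⟨b, ⟨?_, ?_⟩, ?_⟩
      · intro i h1 h2
        rw [hps b x hbx (2 * i)]
        exact hcurve i h1 h2
      · rw [htot b x hbx, Int.cast_abs]
        exact hend
      · funext j
        exact (hbx j).symm
    · rintro ⟨b, ⟨hcurve, hend⟩, rfl⟩
      have hbx : ∀ j, Φ b j = stp (b j) := fun j => rfl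
      refine ⟨?_, ?_, ?_⟩
      · intro j
        cases hbj : b j <;> simp [hPhi, stp, hbj]
      · intro i h1 h2
        rw [← hps b (Φ b) hbx (2 * i)]
        exact hcurve i h1 h2
      · rw [← htot b (Φ b) hbx, ← Int.cast_abs]
        exact hend
  rw [hsets, Set.ncard_image_of_injective _ hinj, Set.ncard_coe_finset]
  exact good_count n hn

end PB

/-- The number of `±1` sequences of length `n` whose partial sums stay strictly below
`2 f(i)` at every even time `2i ≤ n` and whose total sum lies in `[-A, A]` is at
least `2^{n-1}`. -/
theorem paths_below_curve_count (n : ℕ) (hn : 0 < n) :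
    2 ^ (n - 1) ≤
      ({x : Fin n → ℤ |
          (∀ i, x i = 1 ∨ x i = -1) ∧
          (∀ i : ℕ, 0 < 2 * i → 2 * i ≤ n →
            (∑ j ∈ Finset.univ.filter (fun j : Fin n => (j : ℕ) < 2 * i), x j)
              < 2 * (lilBound i : ℤ)) ∧
          (|(∑ j, x j : ℤ)| : ℝ) ≤ endWindow n}).ncard := by
  exact PB.paths_below_curve_count' n hn
end

section
/- Let $f : \mathbb{N} \to \mathbb{N}$ be a monotone non-decreasing function. For each positive integer $n$, define $\mathcal{F}_n := \{A \subseteq [2n] : |A| = n + f(n) \text{ and for all } i \text{ with } 0 < i < n,\ |A \cap [2i]| < i + f(i)\}$. Then $\mathcal{F} := \bigcup_{n=1}^{\infty} \mathcal{F}_n$ is an antichain: for all distinct $A, B \in \mathcal{F}$, $A \not\subseteq B$. -/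
/-- For a monotone non-decreasing `f : ℕ → ℕ`, the union over `n ≥ 1` of the families
`𝓕ₙ = {A ⊆ [2n] : |A| = n + f(n), ∀ 0 < i < n, |A ∩ [2i]| < i + f(i)}` is an antichain. -/
theorem monotone_f_antichain
    (f : ℕ → ℕ) (hf : Monotone f)
    (𝓕 : ℕ → Set (Finset ℕ))
    (h𝓕 : ∀ n, 𝓕 n = {A : Finset ℕ | A ⊆ Finset.Icc 1 (2 * n) ∧
        A.card = n + f n ∧
        ∀ i, 0 < i → i < n → (A ∩ Finset.Icc 1 (2 * i)).card < i + f i}) :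
    ∀ A ∈ ⋃ n ∈ Set.Ici 1, 𝓕 n, ∀ B ∈ ⋃ n ∈ Set.Ici 1, 𝓕 n,
      A ≠ B → ¬ A ⊆ B := by
  intro A hA B hB hne hsub
  simp only [Set.mem_iUnion] at hA hB
  obtain ⟨m, hm, hAm⟩ := hA
  obtain ⟨n, hn, hBn⟩ := hB
  rw [h𝓕 m] at hAm
  rw [h𝓕 n] at hBn
  obtain ⟨hA1, hA2, hA3⟩ := hAm
  obtain ⟨hB1, hB2, hB3⟩ := hBn
  rcases lt_trichotomy m n with h | h | h
  · have h1 : A ⊆ B ∩ Finset.Icc 1 (2 * m) := Finset.subset_inter hsub hA1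
    have h2 := Finset.card_le_card h1
    have h3 := hB3 m hm h
    omega
  · subst h
    exact hne (Finset.eq_of_subset_of_card_le hsub (by omega))
  · have h1 := Finset.card_le_card hsub
    have h2 := hf h.le
    omega
end

section
/- Define $\mathcal{F}_n := \{A \subseteq [2n] : |A| = n \text{ and for all } i \text{ with } 0 < i < n,\ |A \cap [2i]| < i\}$ and $\mathcal{F} := \bigcup_{n=1}^{\infty} \mathcal{F}_n$. Then there exist constants $c, C > 0$ such that for all sufficiently large $n$, $c \cdot \frac{2^n}{n^{3/2}} \leq |\mathcal{F} \cap 2^{[n]}| \leq C \cdot \frac{2^n}{n^{3/2}}$, where $\mathcal{F} \cap 2^{[n]}$ is the set of members of $\mathcal{F}$ contained in $[n]$. -/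
open Finset DyckStep

open scoped Classical in
noncomputable def Fm (m : ℕ) : Finset (Finset ℕ) :=
  ((Finset.Icc 1 (2*m)).powerset).filter
    (fun A => A.card = m ∧ ∀ i, 0 < i → i < m → (A ∩ Finset.Icc 1 (2*i)).card < i)

open scoped Classical in
noncomputable def DSet (k : ℕ) : Finset (Finset ℕ) :=
  ((Finset.range (2*k)).powerset).filter
    (fun S => S.card = k ∧ ∀ s ≤ 2*k, s ≤ 2 * (S ∩ Finset.range s).card)


lemma count_UD (l : List DyckStep) : l.count U + l.count D = l.length := by
  induction l with
  | nil => rfl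
  | cons a t ih =>
    cases a <;> simp [List.count_cons] <;> omega

lemma count_take_eq (l : List DyckStep) (s : ℕ) :
    ((l.take s).count U : ℕ)
      = ((Finset.range (min s l.length)).filter (fun j => l.getD j D = U)).card := by
  induction s with
  | zero => simp
  | succ s ih =>
    rcases lt_or_ge s l.length with h | h
    · rw [min_eq_left (by omega)]
      rw [min_eq_left (by omega)] at ih
      rw [List.take_succ, List.count_append, ih]
      rw [Finset.range_add_one, Finset.filter_insert]
      have hg : l[s]? = some l[s] := List.getElem?_eq_getElem h
      have hgd : l.getD s D = l[s] := by
        rw [List.getD_eq_getElem?_getD, hg]; rfl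
      by_cases hU : l.getD s D = U
      · rw [if_pos hU, Finset.card_insert_of_notMem (by simp), hg]
        rw [hgd] at hU
        simp [hU]
      · rw [if_neg hU, hg]
        have : l[s] = D := by
          rcases (l[s]).dichotomy with h' | h'
          · exact absurd (hgd.trans h') hU
          · exact h'
        simp [this]
    · rw [min_eq_right (by omega)]
      rw [min_eq_right (by omega)] at ih
      rw [List.take_of_length_le (by omega)]
      rw [List.take_of_length_le (by omega)] at ih
      exact ih

lemma range_inter_range (a b : ℕ) : Finset.range a ∩ Finset.range b = Finset.range (min a b) := by
  ext x; simp only [Finset.mem_inter, Finset.mem_range, lt_min_iff]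

section tod

variable {k : ℕ}

def wordOf (k : ℕ) (S : Finset ℕ) : List DyckStep :=
  (List.range (2*k)).map (fun j => if j ∈ S then U else D)

lemma wordOf_length (S : Finset ℕ) : (wordOf k S).length = 2*k := by simp [wordOf]

lemma wordOf_getD (S : Finset ℕ) {j : ℕ} (hj : j < 2*k) :
    (wordOf k S).getD j D = if j ∈ S then U else D := by
  rw [List.getD_eq_getElem?_getD]
  rw [List.getElem?_eq_getElem (by simpa [wordOf_length] using hj)]
  simp [wordOf]

lemma wordOf_count (S : Finset ℕ) (hS : S ⊆ Finset.range (2*k)) (s : ℕ) :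
    ((wordOf k S).take s).count U = (S ∩ Finset.range (min s (2*k))).card := by
  rw [count_take_eq, wordOf_length]
  congr 1
  ext j
  simp only [Finset.mem_filter, Finset.mem_range, Finset.mem_inter]
  constructor
  · rintro ⟨hj, hU⟩
    rw [wordOf_getD S (by omega)] at hU
    refine ⟨?_, by omega⟩
    by_contra hn; simp [hn] at hU
  · rintro ⟨hj, hlt⟩
    exact ⟨hlt, by rw [wordOf_getD S (by omega)]; simp [hj]⟩


lemma mem_DSet_iff {S : Finset ℕ} :
    S ∈ DSet k ↔ S ⊆ Finset.range (2*k) ∧ S.card = k ∧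
      ∀ s ≤ 2*k, s ≤ 2 * (S ∩ Finset.range s).card := by
  rw [DSet, Finset.mem_filter, Finset.mem_powerset]

noncomputable def toDyckWord (k : ℕ) (S : Finset ℕ) (hS : S ∈ DSet k) : DyckWord := by
  rw [mem_DSet_iff] at hS
  refine ⟨wordOf k S, ?_, ?_⟩
  · have h1 : (wordOf k S).count U = k := by
      have := wordOf_count S hS.1 (2*k)
      rwa [List.take_of_length_le (le_of_eq (wordOf_length S)), min_self,
        Finset.inter_eq_left.mpr hS.1, hS.2.1] at this
    have := count_UD (wordOf k S)
    have := wordOf_length (k := k) S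
    omega
  · intro i
    have hcu := wordOf_count S hS.1 i
    have hmin : min i (2*k) ≤ 2 * (S ∩ Finset.range (min i (2*k))).card :=
      hS.2.2 _ (min_le_right _ _)
    have hUD := count_UD ((wordOf k S).take i)
    have hlt : ((wordOf k S).take i).length = min i (2*k) := by
      rw [List.length_take, wordOf_length]
    omega

lemma toList_toDyckWord {k : ℕ} {S : Finset ℕ} (hS : S ∈ DSet k) :
    (toDyckWord k S hS).toList = wordOf k S := rfl

lemma semilength_toDyckWord {k : ℕ} {S : Finset ℕ} (hS : S ∈ DSet k) :
    (toDyckWord k S hS).semilength = k := by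
  rw [mem_DSet_iff] at hS
  show (wordOf k S).count U = k
  have := wordOf_count S hS.1 (2*k)
  rwa [List.take_of_length_le (le_of_eq (wordOf_length S)), min_self,
    Finset.inter_eq_left.mpr hS.1, hS.2.1] at this

noncomputable def setOfDyck (k : ℕ) (p : DyckWord) : Finset ℕ :=
  (Finset.range (2*k)).filter (fun j => p.toList.getD j D = U)

lemma setOfDyck_mem {k : ℕ} (p : DyckWord) (hp : p.semilength = k) : setOfDyck k p ∈ DSet k := by
  have hlen : p.toList.length = 2*k := by rw [← p.two_mul_semilength_eq_length, hp]
  have hcnt : ∀ s, (p.toList.take s).count U = ((setOfDyck k p) ∩ Finset.range s).card := by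
    intro s
    rw [count_take_eq, hlen, setOfDyck, Finset.filter_inter, _root_.range_inter_range, min_comm]
  rw [mem_DSet_iff]
  refine ⟨Finset.filter_subset _ _, ?_, ?_⟩
  · have := hcnt (2*k)
    rw [List.take_of_length_le (le_of_eq hlen)] at this
    have hsemi : p.toList.count U = k := hp
    rw [hsemi] at this
    rw [Finset.inter_eq_left.mpr (show setOfDyck k p ⊆ Finset.range (2*k) from Finset.filter_subset _ _)] at this
    exact this.symm
  · intro s hs
    have hd := p.count_D_le_count_U s
    have hUD := count_UD (p.toList.take s)
    have hlt : (p.toList.take s).length = s := by rw [List.length_take, hlen]; omega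
    rw [hcnt s] at *
    omega

lemma setOfDyck_toDyckWord {k : ℕ} {S : Finset ℕ} (hS : S ∈ DSet k) :
    setOfDyck k (toDyckWord k S hS) = S := by
  have hsub : S ⊆ Finset.range (2*k) := (mem_DSet_iff.mp hS).1
  ext j
  rw [setOfDyck, Finset.mem_filter, Finset.mem_range, toList_toDyckWord]
  constructor
  · rintro ⟨hj, hU⟩
    rw [wordOf_getD S hj] at hU
    by_contra hn; simp [hn] at hU
  · intro hj
    have hjr : j < 2*k := by simpa using hsub hj
    exact ⟨hjr, by rw [wordOf_getD S hjr]; simp [hj]⟩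

lemma toDyckWord_setOfDyck {k : ℕ} (p : DyckWord) (hp : p.semilength = k) :
    toDyckWord k (setOfDyck k p) (setOfDyck_mem p hp) = p := by
  have hlen : p.toList.length = 2*k := by rw [← p.two_mul_semilength_eq_length, hp]
  apply DyckWord.ext
  rw [toList_toDyckWord]
  apply List.ext_getElem
  · rw [wordOf_length, hlen]
  · intro j h1 h2
    have hj : j < 2*k := by rwa [wordOf_length] at h1
    have : (wordOf k (setOfDyck k p)).getD j D = (wordOf k (setOfDyck k p))[j] := by
      rw [List.getD_eq_getElem?_getD, List.getElem?_eq_getElem h1]; rfl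
    rw [← this, wordOf_getD _ hj]
    have hgd : p.toList.getD j D = p.toList[j] := by
      rw [List.getD_eq_getElem?_getD, List.getElem?_eq_getElem h2]; rfl
    simp only [setOfDyck, Finset.mem_filter, Finset.mem_range]
    rcases (p.toList[j]).dichotomy with h' | h'
    · rw [if_pos ⟨hj, hgd.trans h'⟩, h']
    · rw [if_neg ?_, h']
      rintro ⟨-, hU⟩
      rw [hgd, h'] at hU
      exact absurd hU (by simp)

lemma card_DSet (k : ℕ) : (DSet k).card = catalan k := by
  rw [← Fintype.card_coe, ← DyckWord.card_dyckWord_semilength_eq_catalan]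
  apply Fintype.card_congr
  exact {
    toFun := fun S => ⟨toDyckWord k S.1 S.2, semilength_toDyckWord S.2⟩
    invFun := fun p => ⟨setOfDyck k p.1, setOfDyck_mem p.1 p.2⟩
    left_inv := fun S => Subtype.ext (setOfDyck_toDyckWord S.2)
    right_inv := fun p => Subtype.ext (toDyckWord_setOfDyck p.1 p.2) }

lemma mem_Fm_iff {m : ℕ} {A : Finset ℕ} :
    A ∈ Fm m ↔ A ⊆ Finset.Icc 1 (2*m) ∧ A.card = m ∧
      ∀ i, 0 < i → i < m → (A ∩ Finset.Icc 1 (2*i)).card < i := by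
  classical
  rw [Fm, Finset.mem_filter, Finset.mem_powerset]

lemma card_inter_Icc_split {A : Finset ℕ} {N : ℕ} (hA : A ⊆ Finset.Icc 1 N) (a : ℕ) :
    A.card = (A ∩ Finset.Icc 1 a).card + (A ∩ Finset.Icc (a+1) N).card := by
  classical
  rw [← Finset.card_filter_add_card_filter_not (p := fun x => x ≤ a)]
  congr 1
  · have e1 : A ∩ Finset.Icc 1 a = A.filter (fun x => x ≤ a) := by
      ext x
      simp only [Finset.mem_inter, Finset.mem_filter, Finset.mem_Icc]
      constructor
      · rintro ⟨hx, -, h2⟩; exact ⟨hx, h2⟩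
      · rintro ⟨hx, h2⟩
        have := hA hx; rw [Finset.mem_Icc] at this
        exact ⟨hx, this.1, h2⟩
    rw [e1]
  · have e2 : A ∩ Finset.Icc (a+1) N = A.filter (fun x => ¬ x ≤ a) := by
      ext x
      simp only [Finset.mem_inter, Finset.mem_filter, Finset.mem_Icc]
      constructor
      · rintro ⟨hx, h1, -⟩; exact ⟨hx, by omega⟩
      · rintro ⟨hx, h2⟩
        have := hA hx; rw [Finset.mem_Icc] at this
        exact ⟨hx, by omega, this.2⟩
    rw [e2]

lemma Fm_ends {m : ℕ} (hm : 2 ≤ m) {A : Finset ℕ} (hA : A ∈ Fm m) :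
    1 ∉ A ∧ 2 ∉ A ∧ (2*m-1) ∈ A ∧ 2*m ∈ A := by
  rw [mem_Fm_iff] at hA
  obtain ⟨hsub, hcard, hcond⟩ := hA
  have h1 : (A ∩ Finset.Icc 1 2).card < 1 := by
    have := hcond 1 (by omega) (by omega); simpa using this
  have h1' : A ∩ Finset.Icc 1 2 = ∅ := by
    rw [← Finset.card_eq_zero]; omega
  have hno1 : 1 ∉ A := by
    intro h
    have : (1:ℕ) ∈ A ∩ Finset.Icc 1 2 := by simp [h]
    simp [h1'] at this
  have hno2 : 2 ∉ A := by
    intro h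
    have : (2:ℕ) ∈ A ∩ Finset.Icc 1 2 := by simp [h]
    simp [h1'] at this
  have hm1 : (A ∩ Finset.Icc 1 (2*(m-1))).card < m-1 :=
    hcond (m-1) (by omega) (by omega)
  have hsplit := card_inter_Icc_split hsub (2*m-2)
  have he : (2:ℕ)*(m-1) = 2*m-2 := by omega
  rw [he] at hm1
  have he2 : 2*m-2+1 = 2*m-1 := by omega
  rw [he2] at hsplit
  have hbig : 2 ≤ (A ∩ Finset.Icc (2*m-1) (2*m)).card := by omega
  have hsub2 : A ∩ Finset.Icc (2*m-1) (2*m) ⊆ Finset.Icc (2*m-1) (2*m) :=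
    Finset.inter_subset_right
  have hc2 : (Finset.Icc (2*m-1) (2*m)).card = 2 := by
    rw [Nat.card_Icc]; omega
  have heq : A ∩ Finset.Icc (2*m-1) (2*m) = Finset.Icc (2*m-1) (2*m) :=
    Finset.eq_of_subset_of_card_le hsub2 (by omega)
  have hmem1 : (2*m-1) ∈ A ∩ Finset.Icc (2*m-1) (2*m) := by
    rw [heq]; rw [Finset.mem_Icc]; omega
  have hmem2 : (2*m) ∈ A ∩ Finset.Icc (2*m-1) (2*m) := by
    rw [heq]; rw [Finset.mem_Icc]; omega
  exact ⟨hno1, hno2, (Finset.mem_inter.mp hmem1).1, (Finset.mem_inter.mp hmem2).1⟩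

lemma card_Fm {m : ℕ} (hm : 2 ≤ m) : (Fm m).card = (DSet (m-1)).card := by
  classical
  refine Finset.card_bij' (fun A _ => (A.erase (2*m)).image (fun j => 2*m-1-j))
    (fun S _ => insert (2*m) (S.image (fun i => 2*m-1-i))) ?hi ?hj ?li ?ri
  -- hi : maps into DSet
  case hi =>
    intro A hA
    obtain ⟨hno1, hno2, hin1, hin2⟩ := Fm_ends hm hA
    rw [mem_Fm_iff] at hA
    obtain ⟨hsub, hcard, hcond⟩ := hA
    have herase : A.erase (2*m) = A ∩ Finset.Icc 1 (2*m-1) := by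
      ext x
      simp only [Finset.mem_erase, Finset.mem_inter, Finset.mem_Icc]
      constructor
      · rintro ⟨hne, hx⟩
        have := hsub hx; rw [Finset.mem_Icc] at this
        exact ⟨hx, this.1, by omega⟩
      · rintro ⟨hx, -, hle⟩
        exact ⟨by omega, hx⟩
    have hcard' : (A.erase (2*m)).card = m - 1 := by
      rw [Finset.card_erase_of_mem hin2, hcard]
    have hrange : ∀ j ∈ A.erase (2*m), 2 ≤ j ∧ j ≤ 2*m-1 := by
      intro j hj
      rw [Finset.mem_erase] at hj
      have := hsub hj.2; rw [Finset.mem_Icc] at this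
      have hj1 : j ≠ 1 := fun h => hno1 (h ▸ hj.2)
      constructor
      · omega
      · omega
    have hinj : Set.InjOn (fun j => 2*m-1-j) (A.erase (2*m)) := by
      intro a ha b hb hab
      have := hrange a ha; have := hrange b hb
      simp only at hab
      omega
    rw [mem_DSet_iff]
    refine ⟨?_, ?_, ?_⟩
    · intro x hx
      rw [Finset.mem_image] at hx
      obtain ⟨j, hj, rfl⟩ := hx
      have := hrange j hj
      rw [Finset.mem_range]
      omega
    · rw [Finset.card_image_of_injOn hinj, hcard']
    · intro s hs
      -- φ(A) ∩ range s = image of A ∩ Icc (2m-s) (2m-1)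
      have hkey : ((A.erase (2*m)).image (fun j => 2*m-1-j)) ∩ Finset.range s
          = ((A.erase (2*m)) ∩ Finset.Icc (2*m-s) (2*m-1)).image (fun j => 2*m-1-j) := by
        ext x
        simp only [Finset.mem_inter, Finset.mem_image, Finset.mem_range, Finset.mem_Icc]
        constructor
        · rintro ⟨⟨j, hj, rfl⟩, hlt⟩
          have := hrange j hj
          exact ⟨j, ⟨hj, by omega, by omega⟩, rfl⟩
        · rintro ⟨j, ⟨hj, hj1, hj2⟩, rfl⟩
          have := hrange j hj
          exact ⟨⟨j, hj, rfl⟩, by omega⟩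
      rw [hkey, Finset.card_image_of_injOn (hinj.mono Finset.inter_subset_left)]
      have hsub' : A.erase (2*m) ⊆ Finset.Icc 1 (2*m-1) := by
        rw [herase]; exact Finset.inter_subset_right
      have hsplit := card_inter_Icc_split hsub' (2*m-1-s)
      have he : 2*m-1-s+1 = 2*m-s := by omega
      rw [he, hcard'] at hsplit
      have hicc : (A.erase (2*m)) ∩ Finset.Icc (2*m-s) (2*m-1)
          = A ∩ Finset.Icc (2*m-s) (2*m-1) := by
        rw [herase, Finset.inter_assoc]
        congr 1
        ext x; simp only [Finset.mem_inter, Finset.mem_Icc]; omega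
      rw [hicc] at hsplit
      -- now bound (A.erase 2m ∩ Icc 1 r).card where r = 2m-1-s
      have hr : (A.erase (2*m)) ∩ Finset.Icc 1 (2*m-1-s) = A ∩ Finset.Icc 1 (2*m-1-s) := by
        rw [herase, Finset.inter_assoc]
        congr 1
        ext x; simp only [Finset.mem_inter, Finset.mem_Icc]; omega
      rw [hr] at hsplit
      rw [hicc]
      rcases Nat.eq_zero_or_pos s with rfl | hspos
      · omega
      have hbound : 2 * (A ∩ Finset.Icc 1 (2*m-1-s)).card ≤ 2*m-2-s := by
        set r := 2*m-1-s with hrdef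
        have hr1 : 1 ≤ r := by omega
        rcases Nat.even_or_odd r with ⟨i, hi⟩ | ⟨i, hi⟩
        · have hcond' := hcond i (by omega) (by omega)
          have : (2:ℕ)*i = r := by omega
          rw [this] at hcond'
          omega
        · -- r = 2i+1
          have hmono : (A ∩ Finset.Icc 1 r).card ≤ (A ∩ Finset.Icc 1 (r+1)).card := by
            apply Finset.card_le_card
            apply Finset.inter_subset_inter_left
            apply Finset.Icc_subset_Icc_right; omega
          rcases Nat.lt_or_ge (i+1) m with him | him
          · have hcond' := hcond (i+1) (by omega) him
            have : (2:ℕ)*(i+1) = r+1 := by omega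
            rw [this] at hcond'
            omega
          · -- i+1 ≥ m forces s = 0, contradiction
            omega
      omega
  -- hj : maps into Fm
  case hj =>
    intro S hS
    rw [mem_DSet_iff] at hS
    obtain ⟨hsub, hcard, hbal⟩ := hS
    have hrange : ∀ i ∈ S, i < 2*(m-1) := by
      intro i hi; have := hsub hi; rwa [Finset.mem_range] at this
    have hinj : Set.InjOn (fun i => 2*m-1-i) S := by
      intro a ha b hb hab
      have := hrange a ha; have := hrange b hb
      simp only at hab
      omega
    have hnotin : (2*m) ∉ S.image (fun i => 2*m-1-i) := by
      rw [Finset.mem_image]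
      rintro ⟨i, hi, h⟩
      have := hrange i hi
      omega
    rw [mem_Fm_iff]
    refine ⟨?_, ?_, ?_⟩
    · intro x hx
      rw [Finset.mem_insert] at hx
      rw [Finset.mem_Icc]
      rcases hx with rfl | hx
      · omega
      · rw [Finset.mem_image] at hx
        obtain ⟨i, hi, rfl⟩ := hx
        have := hrange i hi
        omega
    · rw [Finset.card_insert_of_notMem hnotin, Finset.card_image_of_injOn hinj, hcard]
      omega
    · intro i hi0 him
      have hni : (2*m) ∉ Finset.Icc 1 (2*i) := by rw [Finset.mem_Icc]; omega
      have hkey : (insert (2*m) (S.image (fun i => 2*m-1-i))) ∩ Finset.Icc 1 (2*i)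
          = ((S.filter (fun x => 2*m-1-2*i ≤ x)).image (fun i => 2*m-1-i)) := by
        ext x
        simp only [Finset.mem_inter, Finset.mem_insert, Finset.mem_image, Finset.mem_Icc,
          Finset.mem_filter]
        constructor
        · rintro ⟨rfl | ⟨j, hj, rfl⟩, hx1, hx2⟩
          · omega
          · have := hrange j hj
            exact ⟨j, ⟨hj, by omega⟩, rfl⟩
        · rintro ⟨j, ⟨hj, hjge⟩, rfl⟩
          have := hrange j hj
          exact ⟨Or.inr ⟨j, hj, rfl⟩, by omega, by omega⟩
      rw [hkey, Finset.card_image_of_injOn (hinj.mono (Finset.filter_subset _ _))]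
      have hsplit : S.card = (S ∩ Finset.range (2*m-1-2*i)).card
          + (S.filter (fun x => 2*m-1-2*i ≤ x)).card := by
        have e1 : S ∩ Finset.range (2*m-1-2*i) = S.filter (fun x => x < 2*m-1-2*i) := by
          ext x
          simp only [Finset.mem_inter, Finset.mem_filter, Finset.mem_range]
        have e2 : S.filter (fun x => 2*m-1-2*i ≤ x) = S.filter (fun x => ¬ x < 2*m-1-2*i) := by
          apply Finset.filter_congr
          intro x _
          simp only [not_lt]
        rw [e1, e2, Finset.card_filter_add_card_filter_not]
      have hbal' := hbal (2*m-1-2*i) (by omega)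
      omega
  -- left inverse
  case li =>
    intro A hA
    beta_reduce
    obtain ⟨hno1, hno2, hin1, hin2⟩ := Fm_ends hm hA
    rw [mem_Fm_iff] at hA
    obtain ⟨hsub, hcard, hcond⟩ := hA
    have hrange : ∀ j ∈ A.erase (2*m), 2 ≤ j ∧ j ≤ 2*m-1 := by
      intro j hj
      rw [Finset.mem_erase] at hj
      have := hsub hj.2; rw [Finset.mem_Icc] at this
      have hj1 : j ≠ 1 := fun h => hno1 (h ▸ hj.2)
      omega
    rw [Finset.image_image]
    have himg : (A.erase (2*m)).image ((fun i => 2*m-1-i) ∘ (fun j => 2*m-1-j))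
        = A.erase (2*m) := by
      rw [Finset.image_congr (g := id), Finset.image_id]
      intro j hj
      have := hrange j (Finset.mem_coe.mp hj)
      simp only [Function.comp_apply, id]
      omega
    rw [himg, Finset.insert_erase hin2]
  -- right inverse
  case ri =>
    intro S hS
    beta_reduce
    rw [mem_DSet_iff] at hS
    obtain ⟨hsub, hcard, hbal⟩ := hS
    have hrange : ∀ i ∈ S, i < 2*(m-1) := by
      intro i hi; have := hsub hi; rwa [Finset.mem_range] at this
    have hnotin : (2*m) ∉ S.image (fun i => 2*m-1-i) := by
      rw [Finset.mem_image]
      rintro ⟨i, hi, h⟩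
      have := hrange i hi
      omega
    rw [Finset.erase_insert hnotin, Finset.image_image]
    rw [Finset.image_congr (g := id), Finset.image_id]
    intro i hi
    have := hrange i (Finset.mem_coe.mp hi)
    simp only [Function.comp_apply, id]
    omega


lemma sqrt_mul_le' {a b c d : ℝ} (ha : 0 ≤ a) (hc : 0 ≤ c) (hb : 0 ≤ b) (hd : 0 ≤ d)
    (h : a^2*b ≤ c^2*d) : a * Real.sqrt b ≤ c * Real.sqrt d := by
  have h1 : a * Real.sqrt b = Real.sqrt (a^2*b) := by
    rw [Real.sqrt_mul (by positivity), Real.sqrt_sq ha]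
  have h2 : c * Real.sqrt d = Real.sqrt (c^2*d) := by
    rw [Real.sqrt_mul (by positivity), Real.sqrt_sq hc]
  rw [h1, h2]
  exact Real.sqrt_le_sqrt h

lemma cb_upper : ∀ k : ℕ, (Nat.centralBinom k : ℝ) * Real.sqrt (k+1) ≤ 4^k := by
  intro k
  induction k with
  | zero => simp [Nat.centralBinom]
  | succ k ih =>
    have hmul : ((k:ℝ)+1) * (Nat.centralBinom (k+1) : ℝ)
        = 2*(2*k+1) * (Nat.centralBinom k : ℝ) := by
      have := Nat.succ_mul_centralBinom_succ k
      exact_mod_cast congrArg (Nat.cast (R := ℝ)) this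
    have key : ((2:ℝ)*k+1) * Real.sqrt ((k:ℝ)+2) ≤ (2*((k:ℝ)+1)) * Real.sqrt ((k:ℝ)+1) := by
      apply sqrt_mul_le' (by positivity) (by positivity) (by positivity) (by positivity)
      nlinarith [sq_nonneg ((k:ℝ))]
    have hpos : (0:ℝ) < (k:ℝ)+1 := by positivity
    push_cast
    rw [← mul_le_mul_iff_right₀ hpos]
    have hcb : (0:ℝ) ≤ (Nat.centralBinom k : ℝ) := by positivity
    calc ((k:ℝ)+1) * ((Nat.centralBinom (k+1) : ℝ) * Real.sqrt ((k:ℝ)+1+1))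
        = (2*(2*k+1) * (Nat.centralBinom k : ℝ)) * Real.sqrt ((k:ℝ)+2) := by
          rw [← mul_assoc, hmul]; ring_nf
      _ = (2*(Nat.centralBinom k : ℝ)) * (((2:ℝ)*k+1) * Real.sqrt ((k:ℝ)+2)) := by ring
      _ ≤ (2*(Nat.centralBinom k : ℝ)) * ((2*((k:ℝ)+1)) * Real.sqrt ((k:ℝ)+1)) := by
          apply mul_le_mul_of_nonneg_left key (by positivity)
      _ = 4*((k:ℝ)+1) * ((Nat.centralBinom k : ℝ) * Real.sqrt ((k:ℝ)+1)) := by ring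
      _ ≤ 4*((k:ℝ)+1) * 4^k := by
          apply mul_le_mul_of_nonneg_left ih (by positivity)
      _ = ((k:ℝ)+1) * 4^(k+1) := by ring

lemma cb_lower : ∀ k : ℕ, 1 ≤ k → (4:ℝ)^k ≤ 2 * Real.sqrt k * (Nat.centralBinom k : ℝ) := by
  intro k
  induction k with
  | zero => intro h; exact absurd h (by omega)
  | succ k ih =>
    intro _
    rcases Nat.eq_zero_or_pos k with rfl | hk
    · have hcb1 : Nat.centralBinom 1 = 2 := rfl
      norm_num [hcb1, Real.sqrt_one]
    have IH := ih hk
    have hmul : ((k:ℝ)+1) * (Nat.centralBinom (k+1) : ℝ)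
        = 2*(2*k+1) * (Nat.centralBinom k : ℝ) := by
      have := Nat.succ_mul_centralBinom_succ k
      exact_mod_cast congrArg (Nat.cast (R := ℝ)) this
    have key : (2*((k:ℝ)+1)) * Real.sqrt (k:ℝ) ≤ ((2:ℝ)*k+1) * Real.sqrt ((k:ℝ)+1) := by
      apply sqrt_mul_le' (by positivity) (by positivity) (by positivity) (by positivity)
      nlinarith [sq_nonneg ((k:ℝ))]
    have hpos : (0:ℝ) < (k:ℝ)+1 := by positivity
    push_cast
    rw [← mul_le_mul_iff_right₀ hpos]
    have hcb : (0:ℝ) ≤ (Nat.centralBinom k : ℝ) := by positivity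
    calc ((k:ℝ)+1) * (4:ℝ)^(k+1)
        = 4*((k:ℝ)+1) * 4^k := by ring
      _ ≤ 4*((k:ℝ)+1) * (2 * Real.sqrt k * (Nat.centralBinom k : ℝ)) := by
          apply mul_le_mul_of_nonneg_left IH (by positivity)
      _ = (4*(Nat.centralBinom k : ℝ)) * ((2*((k:ℝ)+1)) * Real.sqrt (k:ℝ)) := by ring
      _ ≤ (4*(Nat.centralBinom k : ℝ)) * (((2:ℝ)*k+1) * Real.sqrt ((k:ℝ)+1)) := by
          apply mul_le_mul_of_nonneg_left key (by positivity)
      _ = (2*(2*(k:ℝ)+1) * (Nat.centralBinom k : ℝ)) * (2 * Real.sqrt ((k:ℝ)+1)) := by ring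
      _ = (((k:ℝ)+1) * (Nat.centralBinom (k+1):ℝ)) * (2 * Real.sqrt ((k:ℝ)+1)) := by
          rw [hmul]
      _ = ((k:ℝ)+1) * (2 * Real.sqrt ((k:ℝ)+1) * (Nat.centralBinom (k+1):ℝ)) := by ring

lemma cat_cast (k : ℕ) : ((k:ℝ)+1) * (catalan k : ℝ) = (Nat.centralBinom k : ℝ) := by
  have := succ_mul_catalan_eq_centralBinom k
  exact_mod_cast congrArg (Nat.cast (R := ℝ)) this

lemma cat_upper (k : ℕ) : (catalan k : ℝ) * (((k:ℝ)+1) * Real.sqrt ((k:ℝ)+1)) ≤ 4^k := by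
  have h := cb_upper k
  rw [← cat_cast k] at h
  calc (catalan k : ℝ) * (((k:ℝ)+1) * Real.sqrt ((k:ℝ)+1))
      = (((k:ℝ)+1) * (catalan k : ℝ)) * Real.sqrt ((k:ℝ)+1) := by ring
    _ ≤ 4^k := h

lemma cat_lower (k : ℕ) :
    (4:ℝ)^k ≤ 2 * (((k:ℝ)+1) * Real.sqrt ((k:ℝ)+1)) * (catalan k : ℝ) := by
  rcases Nat.eq_zero_or_pos k with rfl | hk
  · norm_num
  have h := cb_lower k hk
  have hs : Real.sqrt (k:ℝ) ≤ Real.sqrt ((k:ℝ)+1) := Real.sqrt_le_sqrt (by linarith)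
  have hcb : (0:ℝ) ≤ (Nat.centralBinom k : ℝ) := by positivity
  calc (4:ℝ)^k ≤ 2 * Real.sqrt k * (Nat.centralBinom k : ℝ) := h
    _ ≤ 2 * Real.sqrt ((k:ℝ)+1) * (Nat.centralBinom k : ℝ) := by
        apply mul_le_mul_of_nonneg_right (by linarith) hcb
    _ = 2 * Real.sqrt ((k:ℝ)+1) * (((k:ℝ)+1) * (catalan k : ℝ)) := by rw [cat_cast]
    _ = 2 * (((k:ℝ)+1) * Real.sqrt ((k:ℝ)+1)) * (catalan k : ℝ) := by ring

lemma sum_cat (K : ℕ) :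
    ∑ k ∈ Finset.range K, (catalan k : ℝ)
      ≤ 3 * 4^K / (((K:ℝ)+1) * Real.sqrt ((K:ℝ)+1)) := by
  induction K with
  | zero => simp
  | succ K ih =>
    push_cast
    have h2 : ((K:ℝ)+1+1) = (K:ℝ)+2 := by ring
    rw [Finset.sum_range_succ, h2]
    have hP : (0:ℝ) < ((K:ℝ)+1) * Real.sqrt ((K:ℝ)+1) := by positivity
    have hQ : (0:ℝ) < ((K:ℝ)+2) * Real.sqrt ((K:ℝ)+2) := by positivity
    have hcatle : (catalan K : ℝ) ≤ 4^K / (((K:ℝ)+1) * Real.sqrt ((K:ℝ)+1)) := by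
      rw [le_div_iff₀ hP]
      exact cat_upper K
    have step : 4 * 4^K / (((K:ℝ)+1) * Real.sqrt ((K:ℝ)+1))
        ≤ 3 * 4^(K+1) / (((K:ℝ)+2) * Real.sqrt ((K:ℝ)+2)) := by
      rw [div_le_div_iff₀ hP hQ]
      have key : ((K:ℝ)+2) * Real.sqrt ((K:ℝ)+2) ≤ 3*((K:ℝ)+1) * Real.sqrt ((K:ℝ)+1) := by
        apply sqrt_mul_le' (by positivity) (by positivity) (by positivity) (by positivity)
        nlinarith [sq_nonneg ((K:ℝ))]
      calc 4 * 4^K * (((K:ℝ)+2) * Real.sqrt ((K:ℝ)+2))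
          ≤ 4 * 4^K * (3*((K:ℝ)+1) * Real.sqrt ((K:ℝ)+1)) := by
            apply mul_le_mul_of_nonneg_left key (by positivity)
        _ = 3 * 4^(K+1) * (((K:ℝ)+1) * Real.sqrt ((K:ℝ)+1)) := by ring
    calc (∑ k ∈ Finset.range K, (catalan k : ℝ)) + (catalan K : ℝ)
        ≤ 3 * 4^K / (((K:ℝ)+1) * Real.sqrt ((K:ℝ)+1))
          + 4^K / (((K:ℝ)+1) * Real.sqrt ((K:ℝ)+1)) := by
          exact add_le_add ih hcatle
      _ = 4 * 4^K / (((K:ℝ)+1) * Real.sqrt ((K:ℝ)+1)) := by ring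
      _ ≤ 3 * 4^(K+1) / (((K:ℝ)+2) * Real.sqrt ((K:ℝ)+2)) := step

lemma pow3_le (K : ℕ) :
    ((K:ℝ)+1) * Real.sqrt ((K:ℝ)+1) ≤ 4^K := by
  have key : ((K:ℝ)+1)^2 * ((K:ℝ)+1) ≤ ((4:ℝ)^K)^2 * 1 := by
    have hn : ((K+1)^3 : ℕ) ≤ 16^K := by
      induction K with
      | zero => norm_num
      | succ K ih =>
        calc (K+1+1)^3 ≤ (2*(K+1))^3 := Nat.pow_le_pow_left (by omega) 3
          _ = 8*(K+1)^3 := by ring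
          _ ≤ 8*16^K := by gcongr
          _ ≤ 16*16^K := by gcongr <;> norm_num
          _ = 16^(K+1) := by ring
    have hr : ((K:ℝ)+1)^3 ≤ 16^K := by
      calc ((K:ℝ)+1)^3 = (((K+1)^3 : ℕ) : ℝ) := by push_cast; ring
        _ ≤ ((16^K : ℕ) : ℝ) := by exact_mod_cast hn
        _ = 16^K := by push_cast; ring
    have h16 : ((4:ℝ)^K)^2 = 16^K := by
      rw [show (16:ℝ) = 4^2 by norm_num, ← pow_mul, ← pow_mul, Nat.mul_comm]
    nlinarith [hr]
  have := sqrt_mul_le' (a := (K:ℝ)+1) (b := (K:ℝ)+1) (c := (4:ℝ)^K) (d := 1)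
    (by positivity) (by positivity) (by positivity) (by norm_num) key
  simpa using this

-- new material
lemma card_Fm_one : (Fm 1).card = 2 := by
  classical
  have h : Fm 1 = {({1} : Finset ℕ), {2}} := by
    ext A
    rw [mem_Fm_iff]
    simp only [Finset.mem_insert, Finset.mem_singleton]
    constructor
    · rintro ⟨hsub, hcard, -⟩
      obtain ⟨x, rfl⟩ := Finset.card_eq_one.mp hcard
      have hx := hsub (Finset.mem_singleton_self x)
      rw [Finset.mem_Icc] at hx
      obtain ⟨hx1, hx2⟩ := hx
      interval_cases x
      · left; rfl
      · right; rfl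
    · rintro (rfl | rfl)
      · refine ⟨?_, rfl, fun i h1 h2 => by omega⟩
        intro x hx; simp only [Finset.mem_singleton] at hx
        rw [hx, Finset.mem_Icc]; omega
      · refine ⟨?_, rfl, fun i h1 h2 => by omega⟩
        intro x hx; simp only [Finset.mem_singleton] at hx
        rw [hx, Finset.mem_Icc]; omega
  rw [h, Finset.card_insert_of_notMem (by simp), Finset.card_singleton]

lemma sum_Fm (K : ℕ) (hK : 1 ≤ K) :
    ∑ m ∈ Finset.Icc 1 K, (Fm m).card = 1 + ∑ k ∈ Finset.range K, catalan k := by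
  induction K with
  | zero => omega
  | succ K ih =>
    rcases Nat.eq_zero_or_pos K with rfl | hK'
    · simp [card_Fm_one]
    · rw [Finset.sum_Icc_succ_top (by omega), ih hK', Finset.sum_range_succ]
      have hc : (Fm (K+1)).card = catalan K := by
        rw [card_Fm (by omega), card_DSet]
        simp
      omega

lemma ncard_eq (n : ℕ) (hn : 2 ≤ n) :
    ({A : Finset ℕ |
        (∃ m : ℕ, 1 ≤ m ∧ A ⊆ Finset.Icc 1 (2 * m) ∧ A.card = m ∧
          ∀ i, 0 < i → i < m → (A ∩ Finset.Icc 1 (2 * i)).card < i) ∧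
        A ⊆ Finset.Icc 1 n}).ncard = 1 + ∑ k ∈ Finset.range (n/2), catalan k := by
  classical
  have hset : {A : Finset ℕ |
        (∃ m : ℕ, 1 ≤ m ∧ A ⊆ Finset.Icc 1 (2 * m) ∧ A.card = m ∧
          ∀ i, 0 < i → i < m → (A ∩ Finset.Icc 1 (2 * i)).card < i) ∧
        A ⊆ Finset.Icc 1 n} = ↑((Finset.Icc 1 (n/2)).biUnion Fm) := by
    ext A
    simp only [Set.mem_setOf_eq, Finset.mem_coe, Finset.mem_biUnion, Finset.mem_Icc]
    constructor
    · rintro ⟨⟨m, hm1, hsub, hcard, hcond⟩, hsubn⟩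
      have hmem : A ∈ Fm m := mem_Fm_iff.mpr ⟨hsub, hcard, hcond⟩
      refine ⟨m, ⟨hm1, ?_⟩, hmem⟩
      rcases Nat.lt_or_ge m 2 with h2 | h2
      · omega
      · have h2m := (Fm_ends h2 hmem).2.2.2
        have := hsubn h2m
        rw [Finset.mem_Icc] at this
        omega
    · rintro ⟨m, ⟨hm1, hm2⟩, hmem⟩
      rw [mem_Fm_iff] at hmem
      obtain ⟨hsub, hcard, hcond⟩ := hmem
      exact ⟨⟨m, hm1, hsub, hcard, hcond⟩,
        hsub.trans (Finset.Icc_subset_Icc_right (by omega))⟩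
  rw [hset, Set.ncard_coe_finset]
  rw [Finset.card_biUnion]
  · exact sum_Fm (n/2) (by omega)
  · intro x hx y hy hxy
    rw [Function.onFun, Finset.disjoint_left]
    intro A hAx hAy
    have h1 := (mem_Fm_iff.mp hAx).2.1
    have h2 := (mem_Fm_iff.mp hAy).2.1
    exact hxy (by omega)

lemma rpow_32 (x : ℝ) (hx : 0 ≤ x) : x ^ ((3:ℝ)/2) = x * Real.sqrt x := by
  rcases hx.eq_or_lt with rfl | h
  · rw [Real.zero_rpow (by norm_num), Real.sqrt_zero, mul_zero]
  · rw [show (3:ℝ)/2 = 1 + 1/2 by norm_num, Real.rpow_add h, Real.rpow_one,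
      ← Real.sqrt_eq_rpow]

/-- For `𝓕 = ⋃_{m ≥ 1} {A ⊆ [2m] : |A| = m, ∀ 0 < i < m, |A ∩ [2i]| < i}`, there are
constants `c, C > 0` with `c · 2^n/n^{3/2} ≤ |𝓕 ∩ 2^[n]| ≤ C · 2^n/n^{3/2}` for all
sufficiently large `n`. -/
theorem catalan_antichain_growth :
    ∃ c C : ℝ, 0 < c ∧ 0 < C ∧
      ∀ᶠ n : ℕ in Filter.atTop,
        c * (2 ^ n / (n : ℝ) ^ ((3 : ℝ) / 2)) ≤
          (({A : Finset ℕ |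
              (∃ m : ℕ, 1 ≤ m ∧ A ⊆ Finset.Icc 1 (2 * m) ∧ A.card = m ∧
                ∀ i, 0 < i → i < m → (A ∩ Finset.Icc 1 (2 * i)).card < i) ∧
              A ⊆ Finset.Icc 1 n}).ncard : ℝ) ∧
        (({A : Finset ℕ |
              (∃ m : ℕ, 1 ≤ m ∧ A ⊆ Finset.Icc 1 (2 * m) ∧ A.card = m ∧
                ∀ i, 0 < i → i < m → (A ∩ Finset.Icc 1 (2 * i)).card < i) ∧
              A ⊆ Finset.Icc 1 n}).ncard : ℝ) ≤
          C * (2 ^ n / (n : ℝ) ^ ((3 : ℝ) / 2)) := by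
  refine ⟨1/16, 12, by norm_num, by norm_num, ?_⟩
  rw [Filter.eventually_atTop]
  refine ⟨2, fun n hn => ?_⟩
  rw [ncard_eq n hn]
  obtain ⟨j, hj⟩ : ∃ j, n/2 = j+1 := ⟨n/2-1, by omega⟩
  have hjn : 2*(j+1) ≤ n := by omega
  have hnj : n ≤ 2*(j+1)+1 := by omega
  have hKn : j+1 ≤ n := by omega
  rw [hj]
  have hnpos : (0:ℝ) < n := by exact_mod_cast (by omega : 0 < n)
  have hsnpos : (0:ℝ) < Real.sqrt n := Real.sqrt_pos.mpr hnpos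
  have hr : ((n:ℝ)) ^ ((3:ℝ)/2) = n * Real.sqrt n := rpow_32 _ (le_of_lt hnpos)
  rw [hr]
  set Q : ℝ := ((j:ℝ)+1) * Real.sqrt ((j:ℝ)+1) with hQdef
  have hQpos : 0 < Q := by rw [hQdef]; positivity
  have hcast : ((1 + ∑ k ∈ Finset.range (j+1), catalan k : ℕ) : ℝ)
      = 1 + ∑ k ∈ Finset.range (j+1), (catalan k : ℝ) := by push_cast; ring
  rw [hcast]
  have hsum_nonneg : (0:ℝ) ≤ ∑ k ∈ Finset.range (j+1), (catalan k : ℝ) := by positivity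
  -- cast facts for powers
  have h4K : (4:ℝ)^(j+1) ≤ 2^n := by
    rw [show (4:ℝ) = 2^2 by norm_num, ← pow_mul]
    exact pow_le_pow_right₀ (by norm_num) (by omega)
  have h2n : (2:ℝ)^n ≤ 8 * 4^j := by
    have : (2:ℝ)^n ≤ 2^(2*(j+1)+1) := pow_le_pow_right₀ (by norm_num) hnj
    calc (2:ℝ)^n ≤ 2^(2*(j+1)+1) := this
      _ = 8 * 4^j := by
          rw [show (4:ℝ) = 2^2 by norm_num, ← pow_mul]
          rw [show 2*(j+1)+1 = 2*j+3 by ring, pow_add]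
          norm_num
          ring
  constructor
  · -- lower bound
    have hterm : (catalan j : ℝ) ≤ ∑ k ∈ Finset.range (j+1), (catalan k : ℝ) :=
      Finset.single_le_sum (f := fun k => (catalan k : ℝ)) (fun i _ => by positivity)
        (Finset.mem_range.mpr (by omega))
    have hcat : (4:ℝ)^j / (2*Q) ≤ (catalan j : ℝ) := by
      rw [div_le_iff₀ (by positivity)]
      calc (4:ℝ)^j ≤ 2 * Q * (catalan j : ℝ) := cat_lower j
        _ = (catalan j : ℝ) * (2*Q) := by ring
    have hQn : Q ≤ (n:ℝ) * Real.sqrt n := by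
      rw [hQdef]
      apply mul_le_mul
      · exact_mod_cast hKn
      · exact Real.sqrt_le_sqrt (by exact_mod_cast hKn)
      · positivity
      · positivity
    have hfrac : 1/16 * (2^n / ((n:ℝ) * Real.sqrt n)) ≤ (4:ℝ)^j / (2*Q) := by
      rw [show (1:ℝ)/16 * (2^n / ((n:ℝ) * Real.sqrt n)) = 2^n / (16*((n:ℝ)*Real.sqrt n)) by
        field_simp]
      rw [div_le_div_iff₀ (by positivity) (by positivity)]
      calc (2:ℝ)^n * (2*Q) ≤ (8*4^j) * (2*((n:ℝ)*Real.sqrt n)) := by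
            apply mul_le_mul h2n ?_ (by positivity) (by positivity)
            have := mul_le_mul_of_nonneg_left hQn (by norm_num : (0:ℝ) ≤ 2)
            linarith
        _ = 4^j * (16*((n:ℝ)*Real.sqrt n)) := by ring
    calc 1/16 * (2^n / ((n:ℝ) * Real.sqrt n)) ≤ (4:ℝ)^j / (2*Q) := hfrac
      _ ≤ (catalan j : ℝ) := hcat
      _ ≤ ∑ k ∈ Finset.range (j+1), (catalan k : ℝ) := hterm
      _ ≤ 1 + ∑ k ∈ Finset.range (j+1), (catalan k : ℝ) := by linarith
  · -- upper bound
    set K : ℕ := j+1 with hKdef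
    set P : ℝ := ((K:ℝ)+1) * Real.sqrt ((K:ℝ)+1) with hPdef
    have hPpos : 0 < P := by rw [hPdef]; positivity
    have h1le : (1:ℝ) ≤ 4^K / P := by
      rw [le_div_iff₀ hPpos, one_mul]
      exact pow3_le K
    have hsum := sum_cat K
    have hup : 1 + ∑ k ∈ Finset.range K, (catalan k : ℝ) ≤ 4 * 4^K / P := by
      have : 4 * 4^K / P = 4^K/P + 3 * 4^K / P := by ring
      rw [this]
      exact add_le_add h1le hsum
    have hsn : Real.sqrt n ≤ Real.sqrt 2 * Real.sqrt ((K:ℝ)+1) := by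
      rw [← Real.sqrt_mul (by norm_num)]
      apply Real.sqrt_le_sqrt
      have : (n:ℝ) ≤ 2*((K:ℝ)+1) := by exact_mod_cast (by omega : n ≤ 2*(K+1))
      linarith
    have hnle : (n:ℝ) ≤ 2*((K:ℝ)+1) := by exact_mod_cast (by omega : n ≤ 2*(K+1))
    have hmain : (n:ℝ)*Real.sqrt n ≤ 2*Real.sqrt 2*P := by
      calc (n:ℝ)*Real.sqrt n ≤ (2*((K:ℝ)+1)) * (Real.sqrt 2*Real.sqrt ((K:ℝ)+1)) :=
            mul_le_mul hnle hsn (by positivity) (by positivity)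
        _ = 2*Real.sqrt 2*P := by rw [hPdef]; ring
    have hsqrt2 : Real.sqrt 2 ≤ 3/2 := by
      have h := Real.sqrt_le_sqrt (by norm_num : (2:ℝ) ≤ 9/4)
      rwa [show (9/4 : ℝ) = (3/2)^2 by norm_num, Real.sqrt_sq (by norm_num)] at h
    have hstep : 4 * 4^K / P ≤ 12 * (2^n / ((n:ℝ) * Real.sqrt n)) := by
      rw [show (12:ℝ) * (2^n / ((n:ℝ) * Real.sqrt n)) = 12 * 2^n / ((n:ℝ)*Real.sqrt n) by
        ring]
      rw [div_le_div_iff₀ hPpos (by positivity)]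
      calc 4 * (4:ℝ)^K * ((n:ℝ)*Real.sqrt n) ≤ 4 * 2^n * (2*Real.sqrt 2*P) := by
            have hh := mul_le_mul h4K hmain (by positivity) (by positivity)
            calc 4 * (4:ℝ)^K * ((n:ℝ)*Real.sqrt n)
                = 4 * ((4:ℝ)^K * ((n:ℝ)*Real.sqrt n)) := by ring
              _ ≤ 4 * (2^n * (2*Real.sqrt 2*P)) := by linarith
              _ = 4 * 2^n * (2*Real.sqrt 2*P) := by ring
        _ = 8*Real.sqrt 2*(2^n*P) := by ring
        _ ≤ 12*(2^n*P) := by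
            have hp : (0:ℝ) ≤ 2^n*P := by positivity
            nlinarith [hp, hsqrt2]
        _ = 12 * 2^n * P := by ring
    calc 1 + ∑ k ∈ Finset.range K, (catalan k : ℝ) ≤ 4 * 4^K / P := hup
      _ ≤ 12 * (2^n / ((n:ℝ) * Real.sqrt n)) := hstep
end tod
end
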